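/- arXiv:2504.08107 — 11 statements merged into one kernel-verified Lean document; each statement's English description precedes it below -/
import Mathlib

section
/- Let A be a locally compact abelian group and π : A → ℝ₊ a continuous injective group homomorphism into the multiplicative group of positive reals. Then either π is an isomorphism of topological groups onto ℝ₊, or A is discrete. -/
open MeasureTheory
open Topology Filter Pointwise

section Aux

/-- Finite union of closed sets with empty interior has a member with nonempty interior,
if the union has nonempty interior. -/
lemma aux_interior_union_empty {α : Type*} [TopologicalSpace α] {X Y : Set α}
    (hX : IsClosed X) (hiX : interior X = ∅) (hiY : interior Y = ∅) :
    interior (X ∪ Y) = ∅ := by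
  have hO : IsOpen (interior (X ∪ Y) ∩ Xᶜ) := isOpen_interior.inter hX.isOpen_compl
  have hsub : interior (X ∪ Y) ∩ Xᶜ ⊆ Y := fun y hy =>
    (interior_subset hy.1).resolve_left hy.2
  have h1 : interior (X ∪ Y) ∩ Xᶜ ⊆ interior Y := hO.subset_interior_iff.mpr hsub
  rw [hiY, Set.subset_empty_iff] at h1
  have h2 : interior (X ∪ Y) ⊆ X := by
    intro x hx
    by_contra hxX
    exact Set.eq_empty_iff_forall_notMem.mp h1 x ⟨hx, hxX⟩
  have h3 : interior (X ∪ Y) ⊆ interior X := interior_maximal h2 isOpen_interior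
  rw [hiX, Set.subset_empty_iff] at h3
  exact h3

lemma aux_finset_interior {α ι : Type*} [TopologicalSpace α] (t : Finset ι) (T : ι → Set α)
    (hcl : ∀ i, IsClosed (T i)) (h : (interior (⋃ i ∈ t, T i)).Nonempty) :
    ∃ i ∈ t, (interior (T i)).Nonempty := by
  classical
  induction t using Finset.induction_on with
  | empty => simp at h
  | @insert a s ha ih =>
      rw [Finset.set_biUnion_insert] at h
      by_contra hcon
      push_neg at hcon
      have hia : interior (T a) = ∅ := hcon a (Finset.mem_insert_self a s)
      have hiY : interior (⋃ i ∈ s, T i) = ∅ := by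
        by_contra hY
        obtain ⟨i, hi, hne⟩ := ih (Set.nonempty_iff_ne_empty.mpr hY)
        exact hne.ne_empty (hcon i (Finset.mem_insert_of_mem hi))
      rw [aux_interior_union_empty (hcl a) hia hiY] at h
      exact h.ne_empty rfl

end Aux

/-- If `A` is a locally compact abelian group and `π : A → ℝ₊` is a continuous
injective homomorphism into the multiplicative group of positive reals, then either `π` is an
isomorphism of topological groups onto `ℝ₊` (i.e. it is bijective and an open map, hence a
homeomorphic group isomorphism), or `A` is discrete. -/
theorem continuous_injective_hom_to_posReal_bijective_open_or_discrete
    {A : Type*} [CommGroup A] [TopologicalSpace A] [IsTopologicalGroup A]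
    [LocallyCompactSpace A] [T2Space A]
    (π : A →* {x : ℝ // 0 < x}) (hπc : Continuous π) (hπinj : Function.Injective π) :
    (Function.Bijective π ∧ IsOpenMap π) ∨ DiscreteTopology A := by
  set f : A → ℝ := fun a => ((π a : {x : ℝ // 0 < x}) : ℝ) with hfdef
  have hfc : Continuous f := continuous_subtype_val.comp hπc
  have hfpos : ∀ a, 0 < f a := fun a => (π a).2
  have hfmul : ∀ a b, f (a * b) = f a * f b := fun a b => by
    simp only [hfdef, map_mul, Positive.val_mul]
  have hfone : f 1 = 1 := by simp only [hfdef, map_one, Positive.val_one]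
  have hfinv : ∀ a, f a⁻¹ = (f a)⁻¹ := fun a => by
    simp only [hfdef, map_inv, Positive.coe_inv]
  have hfpow : ∀ a (n : ℕ), f (a ^ n) = f a ^ n := fun a n => by
    simp only [hfdef, map_pow, Positive.val_pow]
  have hfinj : Function.Injective f := fun a b h => hπinj (Subtype.ext h)
  obtain ⟨K₀, hK₀c, hK₀n⟩ := exists_compact_mem_nhds (1 : A)
  by_cases hint : (interior (f '' K₀)).Nonempty
  · -- π is bijective and open
    left
    -- images of neighborhoods of 1 are neighborhoods of 1
    have main : ∀ U ∈ 𝓝 (1 : A), f '' U ∈ 𝓝 (1 : ℝ) := by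
      intro U hU
      obtain ⟨V, hV, hVU⟩ := exists_nhds_split_inv hU
      obtain ⟨C, hCn, hCV, hCc⟩ := local_compact_nhds hV
      -- cover K₀ by finitely many translates of C
      have hcov : K₀ ⊆ ⋃ a : A, a • interior C := by
        intro k _
        exact Set.mem_iUnion.2 ⟨k, ⟨1, mem_interior_iff_mem_nhds.2 hCn, mul_one k⟩⟩
      obtain ⟨t, ht⟩ := hK₀c.elim_finite_subcover (fun a : A => a • interior C)
        (fun a => isOpen_interior.smul a) hcov
      set T : A → Set ℝ := fun a => (fun x => f a * x) '' (f '' C) with hTdef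
      have hTcl : ∀ a, IsClosed (T a) :=
        fun a => (((hCc.image hfc).image (continuous_mul_left (f a)))).isClosed
      have himg : f '' K₀ ⊆ ⋃ a ∈ t, T a := by
        rintro x ⟨k, hk, rfl⟩
        obtain ⟨a, hat, hka⟩ := Set.mem_iUnion₂.1 (ht hk)
        obtain ⟨c, hc, rfl⟩ := hka
        exact Set.mem_iUnion₂.2 ⟨a, hat, ⟨f c, ⟨c, interior_subset hc, rfl⟩, (hfmul a c).symm⟩⟩
      have hTne : ∃ a ∈ t, (interior (T a)).Nonempty := by
        apply aux_finset_interior t T hTcl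
        exact hint.mono (interior_mono himg)
      obtain ⟨a, -, hTa⟩ := hTne
      -- translate back: interior of f '' C is nonempty
      have hCint : (interior (f '' C)).Nonempty := by
        have he : T a = (Homeomorph.mulLeft₀ (f a) (hfpos a).ne') '' (f '' C) := rfl
        rw [he, ← Homeomorph.image_interior] at hTa
        exact hTa.of_image
      obtain ⟨x, hx⟩ := hCint
      obtain ⟨c, hcC, rfl⟩ := interior_subset hx
      -- the open set (interior (f '' C)) * (f c)⁻¹ is an open neighborhood of 1 inside f '' U
      have hOopen : IsOpen ((fun y => y * (f c)⁻¹) '' interior (f '' C)) :=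
        (Homeomorph.mulRight₀ ((f c)⁻¹) (inv_ne_zero (hfpos c).ne')).isOpenMap _ isOpen_interior
      have h1mem : (1 : ℝ) ∈ (fun y => y * (f c)⁻¹) '' interior (f '' C) :=
        ⟨f c, hx, mul_inv_cancel₀ (hfpos c).ne'⟩
      have hsubU : (fun y => y * (f c)⁻¹) '' interior (f '' C) ⊆ f '' U := by
        rintro _ ⟨z, hz, rfl⟩
        obtain ⟨v, hvC, rfl⟩ := interior_subset hz
        refine ⟨v / c, hVU v (hCV hvC) c (hCV hcC), ?_⟩
        rw [div_eq_mul_inv, hfmul, hfinv]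
      exact Filter.mem_of_superset (hOopen.mem_nhds h1mem) hsubU
    -- f is an open map
    have hfopen : IsOpenMap f := by
      intro U hU
      rw [isOpen_iff_mem_nhds]
      rintro x ⟨a, ha, rfl⟩
      have hmem : a⁻¹ • U ∈ 𝓝 (1 : A) :=
        (hU.smul a⁻¹).mem_nhds ⟨a, ha, inv_mul_cancel a⟩
      have h2 : (fun y => f a * y) '' (f '' (a⁻¹ • U)) ∈ 𝓝 (f a) := by
        have := (Homeomorph.mulLeft₀ (f a) (hfpos a).ne').isOpenMap.image_mem_nhds (main _ hmem)
        simpa using this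
      refine Filter.mem_of_superset h2 ?_
      rintro _ ⟨_, ⟨u, hu, rfl⟩, rfl⟩
      obtain ⟨w, hw, rfl⟩ := hu
      refine ⟨w, hw, ?_⟩
      show f w = f a * f (a⁻¹ * w)
      rw [hfmul, hfinv, ← mul_assoc, mul_inv_cancel₀ (hfpos a).ne', one_mul]
    -- range f = Ioi 0
    have hSopen : IsOpen (Set.range f) := by
      rw [← Set.image_univ]; exact hfopen _ isOpen_univ
    have hIoi : Set.Ioi (0 : ℝ) ⊆ Set.range f := by
      by_contra hcon
      obtain ⟨y₀, hy₀, hy₀S⟩ := Set.not_subset.mp hcon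
      set O : Set ℝ := ⋃ y ∈ Set.Ioi (0 : ℝ) \ Set.range f, (fun x => y * x) '' Set.range f
        with hOdef
      have hOopen : IsOpen O := isOpen_biUnion fun y hy =>
        (Homeomorph.mulLeft₀ y (ne_of_gt hy.1)).isOpenMap _ hSopen
      have hcover : Set.Ioi (0 : ℝ) ⊆ Set.range f ∪ O := by
        intro y hy
        by_cases hyS : y ∈ Set.range f
        · exact Or.inl hyS
        · exact Or.inr (Set.mem_biUnion ⟨hy, hyS⟩ ⟨1, ⟨1, hfone⟩, mul_one y⟩)
      have h1 : (Set.Ioi (0 : ℝ) ∩ Set.range f).Nonempty :=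
        ⟨1, Set.mem_Ioi.2 one_pos, ⟨1, hfone⟩⟩
      have h2 : (Set.Ioi (0 : ℝ) ∩ O).Nonempty :=
        ⟨y₀, hy₀, Set.mem_biUnion ⟨hy₀, hy₀S⟩ ⟨1, ⟨1, hfone⟩, mul_one y₀⟩⟩
      obtain ⟨z, _, hzS, hzO⟩ := isPreconnected_Ioi _ _ hSopen hOopen hcover h1 h2
      obtain ⟨y, hy, w, hwS, hmul⟩ := Set.mem_iUnion₂.1 hzO
      obtain ⟨az, hz⟩ := hzS
      obtain ⟨aw, hw⟩ := hwS
      apply hy.2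
      refine ⟨az * aw⁻¹, ?_⟩
      have hmul' : y * w = z := hmul
      have hw0 : w ≠ 0 := by rw [← hw]; exact (hfpos aw).ne'
      rw [hfmul, hfinv, hz, hw, ← hmul', mul_inv_cancel_right₀ hw0]
    have hπsurj : Function.Surjective π := by
      intro y
      obtain ⟨a, ha⟩ := hIoi y.2
      exact ⟨a, Subtype.ext ha⟩
    refine ⟨⟨hπinj, hπsurj⟩, ?_⟩
    intro U hU
    have himg : π '' U = Subtype.val ⁻¹' (f '' U) := by
      ext x
      constructor
      · rintro ⟨a, ha, rfl⟩; exact ⟨a, ha, rfl⟩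
      · rintro ⟨a, ha, hx⟩; exact ⟨a, ha, Subtype.ext hx⟩
    rw [himg]
    exact (hfopen U hU).preimage continuous_subtype_val
  · -- A is discrete
    right
    have hempty : interior (f '' K₀) = ∅ := Set.not_nonempty_iff_eq_empty.mp hint
    -- K₀ is totally disconnected
    have htd : IsTotallyDisconnected K₀ := by
      intro T hTsub hTpre x hx y hy
      by_contra hxy
      have hfxy : f x ≠ f y := fun h => hxy (hfinj h)
      have himg : IsPreconnected (f '' T) := hTpre.image f hfc.continuousOn
      have hoc := himg.ordConnected
      have key : ∀ u v : A, u ∈ T → v ∈ T → f u < f v → False := by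
        intro u v hu hv hlt
        have h1 : Set.Icc (f u) (f v) ⊆ f '' T := hoc.out ⟨u, hu, rfl⟩ ⟨v, hv, rfl⟩
        have h2 : Set.Ioo (f u) (f v) ⊆ interior (f '' K₀) :=
          interior_maximal ((Set.Ioo_subset_Icc_self.trans h1).trans
            (Set.image_mono (f := f) hTsub)) isOpen_Ioo
        rw [hempty, Set.subset_empty_iff] at h2
        exact (Set.nonempty_Ioo.2 hlt).ne_empty h2
      rcases hfxy.lt_or_gt with hlt | hlt
      · exact key x y hx hy hlt
      · exact key y x hy hx hlt
    -- find a compact open neighborhood of 1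
    have h1K : (1 : A) ∈ K₀ := mem_of_mem_nhds hK₀n
    haveI : CompactSpace K₀ := isCompact_iff_compactSpace.mp hK₀c
    haveI : TotallyDisconnectedSpace K₀ := totallyDisconnectedSpace_subtype_iff.mpr htd
    have hpre : (Subtype.val ⁻¹' interior K₀ : Set K₀) ∈ 𝓝 (⟨1, h1K⟩ : K₀) :=
      (isOpen_interior.preimage continuous_subtype_val).mem_nhds
        (mem_interior_iff_mem_nhds.2 hK₀n)
    obtain ⟨W, ⟨hW1, hWclopen⟩, hWsub⟩ := (nhds_basis_clopen (⟨1, h1K⟩ : K₀)).mem_iff.mp hpre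
    set V : Set A := Subtype.val '' W with hVdef
    have hVcomp : IsCompact V := (hWclopen.isClosed.isCompact).image continuous_subtype_val
    have h1V : (1 : A) ∈ V := ⟨⟨1, h1K⟩, hW1, rfl⟩
    have hVint : V ⊆ interior K₀ := by
      rintro _ ⟨w, hw, rfl⟩
      exact hWsub hw
    have hVopen : IsOpen V := by
      obtain ⟨O, hO, hOW⟩ := isOpen_induced_iff.mp hWclopen.isOpen
      have hVeq : V = O ∩ interior K₀ := by
        ext x
        constructor
        · rintro ⟨w, hw, rfl⟩
          refine ⟨?_, hWsub hw⟩
          rw [← hOW] at hw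
          exact hw
        · rintro ⟨hxO, hxint⟩
          refine ⟨⟨x, interior_subset hxint⟩, ?_, rfl⟩
          rw [← hOW]
          exact hxO
      rw [hVeq]
      exact hO.inter isOpen_interior
    -- get a neighborhood U of 1 with U * V ⊆ V
    obtain ⟨U, hUn, hUV⟩ := compact_open_separated_mul_left hVcomp hVopen subset_rfl
    have hUinv : U⁻¹ ∈ 𝓝 (1 : A) := by
      have : (·⁻¹ : A → A) ⁻¹' U ∈ 𝓝 (1 : A) :=
        continuous_inv.continuousAt.preimage_mem_nhds (by rwa [inv_one])
      simpa using this
    set W' : Set A := U ∩ U⁻¹ with hW'def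
    have hW'n : W' ∈ 𝓝 (1 : A) := Filter.inter_mem hUn hUinv
    -- the subgroup generated by W' is contained in V
    have hHsub : ∀ x ∈ Subgroup.closure W', (∀ v ∈ V, x * v ∈ V) ∧ (∀ v ∈ V, x⁻¹ * v ∈ V) := by
      intro x hx
      induction hx using Subgroup.closure_induction with
      | mem z hz =>
          refine ⟨fun v hv => hUV (Set.mul_mem_mul hz.1 hv), fun v hv => ?_⟩
          exact hUV (Set.mul_mem_mul (Set.mem_inv.mp hz.2) hv)
      | one =>
          constructor <;> intro v hv <;> simp only [inv_one, one_mul] <;> exact hv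
      | mul z w hz hw ihz ihw =>
          constructor
          · intro v hv
            rw [mul_assoc]
            exact ihz.1 _ (ihw.1 v hv)
          · intro v hv
            rw [mul_inv_rev, mul_assoc]
            exact ihw.2 _ (ihz.2 v hv)
      | inv z hz ihz =>
          refine ⟨ihz.2, ?_⟩
          rw [inv_inv]
          exact ihz.1
    have hHV : (Subgroup.closure W' : Set A) ⊆ V := by
      intro x hx
      have := (hHsub x hx).1 1 h1V
      rwa [mul_one] at this
    -- every element of the closure maps to 1 under f
    have hbdd : BddAbove (f '' V) := (hVcomp.image hfc).bddAbove
    obtain ⟨B, hB⟩ := hbdd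
    have hle : ∀ x ∈ Subgroup.closure W', f x ≤ 1 := by
      intro x hx
      by_contra hgt
      push_neg at hgt
      obtain ⟨n, hn⟩ := pow_unbounded_of_one_lt B hgt
      have : f (x ^ n) ∈ f '' V := ⟨x ^ n, hHV (pow_mem hx n), rfl⟩
      have hle' := hB this
      rw [hfpow] at hle'
      exact absurd hle' (not_le.2 hn)
    have htriv : ∀ x ∈ Subgroup.closure W', x = 1 := by
      intro x hx
      have h1 := hle x hx
      have h2 := hle x⁻¹ (inv_mem hx)
      rw [hfinv, inv_le_one₀ (hfpos x)] at h2
      have : f x = 1 := le_antisymm h1 h2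
      apply hfinj
      rw [this, hfone]
    have hopen1 : IsOpen ({1} : Set A) := by
      have heq : (Subgroup.closure W' : Set A) = {1} := by
        ext x
        simp only [Set.mem_singleton_iff, SetLike.mem_coe]
        exact ⟨fun h => htriv x h, fun h => h ▸ one_mem _⟩
      rw [← heq]
      exact Subgroup.isOpen_of_mem_nhds _ (Filter.mem_of_superset hW'n Subgroup.subset_closure)
    exact discreteTopology_of_isOpen_singleton_one hopen1
end

section
/- Let G be a totally disconnected locally compact group, U a compact open subgroup of G, and t ∈ G. Then [U : U ∩ tUt⁻¹] = Δ_G(t) · [U : t⁻¹Ut ∩ U], where both indices are finite. In particular, Δ_G(t) is a positive rational number for every t ∈ G. -/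
open MeasureTheory
open scoped NNReal ENNReal Pointwise

lemma aux_finite_quotient {G : Type*} [Group G] [TopologicalSpace G] [IsTopologicalGroup G]
    {U V : Subgroup G} (hUc : IsCompact (U : Set G)) (hVo : IsOpen (V : Set G)) :
    Finite (U ⧸ V.subgroupOf U) := by
  have : CompactSpace U := isCompact_iff_compactSpace.mp hUc
  have hopen : IsOpen ((V.subgroupOf U : Subgroup U) : Set U) := by
    have : ((V.subgroupOf U : Subgroup U) : Set U) = ((↑) : U → G) ⁻¹' V := rfl
    rw [this]
    exact hVo.preimage continuous_subtype_val
  exact Subgroup.quotient_finite_of_isOpen _ hopen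

lemma aux_measure_eq {G : Type*} [Group G] [TopologicalSpace G] [IsTopologicalGroup G]
    [MeasurableSpace G] [BorelSpace G]
    (μ : Measure G) [μ.IsMulLeftInvariant] {V U : Subgroup G}
    (hVU : V ≤ U) (hV : MeasurableSet (V : Set G)) [Finite (U ⧸ V.subgroupOf U)] :
    μ (U : Set G) = (V.relIndex U) * μ (V : Set G) := by
  classical
  letI : Fintype (U ⧸ V.subgroupOf U) := Fintype.ofFinite _
  set r : (U ⧸ V.subgroupOf U) → G := fun q => ((Quotient.out q : U) : G) with hr
  have hcover : (U : Set G) = ⋃ q, r q • (V : Set G) := by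
    ext x
    constructor
    · intro hx
      set q : U ⧸ V.subgroupOf U := QuotientGroup.mk (⟨x, hx⟩ : U) with hq
      refine Set.mem_iUnion.2 ⟨q, ?_⟩
      rw [Set.mem_smul_set_iff_inv_smul_mem]
      have h1 : QuotientGroup.mk (Quotient.out q) = QuotientGroup.mk (⟨x, hx⟩ : U) :=
        QuotientGroup.out_eq' q
      rw [QuotientGroup.eq] at h1
      exact h1
    · intro hx
      obtain ⟨q, hq⟩ := Set.mem_iUnion.1 hx
      obtain ⟨v, hv, rfl⟩ := hq
      exact U.mul_mem (Quotient.out q).2 (hVU hv)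
  have hdisj : Pairwise (Function.onFun Disjoint fun q => r q • (V : Set G)) := by
    intro q q' hne
    rw [Function.onFun, Set.disjoint_left]
    rintro x hx hx'
    rw [Set.mem_smul_set_iff_inv_smul_mem] at hx hx'
    apply hne
    have h1 : (Quotient.out q)⁻¹ * (Quotient.out q') ∈ V.subgroupOf U := by
      have : ((Quotient.out q : U) : G)⁻¹ * ((Quotient.out q' : U) : G) ∈ V := by
        have := V.mul_mem hx (V.inv_mem hx')
        simpa [mul_assoc] using this
      exact this
    have h2 : (QuotientGroup.mk (Quotient.out q) : U ⧸ V.subgroupOf U)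
        = QuotientGroup.mk (Quotient.out q') := QuotientGroup.eq.2 h1
    rwa [QuotientGroup.out_eq', QuotientGroup.out_eq'] at h2
  rw [hcover, measure_iUnion hdisj (fun q => hV.const_smul (r q))]
  simp only [measure_smul]
  rw [tsum_fintype, Finset.sum_const, Finset.card_univ, nsmul_eq_mul]
  congr 1
  rw [Subgroup.relIndex, Subgroup.index, Nat.card_eq_fintype_card]

lemma aux_key {G : Type*} [Group G] [TopologicalSpace G] [IsTopologicalGroup G]
    [LocallyCompactSpace G] [T2Space G]
    [MeasurableSpace G] [BorelSpace G]
    (μ : Measure G) [μ.IsHaarMeasure] [μ.Regular]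
    (Δ : G →* ℝ≥0) (hΔpos : ∀ s, 0 < Δ s)
    (hΔ : ∀ s : G, Measure.map (· * s) μ = (Δ s)⁻¹ • μ)
    (U : Subgroup G) (hUc : IsCompact (U : Set G)) (hUo : IsOpen (U : Set G)) (t : G) :
    (U.map (MulAut.conj t).toMonoidHom).relIndex U ≠ 0 ∧
    (U.map (MulAut.conj t⁻¹).toMonoidHom).relIndex U ≠ 0 ∧
    ((U.map (MulAut.conj t).toMonoidHom).relIndex U : ℝ≥0)
      = Δ t * ((U.map (MulAut.conj t⁻¹).toMonoidHom).relIndex U : ℝ≥0) := by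
  set A := U.map (MulAut.conj t).toMonoidHom with hAdef
  set B := U.map (MulAut.conj t⁻¹).toMonoidHom with hBdef
  have hA' : ∀ x, x ∈ A ↔ t⁻¹ * x * t ∈ U := by
    intro x
    rw [hAdef, Subgroup.mem_map_equiv, MulAut.conj_symm_apply]
  have hB' : ∀ x, x ∈ B ↔ t * x * t⁻¹ ∈ U := by
    intro x
    rw [hBdef, Subgroup.mem_map_equiv, MulAut.conj_symm_apply, inv_inv]
  -- openness and compactness
  have hAo : IsOpen (A : Set G) := by
    have : (A : Set G) = (fun x => t⁻¹ * x * t) ⁻¹' (U : Set G) := by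
      ext x; exact hA' x
    rw [this]
    exact hUo.preimage (by fun_prop)
  have hBo : IsOpen (B : Set G) := by
    have : (B : Set G) = (fun x => t * x * t⁻¹) ⁻¹' (U : Set G) := by
      ext x; exact hB' x
    rw [this]
    exact hUo.preimage (by fun_prop)
  -- finiteness of quotients
  have finA : Finite (U ⧸ A.subgroupOf U) := aux_finite_quotient hUc hAo
  have finB : Finite (U ⧸ B.subgroupOf U) := aux_finite_quotient hUc hBo
  have finA' : Finite (U ⧸ (A ⊓ U).subgroupOf U) :=
    aux_finite_quotient hUc (by rw [Subgroup.coe_inf]; exact hAo.inter hUo)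
  have finB' : Finite (U ⧸ (B ⊓ U).subgroupOf U) :=
    aux_finite_quotient hUc (by rw [Subgroup.coe_inf]; exact hBo.inter hUo)
  have hnA : A.relIndex U ≠ 0 := by
    rw [Subgroup.relIndex]
    exact Subgroup.index_ne_zero_of_finite
  have hnB : B.relIndex U ≠ 0 := by
    rw [Subgroup.relIndex]
    exact Subgroup.index_ne_zero_of_finite
  refine ⟨hnA, hnB, ?_⟩
  -- measure computations
  have hVmeas : MeasurableSet ((A ⊓ U : Subgroup G) : Set G) := by
    rw [Subgroup.coe_inf]; exact (hAo.inter hUo).measurableSet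
  have hWmeas : MeasurableSet ((B ⊓ U : Subgroup G) : Set G) := by
    rw [Subgroup.coe_inf]; exact (hBo.inter hUo).measurableSet
  have h1 : μ (U : Set G) = ((A ⊓ U).relIndex U) * μ ((A ⊓ U : Subgroup G) : Set G) :=
    aux_measure_eq μ inf_le_right hVmeas
  have h2 : μ (U : Set G) = ((B ⊓ U).relIndex U) * μ ((B ⊓ U : Subgroup G) : Set G) :=
    aux_measure_eq μ inf_le_right hWmeas
  -- relating the two measures via the modular function
  have e : ∀ x : G, t * (t⁻¹ * x * t) * t⁻¹ = x := by intro x; group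
  have hset : t • ((· * t) ⁻¹' ((B ⊓ U : Subgroup G) : Set G))
      = ((A ⊓ U : Subgroup G) : Set G) := by
    ext x
    rw [Set.mem_smul_set_iff_inv_smul_mem, smul_eq_mul, Set.mem_preimage, SetLike.mem_coe,
      SetLike.mem_coe, Subgroup.mem_inf, Subgroup.mem_inf, hB', hA', e]
    tauto
  have hΔt0 : (Δ t : ℝ≥0∞) ≠ 0 := by
    simp [(hΔpos t).ne']
  have hΔttop : (Δ t : ℝ≥0∞) ≠ ⊤ := ENNReal.coe_ne_top
  have hmeasrel : μ ((A ⊓ U : Subgroup G) : Set G)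
      = (Δ t : ℝ≥0∞)⁻¹ * μ ((B ⊓ U : Subgroup G) : Set G) := by
    have hmap := congrArg (fun ν : Measure G => ν ((B ⊓ U : Subgroup G) : Set G)) (hΔ t)
    simp only [Measure.map_apply (measurable_mul_const t) hWmeas, Measure.smul_apply,
      smul_eq_mul] at hmap
    rw [← hset, measure_smul]
    rw [hmap, ENNReal.smul_def, ENNReal.coe_inv (hΔpos t).ne', smul_eq_mul]
  have hμV0 : μ ((A ⊓ U : Subgroup G) : Set G) ≠ 0 := by
    rw [Subgroup.coe_inf]
    exact (hAo.inter hUo).measure_ne_zero μ ⟨1, A.one_mem, U.one_mem⟩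
  have hμVtop : μ ((A ⊓ U : Subgroup G) : Set G) ≠ ⊤ := by
    refine ne_top_of_le_ne_top hUc.measure_lt_top.ne (measure_mono ?_)
    rw [Subgroup.coe_inf]; exact Set.inter_subset_right
  have hW_eq : μ ((B ⊓ U : Subgroup G) : Set G)
      = (Δ t : ℝ≥0∞) * μ ((A ⊓ U : Subgroup G) : Set G) := by
    rw [hmeasrel, ← mul_assoc, ENNReal.mul_inv_cancel hΔt0 hΔttop, one_mul]
  have key : ((A.relIndex U : ℝ≥0∞)) = (Δ t : ℝ≥0∞) * (B.relIndex U : ℝ≥0∞) := by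
    have h3 : ((A ⊓ U).relIndex U : ℝ≥0∞) * μ ((A ⊓ U : Subgroup G) : Set G)
        = ((Δ t : ℝ≥0∞) * ((B ⊓ U).relIndex U : ℝ≥0∞)) * μ ((A ⊓ U : Subgroup G) : Set G) := by
      rw [← h1, h2, hW_eq]; ring
    rw [ENNReal.mul_left_inj hμV0 hμVtop] at h3
    rwa [Subgroup.inf_relIndex_right, Subgroup.inf_relIndex_right] at h3
  exact_mod_cast key


/-- For a totally disconnected locally compact group `G` with modular function
`Δ`, a compact open subgroup `U` and `t ∈ G`, one has
`[U : U ∩ tUt⁻¹] = Δ(t) · [U : t⁻¹Ut ∩ U]`, with both indices finite (nonzero in Mathlib's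
`relindex` convention). In particular `Δ(t)` is a positive rational for every `t`. -/
theorem relindex_conj_eq_modularFunction_mul_and_rational
    {G : Type*} [Group G] [TopologicalSpace G] [IsTopologicalGroup G]
    [LocallyCompactSpace G] [T2Space G] [TotallyDisconnectedSpace G]
    [MeasurableSpace G] [BorelSpace G]
    (μ : Measure G) [μ.IsHaarMeasure] [μ.Regular]
    (Δ : G →* ℝ≥0) (hΔc : Continuous Δ) (hΔpos : ∀ s, 0 < Δ s)
    (hΔ : ∀ s : G, Measure.map (· * s) μ = (Δ s)⁻¹ • μ)
    (U : Subgroup G) (hUc : IsCompact (U : Set G)) (hUo : IsOpen (U : Set G)) (t : G) :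
    (U.map (MulAut.conj t).toMonoidHom).relIndex U ≠ 0 ∧
    (U.map (MulAut.conj t⁻¹).toMonoidHom).relIndex U ≠ 0 ∧
    ((U.map (MulAut.conj t).toMonoidHom).relIndex U : ℝ≥0)
      = Δ t * ((U.map (MulAut.conj t⁻¹).toMonoidHom).relIndex U : ℝ≥0) ∧
    ∀ s : G, ∃ q : ℚ, 0 < q ∧ ((Δ s : ℝ≥0) : ℝ) = (q : ℝ) := by
  obtain ⟨h1, h2, h3⟩ := aux_key μ Δ hΔpos hΔ U hUc hUo t
  refine ⟨h1, h2, h3, fun s => ?_⟩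
  obtain ⟨g1, g2, g3⟩ := aux_key μ Δ hΔpos hΔ U hUc hUo s
  set a := (U.map (MulAut.conj s).toMonoidHom).relIndex U with ha
  set b := (U.map (MulAut.conj s⁻¹).toMonoidHom).relIndex U with hb
  refine ⟨(a : ℚ) / (b : ℚ), ?_, ?_⟩
  · exact div_pos (by exact_mod_cast Nat.pos_of_ne_zero g1)
      (by exact_mod_cast Nat.pos_of_ne_zero g2)
  · have hb' : (b : ℝ) ≠ 0 := by exact_mod_cast g2
    have g3' : (a : ℝ) = (Δ s : ℝ) * (b : ℝ) := by exact_mod_cast g3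
    push_cast
    field_simp
    linarith [g3']
end

section
/- Let 1 → N → G → H → 1 be a short exact sequence of locally compact groups, where N is a closed normal subgroup of G and H ≅ G/N. If N is almost unimodular and H is discrete, then G is almost unimodular. -/
open MeasureTheory
open scoped NNReal ENNReal

/-- If `1 → N → G → G/N → 1` is a short exact sequence of locally compact groups
(`N` a closed normal subgroup with discrete quotient `G/N`), and `N` is almost unimodular
(the kernel of its modular function `Δ_N` is open in `N`), then `G` is almost unimodular. -/
theorem almost_unimodular_of_extension_by_discrete
    {G : Type*} [Group G] [TopologicalSpace G] [IsTopologicalGroup G]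
    [LocallyCompactSpace G] [T2Space G] [MeasurableSpace G] [BorelSpace G]
    (μ : Measure G) [μ.IsHaarMeasure] [μ.Regular]
    (Δ : G →* ℝ≥0) (hΔc : Continuous Δ) (hΔpos : ∀ s, 0 < Δ s)
    (hΔ : ∀ s : G, Measure.map (· * s) μ = (Δ s)⁻¹ • μ)
    (N : Subgroup G) [N.Normal] (hNclosed : IsClosed (N : Set G))
    [DiscreteTopology (G ⧸ N)]
    (ν : Measure N) [ν.IsHaarMeasure] [ν.Regular]
    (ΔN : N →* ℝ≥0) (hΔNc : Continuous ΔN) (hΔNpos : ∀ n, 0 < ΔN n)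
    (hΔN : ∀ n : N, Measure.map (· * n) ν = (ΔN n)⁻¹ • ν)
    (hNau : IsOpen (ΔN.ker : Set N)) :
    IsOpen (Δ.ker : Set G) := by
  -- `N` is open, being the preimage of the open set `{1}` in the discrete quotient.
  have hNopen : IsOpen (N : Set G) := by
    have h : (N : Set G) = QuotientGroup.mk ⁻¹' ({(1 : G ⧸ N)} : Set (G ⧸ N)) := by
      ext x
      simp [QuotientGroup.eq_one_iff]
    rw [h]
    exact (isOpen_discrete _).preimage continuous_quotient_mk'
  have hemb : Topology.IsOpenEmbedding ((↑) : N → G) :=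
    ⟨Topology.IsEmbedding.subtypeVal, by rwa [Subtype.range_val]⟩
  haveI : LocallyCompactSpace N := hNopen.locallyCompactSpace
  have hmemb : MeasurableEmbedding ((↑) : N → G) :=
    MeasurableEmbedding.subtype_coe hNclosed.measurableSet
  haveI : BorelSpace N := Subtype.borelSpace (N : Set G)
  -- The restriction of `μ` to `N`.
  set μ' : Measure N := Measure.comap ((↑) : N → G) μ with hμ'def
  have hμ'app : ∀ s : Set N, μ' s = μ (((↑) : N → G) '' s) := fun s => hmemb.comap_apply μ s
  haveI : μ'.IsMulLeftInvariant := by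
    constructor
    intro g
    ext s hs
    rw [Measure.map_apply (measurable_const_mul g) hs, hμ'app, hμ'app]
    have himg : ((↑) : N → G) '' ((g * ·) ⁻¹' s)
        = ((g : G) * ·) ⁻¹' (((↑) : N → G) '' s) := by
      ext x
      constructor
      · rintro ⟨y, hy, rfl⟩
        exact ⟨g * y, hy, rfl⟩
      · rintro ⟨z, hz, hzx⟩
        refine ⟨g⁻¹ * z, ?_, ?_⟩
        · simpa using hz
        · have : (z : G) = (g : G) * x := hzx
          simp [this]
    rw [himg, measure_preimage_mul]
  haveI : IsFiniteMeasureOnCompacts μ' := by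
    constructor
    intro K hK
    rw [hμ'app]
    exact (hK.image continuous_subtype_val).measure_lt_top
  -- A compact neighborhood of `1` in `N`.
  obtain ⟨K, K_comp, K_mem⟩ := exists_compact_mem_nhds (1 : N)
  set c := Measure.haarScalarFactor μ' ν with hc
  have hμ'K_pos : 0 < μ' K := by
    rw [hμ'app]
    have : ((↑) : N → G) '' K ∈ nhds (1 : G) := by
      have := hemb.isOpenMap.image_mem_nhds K_mem
      simpa using this
    exact Measure.measure_pos_of_mem_nhds μ this
  have hμ'K_fin : μ' K < ⊤ := K_comp.measure_lt_top
  -- Main computation: `Δ n = ΔN n` for `n ∈ N`.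
  have key : ∀ n : N, Δ (n : G) = ΔN n := by
    intro n
    set Kn : Set N := (· * n) '' K with hKn
    have Kn_comp : IsCompact Kn := K_comp.image (continuous_mul_right n)
    have h1 : μ' K = c • ν K :=
      Measure.measure_isMulInvariant_eq_smul_of_isCompact_closure μ' ν K_comp.closure
    have h2 : μ' Kn = c • ν Kn :=
      Measure.measure_isMulInvariant_eq_smul_of_isCompact_closure μ' ν Kn_comp.closure
    -- `Kn` as a preimage
    have hKnpre : Kn = (· * n⁻¹) ⁻¹' K := by
      ext x
      constructor
      · rintro ⟨k, hk, rfl⟩; simpa using hk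
      · intro hx; exact ⟨x * n⁻¹, hx, by simp⟩
    -- inverse values of the modular functions
    have hΔNinv : ΔN n⁻¹ = (ΔN n)⁻¹ :=
      eq_inv_of_mul_eq_one_left (by rw [← map_mul]; simp)
    have hΔinv : Δ ((n : G)⁻¹) = (Δ (n : G))⁻¹ :=
      eq_inv_of_mul_eq_one_left (by rw [← map_mul]; simp)
    -- translation of `ν`
    have hν : ν Kn = (ΔN n : ℝ≥0∞) * ν K := by
      have := congrArg (fun m : Measure N => m K) (hΔN n⁻¹)
      rw [Measure.map_apply (measurable_mul_const _) K_comp.isClosed.measurableSet] at this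
      rw [hKnpre, this, hΔNinv]
      simp [ENNReal.coe_inv (hΔNpos n).ne', mul_comm]
    -- translation of `μ'`
    have hμν : μ' Kn = (Δ (n : G) : ℝ≥0∞) * μ' K := by
      rw [hμ'app, hμ'app]
      have himg : ((↑) : N → G) '' Kn = (· * ((n : G))⁻¹) ⁻¹' (((↑) : N → G) '' K) := by
        ext x
        constructor
        · rintro ⟨y, ⟨k, hk, rfl⟩, rfl⟩
          refine ⟨k, hk, by push_cast; group⟩
        · rintro ⟨k, hk, hkx⟩
          refine ⟨k * n, ⟨k, hk, rfl⟩, ?_⟩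
          have : (k : G) = x * (n : G)⁻¹ := hkx
          push_cast
          rw [this]; group
      have hmeas : MeasurableSet (((↑) : N → G) '' K) :=
        hmemb.measurableSet_image' K_comp.isClosed.measurableSet
      have := congrArg (fun m : Measure G => m (((↑) : N → G) '' K)) (hΔ ((n : G))⁻¹)
      rw [Measure.map_apply (measurable_mul_const _) hmeas] at this
      rw [himg, this, hΔinv]
      simp [ENNReal.coe_inv (hΔpos (n : G)).ne', mul_comm]
    -- combine
    have : (Δ (n : G) : ℝ≥0∞) * μ' K = (ΔN n : ℝ≥0∞) * μ' K := by
      rw [← hμν, h2, hν, h1]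
      simp only [smul_eq_mul, ENNReal.smul_def]
      ring
    have hcancel : (Δ (n : G) : ℝ≥0∞) = (ΔN n : ℝ≥0∞) :=
      (ENNReal.mul_left_inj hμ'K_pos.ne' hμ'K_fin.ne).mp this
    exact_mod_cast hcancel
  -- conclude
  have hsub : ((↑) : N → G) '' (ΔN.ker : Set N) ⊆ (Δ.ker : Set G) := by
    rintro x ⟨n, hn, rfl⟩
    simp only [SetLike.mem_coe, MonoidHom.mem_ker] at hn ⊢
    rw [key n, hn]
  have hopen : IsOpen (((↑) : N → G) '' (ΔN.ker : Set N)) := hemb.isOpenMap _ hNau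
  have hone : (1 : G) ∈ ((↑) : N → G) '' (ΔN.ker : Set N) :=
    ⟨1, by simp, rfl⟩
  exact Subgroup.isOpen_of_mem_nhds Δ.ker
    (Filter.mem_of_superset (hopen.mem_nhds hone) hsub)
end

section
/- Let G be an almost unimodular locally compact group and N a closed normal subgroup of G. Then N is almost unimodular. -/
open MeasureTheory Set TopologicalSpace
open scoped NNReal ENNReal Pointwise Topology

set_option linter.unusedSectionVars false

namespace AlmostUnimodAux

/-! ### Generic content-scaling lemmas -/

section ContentScale
variable {X : Type*} [TopologicalSpace X] [T2Space X]

lemma content_om_le (τ : Content X) (f : X ≃ₜ X) (c : ℝ≥0) (hc : c ≠ 0)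
    (h : ∀ K : Compacts X, (τ (K.map f f.continuous) : ℝ≥0∞) ≤ (c : ℝ≥0∞) * τ K) (A : Set X) :
    τ.outerMeasure A ≤ (c : ℝ≥0∞) * τ.outerMeasure (f ⁻¹' A) := by
  by_cases hinf : τ.outerMeasure (f ⁻¹' A) = ∞
  · rw [hinf, ENNReal.mul_top (by exact_mod_cast hc)]
    exact le_top
  apply ENNReal.le_of_forall_pos_le_add
  intro ε hε _
  obtain ⟨V, hAV, hV⟩ := τ.outerMeasure_exists_open hinf
    (ε := ε / c) (by positivity)
  have hAU : A ⊆ f '' V := by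
    intro x hx
    exact ⟨f.symm x, hAV (by simp [hx]), by simp⟩
  have hIC : τ.innerContent ⟨f '' V, f.isOpenMap V V.2⟩ ≤ (c : ℝ≥0∞) * τ.innerContent V := by
    refine iSup₂_le fun K hK => ?_
    have hKeq : (K.map f.symm f.symm.continuous).map f f.continuous = K := by
      apply Compacts.ext
      simp [Compacts.map, Set.image_image]
    have hKV : ((K.map f.symm f.symm.continuous : Compacts X) : Set X) ⊆ (V : Set X) := by
      intro y hy
      obtain ⟨x, hx, rfl⟩ := hy
      obtain ⟨v, hv, rfl⟩ := hK hx
      simpa using hv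
    calc (τ K : ℝ≥0∞) = τ ((K.map f.symm f.symm.continuous).map f f.continuous) := by rw [hKeq]
      _ ≤ (c : ℝ≥0∞) * τ (K.map f.symm f.symm.continuous) := h _
      _ ≤ (c : ℝ≥0∞) * τ.innerContent V :=
          mul_le_mul_right (τ.le_innerContent _ _ hKV) _
  calc τ.outerMeasure A ≤ τ.outerMeasure (f '' V) := measure_mono hAU
    _ = τ.innerContent ⟨f '' V, f.isOpenMap V V.2⟩ := τ.outerMeasure_of_isOpen _ (f.isOpenMap V V.2)
    _ ≤ (c : ℝ≥0∞) * τ.innerContent V := hIC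
    _ = (c : ℝ≥0∞) * τ.outerMeasure V := by rw [τ.outerMeasure_opens]
    _ ≤ (c : ℝ≥0∞) * (τ.outerMeasure (f ⁻¹' A) + (ε / c : ℝ≥0)) := mul_le_mul_right hV _
    _ = (c : ℝ≥0∞) * τ.outerMeasure (f ⁻¹' A) + (c : ℝ≥0∞) * (ε / c : ℝ≥0) := by
        rw [mul_add]
    _ ≤ (c : ℝ≥0∞) * τ.outerMeasure (f ⁻¹' A) + ε := by
        gcongr
        rw [← ENNReal.coe_mul, mul_comm]
        exact_mod_cast le_of_eq (div_mul_cancel₀ ε hc)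

lemma content_om_eq (τ : Content X) (f : X ≃ₜ X) (c : ℝ≥0) (hc : c ≠ 0)
    (h : ∀ K : Compacts X, (τ (K.map f f.continuous) : ℝ≥0∞) = (c : ℝ≥0∞) * τ K) (A : Set X) :
    (c : ℝ≥0∞) * τ.outerMeasure (f ⁻¹' A) = τ.outerMeasure A := by
  have hcE : (c : ℝ≥0∞) ≠ 0 := by exact_mod_cast hc
  have hcT : (c : ℝ≥0∞) ≠ ∞ := ENNReal.coe_ne_top
  have h2 : ∀ K : Compacts X,
      (τ (K.map f.symm f.symm.continuous) : ℝ≥0∞) ≤ ((c⁻¹ : ℝ≥0) : ℝ≥0∞) * τ K := by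
    intro K
    have hKeq : (K.map f.symm f.symm.continuous).map f f.continuous = K := by
      apply Compacts.ext
      simp [Compacts.map, Set.image_image]
    have := h (K.map f.symm f.symm.continuous)
    rw [hKeq] at this
    rw [this, ENNReal.coe_inv hc, ← mul_assoc, ENNReal.inv_mul_cancel hcE hcT, one_mul]
  have A1 := content_om_le τ f c hc (fun K => (h K).le) A
  have A2 := content_om_le τ f.symm c⁻¹ (inv_ne_zero hc) h2 (f ⁻¹' A)
  have hAA : f.symm ⁻¹' (f ⁻¹' A) = A := by ext x; simp
  rw [hAA] at A2
  refine le_antisymm ?_ A1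
  calc (c : ℝ≥0∞) * τ.outerMeasure (f ⁻¹' A)
      ≤ (c : ℝ≥0∞) * (((c⁻¹ : ℝ≥0) : ℝ≥0∞) * τ.outerMeasure A) := mul_le_mul_right A2 _
    _ = τ.outerMeasure A := by
        rw [ENNReal.coe_inv hc, ← mul_assoc, ENNReal.mul_inv_cancel hcE hcT, one_mul]

end ContentScale

/-! ### Slices of subsets of `G` over the subgroup `N` -/

section Slices

variable {G : Type*} [Group G] [TopologicalSpace G] [IsTopologicalGroup G]
  [MeasurableSpace G] [BorelSpace G] [LocallyCompactSpace G] [T2Space G]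

/-- The slice of `E ⊆ G` through `g` seen inside `N`. -/
def sl (N : Subgroup G) (g : G) (E : Set G) : Set N := (fun m : N => g * (m : G)) ⁻¹' E

variable {N : Subgroup G}

lemma sl_eq (g : G) (E : Set G) :
    sl N g E = ((↑) : N → G) ⁻¹' ((g * ·) ⁻¹' E) := rfl

lemma sl_isCompact (hNc : IsClosed (N : Set G)) {K : Set G} (hK : IsCompact K) (g : G) :
    IsCompact (sl N g K) := by
  rw [sl_eq]
  exact (Topology.IsClosedEmbedding.subtypeVal (p := (· ∈ N)) hNc).isCompact_preimage
    ((Homeomorph.mulLeft g).isCompact_preimage.2 hK)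

lemma sl_isClosed {K : Set G} (hK : IsClosed K) (g : G) : IsClosed (sl N g K) := by
  rw [sl_eq]
  exact (hK.preimage (continuous_mul_left g)).preimage continuous_subtype_val

lemma sl_measurableSet {K : Set G} (hK : IsClosed K) (g : G) :
    MeasurableSet (sl N g K) := by
  haveI : BorelSpace ↥N := Subtype.borelSpace (N : Set G)
  exact (sl_isClosed hK g).measurableSet

lemma sl_mul_right (g : G) (m₀ : N) (E : Set G) :
    sl N (g * (m₀ : G)) E = (fun m : N => m₀ * m) ⁻¹' (sl N g E) := by
  ext m; simp [sl, mul_assoc]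

/-- upper semicontinuity of slice measures for compact sets -/
lemma usc_slice (hNc : IsClosed (N : Set G)) (ν : Measure N) [ν.Regular]
    {K : Set G} (hK : IsCompact K) (r : ℝ≥0∞) :
    IsOpen {g : G | ν (sl N g K) < r} := by
  haveI : BorelSpace ↥N := Subtype.borelSpace (N : Set G)
  rw [isOpen_iff_mem_nhds]
  intro g₀ hg₀
  simp only [mem_setOf_eq] at hg₀
  -- choose an open superset of the slice of small measure
  obtain ⟨O, hslO, hOopen, hOr⟩ := Set.exists_isOpen_lt_of_lt _ r hg₀
  -- the translated compact set
  set S : Set G := (fun x => g₀⁻¹ * x) '' K with hS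
  have hScomp : IsCompact S := hK.image (continuous_mul_left _)
  have hsl_eq : sl N g₀ K = ((↑) : N → G) ⁻¹' S := by
    ext m
    simp only [sl, mem_preimage, hS, Set.mem_image]
    constructor
    · intro h; exact ⟨g₀ * m, h, by group⟩
    · rintro ⟨y, hy, hxy⟩
      have hgy : g₀ * (m : G) = y := by rw [← hxy]; group
      show g₀ * (m : G) ∈ K
      rw [hgy]; exact hy
  -- the compact-neighborhood family
  set ι := {V : Set G // IsCompact V ∧ V ∈ 𝓝 (1 : G)} with hι
  haveI : Nonempty ι := by
    obtain ⟨V, hVc, hVn⟩ := exists_compact_mem_nhds (1 : G)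
    exact ⟨⟨V, hVc, hVn⟩⟩
  set T : ι → Set N := fun V => ((↑) : N → G) ⁻¹' (V.1⁻¹ * S) with hT
  have hTcomp : ∀ V : ι, IsCompact (T V) := by
    intro V
    exact (Topology.IsClosedEmbedding.subtypeVal (p := (· ∈ N)) hNc).isCompact_preimage
      (V.2.1.inv.mul hScomp)
  have hTclosed : ∀ V : ι, IsClosed (T V) := fun V => (hTcomp V).isClosed
  -- intersection of the family is contained in the slice
  have hInter : (⋂ V : ι, T V) ⊆ sl N g₀ K := by
    intro m hm
    rw [hsl_eq]
    simp only [mem_iInter] at hm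
    have hmem : (m : G) ∈ closure S := by
      rw [mem_closure_iff]
      intro W hWopen hWm
      obtain ⟨V, hVn, hVsub, hVc⟩ :=
        local_compact_nhds (n := (fun v : G => v * (m : G)) ⁻¹' W)
          (((continuous_mul_right (m : G)).continuousAt (x := (1 : G))).preimage_mem_nhds
            (by simpa using hWopen.mem_nhds hWm))
      have hmm : (m : G) ∈ V⁻¹ * S := hm ⟨V, hVc, hVn⟩
      rw [Set.mem_mul] at hmm
      obtain ⟨v, hv, s, hs, hvs⟩ := hmm
      refine ⟨s, ?_, hs⟩
      have hvV : v⁻¹ ∈ V := by rwa [Set.mem_inv] at hv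
      have : s = v⁻¹ * (m : G) := by rw [← hvs]; group
      rw [this]
      exact hVsub hvV
    rwa [hScomp.isClosed.closure_eq] at hmem
  -- find a member of the family inside O
  have hexV : ∃ V : ι, T V ⊆ O := by
    by_contra hcon
    push_neg at hcon
    have hne : ∀ V : ι, (T V \ O).Nonempty := by
      intro V
      rcases not_subset.mp (hcon V) with ⟨m, hm1, hm2⟩
      exact ⟨m, hm1, hm2⟩
    have hdir : Directed (· ⊇ ·) fun V : ι => T V \ O := by
      intro V₁ V₂
      obtain ⟨V, hVn, hVsub, hVc⟩ :=
        local_compact_nhds (Filter.inter_mem V₁.2.2 V₂.2.2)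
      refine ⟨⟨V, hVc, hVn⟩, ?_, ?_⟩ <;>
        · intro m hm
          refine ⟨?_, hm.2⟩
          have := hm.1
          simp only [hT, mem_preimage] at this ⊢
          refine Set.mul_subset_mul_right (Set.inv_subset_inv.2 ?_) this
          intro x hx
          first
          | exact (hVsub hx).1
          | exact (hVsub hx).2
    obtain ⟨m, hm⟩ :=
      IsCompact.nonempty_iInter_of_directed_nonempty_isCompact_isClosed
        (fun V : ι => T V \ O) hdir hne
        (fun V => (hTcomp V).diff hOopen)
        (fun V => (hTclosed V).sdiff hOopen)
    simp only [mem_iInter, mem_diff] at hm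
    have : m ∈ sl N g₀ K := hInter (by simp only [mem_iInter]; exact fun V => (hm V).1)
    exact (hm (Classical.arbitrary ι)).2 (hslO this)
  obtain ⟨V, hVO⟩ := hexV
  -- conclude
  have h1V : (1 : G) ∈ interior V.1 := mem_interior_iff_mem_nhds.2 V.2.2
  have hopen : IsOpen ((fun g => g₀⁻¹ * g) ⁻¹' interior V.1) :=
    isOpen_interior.preimage (continuous_mul_left g₀⁻¹)
  have hg₀mem : g₀ ∈ (fun g => g₀⁻¹ * g) ⁻¹' interior V.1 := by simpa using h1V
  refine Filter.mem_of_superset (hopen.mem_nhds hg₀mem) ?_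
  intro g hg
  simp only [mem_preimage] at hg
  simp only [mem_setOf_eq]
  have hsub : sl N g K ⊆ T V := by
    intro m hm
    have hgm : g * (m : G) ∈ K := hm
    simp only [hT, mem_preimage]
    have key : (m : G) = (g₀⁻¹ * g)⁻¹ * (g₀⁻¹ * (g * (m : G))) := by group
    rw [key]
    refine Set.mul_mem_mul ?_ ⟨g * (m : G), hgm, rfl⟩
    rw [Set.mem_inv, inv_inv]
    exact interior_subset hg
  calc ν (sl N g K) ≤ ν O := measure_mono (hsub.trans hVO)
    _ < r := hOr

end Slices

/-! ### The function on the quotient -/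

section Quot

variable {G : Type*} [Group G] [TopologicalSpace G] [IsTopologicalGroup G]
  [MeasurableSpace G] [BorelSpace G] [LocallyCompactSpace G] [T2Space G]
  {N : Subgroup G}

/-- `Fq ν E` is the function on `G ⧸ N` sending `gN` to `ν (sl N g E)`. -/
noncomputable def Fq (ν : Measure N) [ν.IsMulLeftInvariant] (E : Set G) : G ⧸ N → ℝ≥0∞ :=
  fun q => Quotient.liftOn' q (fun g => ν (sl N g E)) (by
    intro a b hab
    have hm : a⁻¹ * b ∈ N := QuotientGroup.leftRel_apply.mp hab
    have hb : b = a * ((⟨a⁻¹ * b, hm⟩ : N) : G) := by simp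
    haveI : BorelSpace ↥N := Subtype.borelSpace (N : Set G)
    show ν (sl N a E) = ν (sl N b E)
    rw [hb, sl_mul_right, measure_preimage_mul]
    )

lemma Fq_mk (ν : Measure N) [ν.IsMulLeftInvariant] (E : Set G) (g : G) :
    Fq ν E (QuotientGroup.mk g) = ν (sl N g E) := rfl

lemma Fq_measurable [MeasurableSpace (G ⧸ N)] [BorelSpace (G ⧸ N)]
    (hNc : IsClosed (N : Set G)) (ν : Measure N) [ν.Regular] [ν.IsMulLeftInvariant]
    {K : Set G} (hK : IsCompact K) : Measurable (Fq ν K) := by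
  apply measurable_of_Iio
  intro r
  have hopen : IsOpen {q : G ⧸ N | Fq ν K q < r} := by
    rw [← (isQuotientMap_quotient_mk' (s := QuotientGroup.leftRel N)).isOpen_preimage]
    exact usc_slice hNc ν hK r
  exact hopen.measurableSet

end Quot

/-! ### The key theorem: the modular function of `G` restricts to that of `N` -/

theorem weil_restrict {G : Type*} [Group G] [TopologicalSpace G] [IsTopologicalGroup G]
    [LocallyCompactSpace G] [T2Space G] [MeasurableSpace G] [BorelSpace G]
    (μ : Measure G) [μ.IsHaarMeasure]
    (Δ : G →* ℝ≥0) (hΔpos : ∀ s, 0 < Δ s)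
    (hΔ : ∀ s : G, Measure.map (· * s) μ = (Δ s)⁻¹ • μ)
    (N : Subgroup G) [N.Normal] (hNclosed : IsClosed (N : Set G))
    (ν : Measure N) [ν.IsHaarMeasure] [ν.Regular]
    (ΔN : N →* ℝ≥0) (hΔNpos : ∀ n, 0 < ΔN n)
    (hΔN : ∀ n : N, Measure.map (· * n) ν = (ΔN n)⁻¹ • ν) (n : N) :
    Δ (n : G) = ΔN n := by
  classical
  haveI : BorelSpace ↥N := Subtype.borelSpace (N : Set G)
  haveI : IsClosed (N : Set G) := hNclosed
  letI : MeasurableSpace (G ⧸ N) := borel _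
  haveI : BorelSpace (G ⧸ N) := ⟨rfl⟩
  set lam : Measure (G ⧸ N) := Measure.haarMeasure (Classical.arbitrary _) with hlam
  haveI : lam.IsHaarMeasure := Measure.isHaarMeasure_haarMeasure _
  -- the function on the quotient associated to a subset of G
  set F : Set G → (G ⧸ N) → ℝ≥0∞ := fun E => Fq (N := N) ν E with hF
  -- right translation formula for ν
  have hνright : ∀ (s : N) (S : Set N), MeasurableSet S →
      ν ((fun m => m * s) ⁻¹' S) = ((ΔN s : ℝ≥0∞))⁻¹ * ν S := by
    intro s S hS
    rw [← Measure.map_apply (measurable_mul_const s) hS, hΔN s, Measure.smul_apply,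
      ENNReal.smul_def, smul_eq_mul, ENNReal.coe_inv (hΔNpos s).ne']
  -- pointwise bound for F on compacta
  have hbound : ∀ (K : Set G), IsCompact K → ∀ q,
      F K q ≤ (QuotientGroup.mk '' K).indicator
        (fun _ => ν (((↑) : N → G) ⁻¹' (K⁻¹ * K))) q := by
    intro K hK q
    induction q using Quotient.inductionOn' with
    | h g =>
      show F K (QuotientGroup.mk g) ≤ _
      by_cases hne : (sl N g K).Nonempty
      · obtain ⟨m₀, hm₀⟩ := hne
        have hgK : g * (m₀ : G) ∈ K := hm₀
        have hmk : (QuotientGroup.mk (g * (m₀ : G)) : G ⧸ N) = QuotientGroup.mk g :=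
          QuotientGroup.mk_mul_of_mem g m₀.2
        have hqK : (QuotientGroup.mk g : G ⧸ N) ∈ QuotientGroup.mk '' K := ⟨_, hgK, hmk⟩
        rw [indicator_of_mem hqK]
        rw [show (QuotientGroup.mk g : G ⧸ N) = QuotientGroup.mk (g * (m₀ : G)) from hmk.symm]
        show ν (sl N (g * (m₀ : G)) K) ≤ ν (((↑) : N → G) ⁻¹' (K⁻¹ * K))
        apply measure_mono
        intro m hm
        have h1 : (g * (m₀ : G)) * (m : G) ∈ K := hm
        show (m : G) ∈ K⁻¹ * K
        have h2 : (m : G) = (g * (m₀ : G))⁻¹ * ((g * (m₀ : G)) * (m : G)) := by group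
        rw [h2]
        exact Set.mul_mem_mul (Set.inv_mem_inv.mpr hgK) h1
      · have hempty : sl N g K = ∅ := not_nonempty_iff_eq_empty.mp hne
        show ν (sl N g K) ≤ _
        rw [hempty]
        simp
  -- finiteness of the integrals
  have hfin : ∀ K : Compacts G, ∫⁻ q, F (K : Set G) q ∂lam ≠ ∞ := by
    intro K
    have hle : ∫⁻ q, F (K : Set G) q ∂lam ≤ ∫⁻ q, (QuotientGroup.mk '' (K : Set G)).indicator
        (fun _ => ν (((↑) : N → G) ⁻¹' ((K : Set G)⁻¹ * (K : Set G)))) q ∂lam :=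
      lintegral_mono (fun q => hbound K K.2 q)
    refine ne_of_lt (lt_of_le_of_lt hle ?_)
    have hcont : Continuous (QuotientGroup.mk : G → G ⧸ N) := continuous_quotient_mk'
    have himgK : IsCompact (QuotientGroup.mk '' (K : Set G)) := K.2.image hcont
    rw [lintegral_indicator himgK.isClosed.measurableSet,
      setLIntegral_const]
    apply ENNReal.mul_lt_top ?_ himgK.measure_lt_top
    exact (((Topology.IsClosedEmbedding.subtypeVal (p := (· ∈ N)) hNclosed).isCompact_preimage
      ((K.2.inv).mul K.2))).measure_lt_top
  -- measurability
  have hFmeas : ∀ {K : Set G}, IsCompact K → Measurable (F K) := by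
    intro K hK
    exact Fq_measurable hNclosed ν hK
  -- monotonicity, additivity
  have hFmono : ∀ (K₁ K₂ : Set G), K₁ ⊆ K₂ → ∀ q, F K₁ q ≤ F K₂ q := by
    intro K₁ K₂ hsub q
    induction q using Quotient.inductionOn' with
    | h g => exact measure_mono (preimage_mono hsub)
  have hFunion : ∀ (K₁ K₂ : Set G), IsClosed K₂ → Disjoint K₁ K₂ → ∀ q,
      F (K₁ ∪ K₂) q = F K₁ q + F K₂ q := by
    intro K₁ K₂ hK₂ hdis q
    induction q using Quotient.inductionOn' with
    | h g =>
      show ν (sl N g (K₁ ∪ K₂)) = ν (sl N g K₁) + ν (sl N g K₂)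
      have : sl N g (K₁ ∪ K₂) = sl N g K₁ ∪ sl N g K₂ := by
        simp [sl, preimage_union]
      rw [this]
      exact measure_union (hdis.preimage _) (sl_measurableSet hK₂ g)
  have hFunion_le : ∀ (K₁ K₂ : Set G) (q : G ⧸ N),
      F (K₁ ∪ K₂) q ≤ F K₁ q + F K₂ q := by
    intro K₁ K₂ q
    induction q using Quotient.inductionOn' with
    | h g =>
      show ν (sl N g (K₁ ∪ K₂)) ≤ ν (sl N g K₁) + ν (sl N g K₂)
      have : sl N g (K₁ ∪ K₂) = sl N g K₁ ∪ sl N g K₂ := by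
        simp [sl, preimage_union]
      rw [this]
      exact measure_union_le _ _
  -- the content
  set τ : Content G :=
    { toFun := fun K => (∫⁻ q, F (K : Set G) q ∂lam).toNNReal
      mono' := fun K₁ K₂ h =>
        ENNReal.toNNReal_mono (hfin K₂) (lintegral_mono fun q => hFmono _ _ h q)
      sup_disjoint' := by
        intro K₁ K₂ hdis h₁ h₂
        have : ∀ q, F ((K₁ ⊔ K₂ : Compacts G) : Set G) q = F K₁ q + F K₂ q := by
          intro q
          rw [Compacts.coe_sup]
          exact hFunion _ _ h₂ hdis q
        rw [lintegral_congr this,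
          lintegral_add_left (f := F (K₁ : Set G)) (hFmeas K₁.2)]
        rw [ENNReal.toNNReal_add (hfin K₁) (hfin K₂)]
      sup_le' := by
        intro K₁ K₂
        have h1 : ∫⁻ q, F ((K₁ ⊔ K₂ : Compacts G) : Set G) q ∂lam
            ≤ ∫⁻ q, F (K₁ : Set G) q ∂lam + ∫⁻ q, F (K₂ : Set G) q ∂lam := by
          rw [← lintegral_add_left (f := F (K₁ : Set G)) (hFmeas K₁.2)]
          refine lintegral_mono fun q => ?_
          rw [Compacts.coe_sup]
          exact hFunion_le _ _ q
        have := ENNReal.toNNReal_mono (ENNReal.add_ne_top.2 ⟨hfin K₁, hfin K₂⟩) h1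
        rwa [ENNReal.toNNReal_add (hfin K₁) (hfin K₂)] at this } with hτ
  have hτcoe : ∀ K : Compacts G, (τ K : ℝ≥0∞) = ∫⁻ q, F (K : Set G) q ∂lam := by
    intro K
    rw [hτ, Content.mk_apply]
    exact ENNReal.coe_toNNReal (hfin K)
  -- left translation identity for F
  have hFleft : ∀ (g₀ : G) (K : Set G) (q : G ⧸ N),
      F ((g₀ * ·) '' K) q = F K ((QuotientGroup.mk g₀)⁻¹ * q) := by
    intro g₀ K q
    induction q using Quotient.inductionOn' with
    | h g =>
      have h1 : ((QuotientGroup.mk g₀ : G ⧸ N))⁻¹ * QuotientGroup.mk g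
          = QuotientGroup.mk (g₀⁻¹ * g) := by
        rw [← QuotientGroup.mk_inv, ← QuotientGroup.mk_mul]
      show ν (sl N g ((g₀ * ·) '' K))
          = F K ((QuotientGroup.mk g₀ : G ⧸ N)⁻¹ * QuotientGroup.mk g)
      rw [h1]
      show ν (sl N g ((g₀ * ·) '' K)) = ν (sl N (g₀⁻¹ * g) K)
      congr 1
      ext m
      simp only [sl, mem_preimage, Set.image_mul_left, mul_assoc]
  -- right translation identity for F
  have hΔNinv : ΔN n⁻¹ = (ΔN n)⁻¹ := by
    apply eq_inv_of_mul_eq_one_left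
    rw [← map_mul, inv_mul_cancel, map_one]
  have hFright : ∀ (K : Set G), IsCompact K → ∀ q,
      F ((· * (n : G)) '' K) q = (ΔN n : ℝ≥0∞) * F K q := by
    intro K hK q
    induction q using Quotient.inductionOn' with
    | h g =>
      show ν (sl N g ((· * (n : G)) '' K)) = (ΔN n : ℝ≥0∞) * ν (sl N g K)
      have himg : sl N g ((· * (n : G)) '' K) = (fun m : N => m * n⁻¹) ⁻¹' (sl N g K) := by
        ext m
        simp only [sl, mem_preimage, Set.image_mul_right, Subgroup.coe_mul,
          InvMemClass.coe_inv, mul_assoc]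
      rw [himg, hνright n⁻¹ _ (sl_measurableSet hK.isClosed g), hΔNinv,
        ENNReal.coe_inv (hΔNpos n).ne', inv_inv]
  -- content translation identities
  have hτleft : ∀ (g₀ : G) (K : Compacts G),
      (τ (K.map _ (Homeomorph.mulLeft g₀).continuous) : ℝ≥0∞) = (1 : ℝ≥0) * τ K := by
    intro g₀ K
    rw [ENNReal.coe_one, one_mul, hτcoe, hτcoe]
    have hcoe : ((K.map _ (Homeomorph.mulLeft g₀).continuous : Compacts G) : Set G)
        = (g₀ * ·) '' (K : Set G) := by
      rw [Compacts.coe_map]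
      rfl
    rw [hcoe]
    calc ∫⁻ q, F ((g₀ * ·) '' (K : Set G)) q ∂lam
        = ∫⁻ q, F (K : Set G) ((QuotientGroup.mk g₀ : G ⧸ N)⁻¹ * q) ∂lam :=
          lintegral_congr fun q => hFleft g₀ _ q
      _ = ∫⁻ q, F (K : Set G) q ∂lam :=
          lintegral_mul_left_eq_self (F (K : Set G)) _
  have hτright : ∀ K : Compacts G,
      (τ (K.map _ (Homeomorph.mulRight (n : G)).continuous) : ℝ≥0∞)
        = ((ΔN n : ℝ≥0) : ℝ≥0∞) * τ K := by
    intro K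
    rw [hτcoe, hτcoe]
    have hcoe : ((K.map _ (Homeomorph.mulRight (n : G)).continuous : Compacts G) : Set G)
        = (· * (n : G)) '' (K : Set G) := by
      rw [Compacts.coe_map]
      rfl
    rw [hcoe]
    calc ∫⁻ q, F ((· * (n : G)) '' (K : Set G)) q ∂lam
        = ∫⁻ q, (ΔN n : ℝ≥0∞) * F (K : Set G) q ∂lam :=
          lintegral_congr fun q => hFright _ K.2 q
      _ = (ΔN n : ℝ≥0∞) * ∫⁻ q, F (K : Set G) q ∂lam :=
          lintegral_const_mul _ (hFmeas K.2)
  -- the measure μ'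
  set μ' : Measure G := τ.measure with hμ'
  haveI hμ'reg : μ'.Regular := by rw [hμ']; infer_instance
  haveI : μ'.IsMulLeftInvariant := by
    rw [hμ']
    constructor
    intro g₀
    ext A hA
    rw [Measure.map_apply (measurable_const_mul g₀) hA,
      Content.measure_apply _ (hA.preimage (measurable_const_mul g₀)),
      Content.measure_apply _ hA]
    have h2 := content_om_eq τ (Homeomorph.mulLeft g₀) 1 one_ne_zero
      (fun K => hτleft g₀ K) A
    simpa using h2
  have hmapright : Measure.map (· * (n : G)) μ' = ((ΔN n)⁻¹ : ℝ≥0) • μ' := by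
    rw [hμ']
    ext A hA
    rw [Measure.map_apply (measurable_mul_const _) hA,
      Content.measure_apply _ (hA.preimage (measurable_mul_const _)),
      Measure.smul_apply, Content.measure_apply _ hA, ENNReal.smul_def, smul_eq_mul]
    have h2 := content_om_eq τ (Homeomorph.mulRight (n : G)) (ΔN n) (hΔNpos n).ne'
      (fun K => hτright K) A
    have hpre : (⇑(Homeomorph.mulRight (n : G))) ⁻¹' A = (· * (n : G)) ⁻¹' A := rfl
    rw [hpre] at h2
    rw [ENNReal.coe_inv (hΔNpos n).ne', ← h2, ← mul_assoc,
      ENNReal.inv_mul_cancel (by exact_mod_cast (hΔNpos n).ne') ENNReal.coe_ne_top, one_mul]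
  -- positivity of μ' on a compact set
  obtain ⟨C, hCc, hCn⟩ := exists_compact_mem_nhds (1 : G)
  set K₀ : Set G := C * C with hK₀
  have hK₀c : IsCompact K₀ := hCc.mul hCc
  have hD1 : (1 : N) ∈ ((↑) : N → G) ⁻¹' interior C := by
    show ((1 : N) : G) ∈ interior C
    simpa using mem_interior_iff_mem_nhds.2 hCn
  have hνD : 0 < ν (((↑) : N → G) ⁻¹' interior C) :=
    (isOpen_interior.preimage continuous_subtype_val).measure_pos ν ⟨1, hD1⟩
  have hQopen : IsOpen (QuotientGroup.mk '' interior C : Set (G ⧸ N)) :=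
    QuotientGroup.isOpenMap_coe _ isOpen_interior
  have hlamQ : 0 < lam (QuotientGroup.mk '' interior C) :=
    hQopen.measure_pos lam ⟨_, ⟨1, mem_interior_iff_mem_nhds.2 hCn, rfl⟩⟩
  have hτK₀pos : 0 < (τ ⟨K₀, hK₀c⟩ : ℝ≥0∞) := by
    rw [hτcoe]
    have hlow : ∫⁻ q, (QuotientGroup.mk '' interior C : Set (G ⧸ N)).indicator
        (fun _ => ν (((↑) : N → G) ⁻¹' interior C)) q ∂lam
        ≤ ∫⁻ q, F K₀ q ∂lam := by
      refine lintegral_mono fun q => ?_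
      by_cases hq : q ∈ (QuotientGroup.mk '' interior C : Set (G ⧸ N))
      · rw [indicator_of_mem hq]
        obtain ⟨g, hg, rfl⟩ := hq
        show _ ≤ ν (sl N g K₀)
        apply measure_mono
        intro m hm
        show g * (m : G) ∈ C * C
        exact Set.mul_mem_mul (interior_subset hg) (interior_subset hm)
      · rw [indicator_of_notMem hq]
        exact zero_le
    rw [lintegral_indicator_const hQopen.measurableSet] at hlow
    exact lt_of_lt_of_le (ENNReal.mul_pos hνD.ne' hlamQ.ne') hlow
  have hμ'K₀pos : 0 < μ' K₀ := by
    rw [hμ', Content.measure_apply _ hK₀c.isClosed.measurableSet]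
    exact lt_of_lt_of_le hτK₀pos (Content.le_outerMeasure_compacts τ ⟨K₀, hK₀c⟩)
  have hμ'K₀fin : μ' K₀ ≠ ∞ := hK₀c.measure_lt_top.ne
  -- the test function
  obtain ⟨f, hf1, -, hfc, hf01⟩ :=
    exists_continuous_one_zero_of_isCompact hK₀c isClosed_empty (disjoint_empty _)
  have hfint : Integrable f μ' := f.continuous.integrable_of_hasCompactSupport hfc
  have hIpos : 0 < ∫ x, f x ∂μ' := by
    have hind : Integrable (K₀.indicator fun _ => (1 : ℝ)) μ' := by
      rw [integrable_indicator_iff hK₀c.isClosed.measurableSet]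
      exact integrableOn_const hμ'K₀fin
    have hmono : ∫ x, K₀.indicator (fun _ => (1 : ℝ)) x ∂μ' ≤ ∫ x, f x ∂μ' := by
      refine integral_mono hind hfint fun x => ?_
      by_cases hx : x ∈ K₀
      · rw [indicator_of_mem hx]
        exact (hf1 hx).ge
      · rw [indicator_of_notMem hx]
        exact (hf01 x).1
    rw [integral_indicator_const (1 : ℝ) hK₀c.isClosed.measurableSet, smul_eq_mul,
      mul_one] at hmono
    exact lt_of_lt_of_le (ENNReal.toReal_pos hμ'K₀pos.ne' hμ'K₀fin) hmono
  -- compare with μ via uniqueness of Haar measure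
  set c : ℝ≥0 := Measure.haarScalarFactor μ' μ with hc
  have e1 : ∫ x, f x ∂μ' = c • ∫ x, f x ∂μ := by
    rw [Measure.integral_isMulLeftInvariant_eq_smul_of_hasCompactSupport μ' μ f.continuous hfc,
      integral_smul_nnreal_measure]
  set fn : G → ℝ := fun x => f (x * (n : G)) with hfn
  have hfnc : Continuous fn := f.continuous.comp (continuous_mul_right _)
  have hfncs : HasCompactSupport fn := by
    have := hfc.comp_homeomorph (Homeomorph.mulRight (n : G))
    exact this
  have e2 : ∫ x, fn x ∂μ' = ((ΔN n)⁻¹ : ℝ≥0) • ∫ x, f x ∂μ' := by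
    have : ∫ x, fn x ∂μ' = ∫ y, f y ∂(Measure.map (· * (n : G)) μ') :=
      (integral_map (measurable_mul_const _).aemeasurable
        f.continuous.aestronglyMeasurable).symm
    rw [this, hmapright, integral_smul_nnreal_measure]
  have e3 : ∫ x, fn x ∂μ = ((Δ (n : G))⁻¹ : ℝ≥0) • ∫ x, f x ∂μ := by
    have : ∫ x, fn x ∂μ = ∫ y, f y ∂(Measure.map (· * (n : G)) μ) :=
      (integral_map (measurable_mul_const _).aemeasurable
        f.continuous.aestronglyMeasurable).symm
    rw [this, hΔ (n : G), integral_smul_nnreal_measure]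
  have e4 : ∫ x, fn x ∂μ' = c • ∫ x, fn x ∂μ := by
    rw [Measure.integral_isMulLeftInvariant_eq_smul_of_hasCompactSupport μ' μ hfnc hfncs,
      integral_smul_nnreal_measure]
  have key : ((ΔN n)⁻¹ : ℝ≥0) • ∫ x, f x ∂μ' = ((Δ (n : G))⁻¹ : ℝ≥0) • ∫ x, f x ∂μ' := by
    rw [← e2, e4, e3, e1]
    exact smul_comm _ _ _
  have hval : ((ΔN n)⁻¹ : ℝ≥0) = ((Δ (n : G))⁻¹ : ℝ≥0) := by
    have := key
    simp only [NNReal.smul_def] at this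
    have h := mul_right_cancel₀ hIpos.ne' this
    exact_mod_cast h
  have : Δ (n : G) = ((ΔN n)⁻¹)⁻¹ := by
    rw [hval, inv_inv]
  rw [this, inv_inv]


end AlmostUnimodAux

/-- A closed normal subgroup `N` of an almost unimodular locally compact group
`G` is itself almost unimodular: the kernel of the modular function `Δ_N` of `N` is open. -/
theorem closed_normal_subgroup_of_almost_unimodular_is_almost_unimodular
    {G : Type*} [Group G] [TopologicalSpace G] [IsTopologicalGroup G]
    [LocallyCompactSpace G] [T2Space G] [MeasurableSpace G] [BorelSpace G]
    (μ : Measure G) [μ.IsHaarMeasure] [μ.Regular]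
    (Δ : G →* ℝ≥0) (hΔc : Continuous Δ) (hΔpos : ∀ s, 0 < Δ s)
    (hΔ : ∀ s : G, Measure.map (· * s) μ = (Δ s)⁻¹ • μ)
    (hGau : IsOpen (Δ.ker : Set G))
    (N : Subgroup G) [N.Normal] (hNclosed : IsClosed (N : Set G))
    (ν : Measure N) [ν.IsHaarMeasure] [ν.Regular]
    (ΔN : N →* ℝ≥0) (hΔNc : Continuous ΔN) (hΔNpos : ∀ n, 0 < ΔN n)
    (hΔN : ∀ n : N, Measure.map (· * n) ν = (ΔN n)⁻¹ • ν) :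
    IsOpen (ΔN.ker : Set N) := by
  have key : ∀ m : N, Δ (m : G) = ΔN m := fun m =>
    AlmostUnimodAux.weil_restrict μ Δ hΔpos hΔ N hNclosed ν ΔN hΔNpos hΔN m
  have hker : (ΔN.ker : Set N) = ((↑) : N → G) ⁻¹' (Δ.ker : Set G) := by
    ext m
    simp only [SetLike.mem_coe, MonoidHom.mem_ker, Set.mem_preimage, key m]
  rw [hker]
  exact hGau.preimage continuous_subtype_val
end

section
/- Let G be an almost unimodular group, H ≤ G a closed subgroup, and ρ : G → (0,∞) a rho-function for the pair (G,H), i.e., a continuous function with ρ(st) = (Δ_H(t)/Δ_G(t)) ρ(s) for all s ∈ G, t ∈ H. Then H is almost unimodular if and only if {t ∈ H : ρ(t) = ρ(e)} is open in H. -/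
open MeasureTheory
open scoped NNReal

/-- Let `G` be almost unimodular, `H ≤ G` a closed subgroup, and
`ρ : G → (0,∞)` a rho-function for `(G,H)`, i.e. continuous, strictly positive, with
`ρ(st) = (Δ_H(t)/Δ_G(t)) ρ(s)` for `s ∈ G`, `t ∈ H`. Then `H` is almost unimodular iff
`{t ∈ H : ρ(t) = ρ(e)}` is open in `H`. -/
theorem subgroup_almost_unimodular_iff_rho_level_set_open
    {G : Type*} [Group G] [TopologicalSpace G] [IsTopologicalGroup G]
    [LocallyCompactSpace G] [T2Space G] [MeasurableSpace G] [BorelSpace G]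
    (μ : Measure G) [μ.IsHaarMeasure] [μ.Regular]
    (Δ : G →* ℝ≥0) (hΔc : Continuous Δ) (hΔpos : ∀ s, 0 < Δ s)
    (hΔ : ∀ s : G, Measure.map (· * s) μ = (Δ s)⁻¹ • μ)
    (hGau : IsOpen (Δ.ker : Set G))
    (H : Subgroup G) (hHclosed : IsClosed (H : Set G))
    (ν : Measure H) [ν.IsHaarMeasure] [ν.Regular]
    (ΔH : H →* ℝ≥0) (hΔHc : Continuous ΔH) (hΔHpos : ∀ t, 0 < ΔH t)
    (hΔH : ∀ t : H, Measure.map (· * t) ν = (ΔH t)⁻¹ • ν)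
    (ρ : G → ℝ) (hρc : Continuous ρ) (hρpos : ∀ s, 0 < ρ s)
    (hρ : ∀ (s : G) (t : H), ρ (s * t) = ((ΔH t : ℝ) / (Δ (t : G) : ℝ)) * ρ s) :
    IsOpen (ΔH.ker : Set H) ↔ IsOpen {t : H | ρ (t : G) = ρ 1} := by
  have key : ∀ t : H, ρ (t : G) = ρ 1 ↔ (ΔH t : ℝ) = (Δ (t : G) : ℝ) := by
    intro t
    have h1 := hρ 1 t
    rw [one_mul] at h1
    have hρ1 : ρ (1 : G) ≠ 0 := (hρpos 1).ne'
    have hΔt : (Δ (t : G) : ℝ) ≠ 0 := by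
      exact_mod_cast (hΔpos (t : G)).ne'
    rw [h1]
    constructor
    · intro h
      have h2 : ((ΔH t : ℝ) / (Δ (t : G) : ℝ)) * ρ 1 = 1 * ρ 1 := by rw [one_mul]; exact h
      have h3 := mul_right_cancel₀ hρ1 h2
      field_simp at h3
      exact_mod_cast h3
    · intro h
      rw [h, div_self hΔt, one_mul]
  -- the common open "little" set
  have hVopen : IsOpen (Subtype.val ⁻¹' (Δ.ker : Set G) : Set H) :=
    hGau.preimage continuous_subtype_val
  constructor
  · intro hker
    have hU : IsOpen ((ΔH.ker : Set H) ∩ (Subtype.val ⁻¹' (Δ.ker : Set G))) :=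
      hker.inter hVopen
    rw [isOpen_iff_forall_mem_open]
    intro x hx
    refine ⟨(fun y : H => x⁻¹ * y) ⁻¹'
        ((ΔH.ker : Set H) ∩ (Subtype.val ⁻¹' (Δ.ker : Set G))), ?_,
      hU.preimage (continuous_const.mul continuous_id), ?_⟩
    · intro y hy
      obtain ⟨h1, h2⟩ := hy
      have e1 : ΔH (x⁻¹ * y) = 1 := h1
      have e2 : Δ (((x⁻¹ * y : H) : G)) = 1 := h2
      have hx' : (ΔH x : ℝ) = (Δ (x : G) : ℝ) := (key x).1 hx
      have eH : ΔH y = ΔH x := by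
        have : ΔH y = ΔH (x * (x⁻¹ * y)) := by group
        rw [this, map_mul, e1, mul_one]
      have eG : Δ ((y : G)) = Δ ((x : G)) := by
        have hco : ((y : H) : G) = (x : G) * ((x⁻¹ * y : H) : G) := by
          push_cast; group
        rw [hco, map_mul, e2, mul_one]
      show ρ (y : G) = ρ 1
      rw [key y, eH, eG]
      exact hx'
    · refine ⟨?_, ?_⟩
      · show x⁻¹ * x ∈ ΔH.ker
        simp [MonoidHom.mem_ker]
      · show ((x⁻¹ * x : H) : G) ∈ (Δ.ker : Set G)
        simp [MonoidHom.mem_ker]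
  · intro hS
    apply Subgroup.isOpen_of_mem_nhds
    have hVmem : ({t : H | ρ (t : G) = ρ 1} ∩ (Subtype.val ⁻¹' (Δ.ker : Set G))) ∈ nhds (1 : H) := by
      apply IsOpen.mem_nhds (hS.inter hVopen)
      constructor
      · show ρ (((1 : H) : G)) = ρ 1
        norm_num
      · show (1 : H).val ∈ (Δ.ker : Set G)
        simp [MonoidHom.mem_ker]
    refine Filter.mem_of_superset hVmem ?_
    rintro t ⟨h1, h2⟩
    have hΔt1 : Δ ((t : G)) = 1 := h2
    have := (key t).1 h1
    rw [hΔt1] at this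
    show ΔH t = 1
    exact_mod_cast this
end

section
/- Let G be a locally compact group with closed normal subgroup N, and let φ : G → (0,∞) be the continuous homomorphism φ(s) = d(μ_N ∘ Ad_s)/dμ_N (the constant Radon–Nikodym derivative of the pushforward of the Haar measure of N under conjugation by s). Then any two of the following imply the third: (i) ker Δ_G is open in G; (ii) ker Δ_{G/N} is open in G/N; (iii) ker φ is open in G. -/
open MeasureTheory
open scoped NNReal Pointwise

lemma aux_cont_integral
    {G : Type*} [Group G] [TopologicalSpace G] [IsTopologicalGroup G]
    [T2Space G] [MeasurableSpace G] [BorelSpace G]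
    (N : Subgroup G) (hNclosed : IsClosed (N : Set G))
    (ν : Measure N) [IsFiniteMeasureOnCompacts ν]
    {X : Type*} [TopologicalSpace X] [LocallyCompactSpace X]
    (F : X → N → ℝ) (hF : Continuous (Function.uncurry F))
    (κ : X → G) (hκ : Continuous κ)
    {T : Set G} (hT : IsCompact T) (hsupp : ∀ x n, F x n ≠ 0 → κ x * ↑n ∈ T) :
    Continuous fun x => ∫ n, F x n ∂ν := by
  haveI : BorelSpace ↥N := inferInstanceAs (BorelSpace (N : Set G))
  rw [continuous_iff_continuousAt]
  intro x₀
  obtain ⟨U, hUc, hU⟩ := exists_compact_mem_nhds x₀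
  set L : Set N := (Subtype.val : N → G) ⁻¹' ((κ '' U)⁻¹ * T) with hL
  have hLc : IsCompact L :=
    hNclosed.isClosedEmbedding_subtypeVal.isProperMap.isCompact_preimage
      (((hUc.image hκ).inv).mul hT)
  have hvanish : ∀ x ∈ U, ∀ n : N, n ∉ L → F x n = 0 := by
    intro x hx n hn
    by_contra h
    exact hn (Set.mem_mul.2 ⟨(κ x)⁻¹, Set.inv_mem_inv.2 (Set.mem_image_of_mem κ hx),
      κ x * ↑n, hsupp x n h, by group⟩)
  have : ContinuousOn (fun x => ∫ n, F x n ∂ν) U := by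
    apply continuousOn_integral_of_compact_support hLc hF.continuousOn
    exact fun p n hp hn => hvanish p hp n hn
  exact this.continuousAt hU

theorem weil_character_relation
    {G : Type*} [Group G] [TopologicalSpace G] [IsTopologicalGroup G]
    [LocallyCompactSpace G] [T2Space G] [MeasurableSpace G] [BorelSpace G]
    (μ : Measure G) [μ.IsHaarMeasure] [μ.Regular]
    (Δ : G →* ℝ≥0) (hΔpos : ∀ s, 0 < Δ s)
    (hΔ : ∀ s : G, Measure.map (· * s) μ = (Δ s)⁻¹ • μ)
    (N : Subgroup G) (hN : N.Normal) (hNclosed : IsClosed (N : Set G))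
    (ν : Measure N) [ν.IsHaarMeasure] [ν.Regular]
    (φ : G →* ℝ≥0) (hφpos : ∀ s, 0 < φ s)
    (hφ : ∀ s : G,
      Measure.map (fun n : N => (⟨s * (n : G) * s⁻¹, hN.conj_mem (n : G) n.2 s⟩ : N)) ν
        = (φ s) • ν)
    [MeasurableSpace (G ⧸ N)] [BorelSpace (G ⧸ N)]
    (μq : Measure (G ⧸ N)) [μq.IsHaarMeasure] [μq.Regular]
    (Δq : G ⧸ N →* ℝ≥0) (hΔqpos : ∀ x, 0 < Δq x)
    (hΔq : ∀ x : G ⧸ N, Measure.map (· * x) μq = (Δq x)⁻¹ • μq) :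
    ∀ t : G, Δq (t : G ⧸ N) * φ t = Δ t := by
  haveI := hN
  haveI : IsClosed (N : Set G) := hNclosed
  haveI : BorelSpace ↥N := inferInstanceAs (BorelSpace (N : Set G))
  haveI : LocallyCompactSpace ↥N := hNclosed.locallyCompactSpace
  -- the averaged descent of a function on `G` to `G ⧸ N`
  set Q : (G → ℝ) → (G ⧸ N) → ℝ := fun f x => ∫ n : N, f (x.out * ↑n) ∂ν with hQ
  set J : (G → ℝ) → ℝ := fun f => ∫ x, Q f x ∂μq with hJ
  -- `Q f` computed on any representative
  have hQπ : ∀ (f : G → ℝ) (s : G), Q f (s : G ⧸ N) = ∫ n : N, f (s * ↑n) ∂ν := by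
    intro f s
    have h : ((s : G ⧸ N).out : G ⧸ N) = (s : G ⧸ N) := QuotientGroup.out_eq' _
    set a := (s : G ⧸ N).out with ha
    have hm : a⁻¹ * s ∈ N := QuotientGroup.eq.mp h
    set m : N := ⟨a⁻¹ * s, hm⟩ with hmdef
    have key := integral_mul_left_eq_self (μ := ν) (fun k : N => f (s * ↑k)) m⁻¹
    calc ∫ n : N, f (a * ↑n) ∂ν = ∫ n : N, f (s * ↑(m⁻¹ * n)) ∂ν := by
          congr 1 with n
          congr 1
          show a * ↑n = s * (↑(m⁻¹) * ↑n)
          have : (↑(m⁻¹) : G) = s⁻¹ * a := by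
            simp [hmdef, mul_inv_rev]
          rw [this]; group
      _ = ∫ n : N, f (s * ↑n) ∂ν := key
  -- continuity of Q f
  have hQcont : ∀ f : G → ℝ, Continuous f → HasCompactSupport f → Continuous (Q f) := by
    intro f hfc hfs
    have h1 : Continuous fun s : G => ∫ n : N, f (s * ↑n) ∂ν := by
      apply aux_cont_integral N hNclosed ν (fun s (n : N) => f (s * ↑n))
        (by exact hfc.comp (continuous_fst.mul (continuous_subtype_val.comp continuous_snd)))
        id continuous_id hfs
      exact fun x n h => subset_tsupport f h
    rw [← QuotientGroup.isOpenQuotientMap_mk.continuous_comp_iff]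
    have : (Q f) ∘ (QuotientGroup.mk : G → G ⧸ N) = fun s : G => ∫ n : N, f (s * ↑n) ∂ν :=
      funext fun s => hQπ f s
    rw [this]; exact h1
  -- compact support of Q f
  have hQsupp : ∀ f : G → ℝ, HasCompactSupport f → HasCompactSupport (Q f) := by
    intro f hfs
    apply HasCompactSupport.intro (hfs.image QuotientGroup.continuous_mk)
    intro x hx
    have hz : ∀ n : N, f (x.out * ↑n) = 0 := by
      intro n
      by_contra h
      refine hx ⟨x.out * ↑n, subset_tsupport f h, ?_⟩
      rw [QuotientGroup.mk_mul_of_mem _ n.2, QuotientGroup.out_eq']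
    simp only [hQ, hz, integral_zero]
  -- left invariance of J
  have hJleft : ∀ (f : G → ℝ) (a : G), J (fun x => f (a * x)) = J f := by
    intro f a
    have h1 : ∀ x : G ⧸ N, Q (fun z => f (a * z)) x = Q f ((a : G ⧸ N) * x) := by
      intro x
      have h2 : (a : G ⧸ N) * x = ((a * x.out : G) : G ⧸ N) := by
        rw [QuotientGroup.mk_mul, QuotientGroup.out_eq']
      rw [h2, hQπ]
      simp only [hQ, mul_assoc]
    calc J (fun x => f (a * x)) = ∫ x, Q f ((a : G ⧸ N) * x) ∂μq := by
          simp only [hJ]; congr 1 with x; exact h1 x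
      _ = J f := integral_mul_left_eq_self (μ := μq) (Q f) _
  -- scalar multiples
  have hJsmul : ∀ (f : G → ℝ) (c : ℝ), J (fun x => c * f x) = c * J f := by
    intro f c
    have h1 : ∀ x : G ⧸ N, Q (fun z => c * f z) x = c * Q f x := by
      intro x; simp only [hQ]; exact integral_const_mul c _
    simp only [hJ]
    rw [show (Q fun z => c * f z) = fun x => c * Q f x from funext h1]
    exact integral_const_mul c _
  -- conjugation change of variables in the fibers
  have hνconj : ∀ (f : G → ℝ), Continuous f → ∀ (t s : G),
      ∫ n : N, f (s * ↑n * t) ∂ν = (φ t : ℝ)⁻¹ * ∫ n : N, f (s * t * ↑n) ∂ν := by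
    intro f hfc t s
    set e : N → N := fun n => ⟨t⁻¹ * ↑n * t⁻¹⁻¹, hN.conj_mem _ n.2 t⁻¹⟩ with he
    have he_cont : Continuous e :=
      Continuous.subtype_mk ((continuous_const.mul continuous_subtype_val).mul continuous_const) _
    have hφinv : φ t⁻¹ = (φ t)⁻¹ :=
      eq_inv_of_mul_eq_one_left (by rw [← map_mul, inv_mul_cancel, map_one])
    set h : N → ℝ := fun m => f (s * t * ↑m) with hh
    have hhc : Continuous h :=
      hfc.comp (continuous_const.mul continuous_subtype_val)
    calc ∫ n : N, f (s * ↑n * t) ∂ν = ∫ n : N, h (e n) ∂ν := by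
          congr 1 with n
          show f (s * ↑n * t) = f (s * t * (t⁻¹ * ↑n * t⁻¹⁻¹))
          congr 1; group
      _ = ∫ m, h m ∂(Measure.map e ν) :=
          (integral_map he_cont.measurable.aemeasurable
            (by rw [hφ t⁻¹]; exact hhc.aestronglyMeasurable)).symm
      _ = ∫ m, h m ∂((φ t⁻¹ : ℝ≥0) • ν) := by rw [hφ t⁻¹]
      _ = (φ t⁻¹ : ℝ≥0) • ∫ m, h m ∂ν := integral_smul_nnreal_measure _ _
      _ = (φ t : ℝ)⁻¹ * ∫ n : N, f (s * t * ↑n) ∂ν := by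
          rw [hφinv, NNReal.smul_def, NNReal.coe_inv]; rfl
  -- right translation of J
  have hJright : ∀ (f : G → ℝ), Continuous f → ∀ t : G,
      J (fun x => f (x * t)) = (φ t : ℝ)⁻¹ * ((Δq (t : G ⧸ N) : ℝ))⁻¹ * J f := by
    intro f hfc t
    have h1 : ∀ x : G ⧸ N, Q (fun z => f (z * t)) x
        = (φ t : ℝ)⁻¹ * Q f (x * (t : G ⧸ N)) := by
      intro x
      have h2 : x * (t : G ⧸ N) = ((x.out * t : G) : G ⧸ N) := by
        rw [QuotientGroup.mk_mul, QuotientGroup.out_eq']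
      rw [h2, hQπ]
      exact hνconj f hfc t x.out
    have h3 : ∫ x, Q f (x * (t : G ⧸ N)) ∂μq = ((Δq (t : G ⧸ N) : ℝ))⁻¹ * J f := by
      have h4 := (Homeomorph.mulRight (t : G ⧸ N)).measurableEmbedding.integral_map
        (μ := μq) (g := Q f)
      simp only [Homeomorph.coe_mulRight] at h4
      have h5 : Measure.map (· * (t : G ⧸ N)) μq = (Δq (t : G ⧸ N))⁻¹ • μq := hΔq _
      rw [h5] at h4
      calc ∫ x, Q f (x * (t : G ⧸ N)) ∂μq = ∫ x, Q f x ∂((Δq (t : G ⧸ N))⁻¹ • μq) := by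
            rw [← h4]
        _ = ((Δq (t : G ⧸ N))⁻¹ : ℝ≥0) • ∫ x, Q f x ∂μq := integral_smul_nnreal_measure _ _
        _ = ((Δq (t : G ⧸ N) : ℝ))⁻¹ * J f := by rw [NNReal.smul_def, NNReal.coe_inv]; rfl
    calc J (fun x => f (x * t)) = ∫ x, (φ t : ℝ)⁻¹ * Q f (x * (t : G ⧸ N)) ∂μq := by
          simp only [hJ]; congr 1 with x; exact h1 x
      _ = (φ t : ℝ)⁻¹ * ∫ x, Q f (x * (t : G ⧸ N)) ∂μq := integral_const_mul _ _
      _ = (φ t : ℝ)⁻¹ * (((Δq (t : G ⧸ N) : ℝ))⁻¹ * J f) := by rw [h3]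
      _ = (φ t : ℝ)⁻¹ * ((Δq (t : G ⧸ N) : ℝ))⁻¹ * J f := by ring
  -- Fubini-type swap for J
  have hswap : ∀ H : G × G → ℝ, Continuous H → HasCompactSupport H →
      J (fun x => ∫ y, H (x, y) ∂μ.inv) = ∫ y, J (fun x => H (x, y)) ∂μ.inv := by
    intro H hHc hHs
    have hT1 : IsCompact (Prod.fst '' tsupport H) := hHs.image continuous_fst
    have hT2 : IsCompact (Prod.snd '' tsupport H) := hHs.image continuous_snd
    -- Step A: swap the inner two integrals (over N and over G)
    have stepA : ∀ s : G, ∫ n : N, (∫ y, H (s * ↑n, y) ∂μ.inv) ∂ν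
        = ∫ y, (∫ n : N, H (s * ↑n, y) ∂ν) ∂μ.inv := by
      intro s
      apply integral_integral_swap_of_hasCompactSupport
      · exact hHc.comp ((continuous_const.mul
          (continuous_subtype_val.comp continuous_fst)).prodMk continuous_snd)
      · apply HasCompactSupport.intro
          ((hNclosed.isClosedEmbedding_subtypeVal.isProperMap.isCompact_preimage
            ((isCompact_singleton (x := s⁻¹)).mul hT1)).prod hT2)
        rintro ⟨n, y⟩ hny
        by_contra h
        have hmem : (s * ↑n, y) ∈ tsupport H := subset_tsupport H h
        refine hny ⟨?_, Set.mem_image_of_mem Prod.snd hmem⟩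
        show (↑n : G) ∈ {s⁻¹} * (Prod.fst '' tsupport H)
        exact Set.mem_mul.2 ⟨s⁻¹, rfl, s * ↑n, Set.mem_image_of_mem Prod.fst hmem, by group⟩
    -- the function on the quotient
    set W : G ⧸ N → G → ℝ := fun x y => Q (fun z => H (z, y)) x with hW
    have hWcont : Continuous (Function.uncurry W) := by
      rw [← (QuotientGroup.isOpenQuotientMap_mk.prodMap IsOpenQuotientMap.id).continuous_comp_iff]
      have heq : (Function.uncurry W) ∘ (Prod.map (QuotientGroup.mk : G → G ⧸ N) id)
          = fun p : G × G => ∫ n : N, H (p.1 * ↑n, p.2) ∂ν := by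
        funext p
        exact hQπ (fun z => H (z, p.2)) p.1
      rw [heq]
      apply aux_cont_integral N hNclosed ν (fun (p : G × G) (n : N) => H (p.1 * ↑n, p.2))
        (hHc.comp (((continuous_fst.comp continuous_fst).mul
          (continuous_subtype_val.comp continuous_snd)).prodMk
          (continuous_snd.comp continuous_fst)))
        Prod.fst continuous_fst hT1
      intro p n h
      exact Set.mem_image_of_mem Prod.fst (subset_tsupport H h)
    have hWsupp : HasCompactSupport (Function.uncurry W) := by
      apply HasCompactSupport.intro ((hT1.image QuotientGroup.continuous_mk).prod hT2)
      rintro ⟨x, y⟩ hxy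
      by_contra h
      have hex : ∃ n : N, H (x.out * ↑n, y) ≠ 0 := by
        by_contra h'
        push_neg at h'
        exact h (by simp only [Function.uncurry, hW, hQ, h', integral_zero])
      obtain ⟨n, hn⟩ := hex
      have hmem : (x.out * ↑n, y) ∈ tsupport H := subset_tsupport H hn
      refine hxy ⟨⟨(x.out * ↑n : G), Set.mem_image_of_mem Prod.fst hmem, ?_⟩,
        Set.mem_image_of_mem Prod.snd hmem⟩
      rw [QuotientGroup.mk_mul_of_mem _ n.2, QuotientGroup.out_eq']
    calc J (fun x => ∫ y, H (x, y) ∂μ.inv)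
        = ∫ x, ∫ y, W x y ∂μ.inv ∂μq := by
          simp only [hJ, hQ, hW]
          congr 1 with x
          exact stepA x.out
      _ = ∫ y, ∫ x, W x y ∂μq ∂μ.inv :=
          integral_integral_swap_of_hasCompactSupport hWcont hWsupp
      _ = ∫ y, J (fun x => H (x, y)) ∂μ.inv := rfl
  -- reference function
  obtain ⟨⟨g, g_cont⟩, g_comp, g_nonneg, g_one⟩ :
      ∃ gc : C(G, ℝ), HasCompactSupport gc ∧ 0 ≤ gc ∧ gc 1 ≠ 0 :=
    exists_continuous_nonneg_pos 1
  have int_g_pos : 0 < ∫ x, g x ∂μ :=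
    g_cont.integral_pos_of_hasCompactSupport_nonneg_nonzero g_comp g_nonneg g_one
  have hresN : 0 < ∫ n : N, g (↑n) ∂ν := by
    apply Continuous.integral_pos_of_hasCompactSupport_nonneg_nonzero
      (g_cont.comp continuous_subtype_val) ?_ (fun n => g_nonneg _) (x := (1 : N)) ?_
    · apply HasCompactSupport.intro
        (hNclosed.isClosedEmbedding_subtypeVal.isProperMap.isCompact_preimage g_comp)
      intro n hn
      by_contra h
      exact hn (subset_tsupport g h)
    · simpa using g_one
  have hJg_pos : 0 < J g := by
    apply Continuous.integral_pos_of_hasCompactSupport_nonneg_nonzero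
      (hQcont g g_cont g_comp) (hQsupp g g_comp) ?_ (x := ((1 : G) : G ⧸ N)) ?_
    · intro x
      exact integral_nonneg fun n => g_nonneg _
    · rw [hQπ]
      refine ne_of_gt ?_
      simpa [one_mul] using hresN
  -- the combo identity for J, following the proof of
  -- `integral_isMulLeftInvariant_isMulRightInvariant_combo`
  have comboJ : ∀ f : G → ℝ, Continuous f → HasCompactSupport f →
      J f = (∫ y, f y * (∫ z, g (z⁻¹ * y) ∂μ.inv)⁻¹ ∂μ.inv) * J g := by
    intro f f_cont f_comp
    set D : G → ℝ := fun x => ∫ y, g (y⁻¹ * x) ∂μ.inv with hD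
    have D_cont : Continuous D := continuous_integral_apply_inv_mul g_cont g_comp
    have D_pos : ∀ x, 0 < D x := by
      intro x
      have C : Continuous fun y => g (y⁻¹ * x) :=
        g_cont.comp (continuous_inv.mul continuous_const)
      apply (integral_pos_iff_support_of_nonneg _ _).2
      · apply C.isOpen_support.measure_pos μ.inv
        exact ⟨x * 1⁻¹, by simpa using g_one⟩
      · exact fun y => g_nonneg _
      · apply C.integrable_of_hasCompactSupport
        exact g_comp.comp_homeomorph ((Homeomorph.inv G).trans (Homeomorph.mulRight x))
    calc J f = J (fun x => f x * (D x)⁻¹ * D x) := by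
          have hfe : f = fun x => f x * (D x)⁻¹ * D x :=
            funext fun x => show f x = f x * (D x)⁻¹ * D x by
              rw [mul_assoc, inv_mul_cancel₀ (D_pos x).ne', mul_one]
          exact congrArg J hfe
      _ = J (fun x => ∫ y, f x * (D x)⁻¹ * g (y⁻¹ * x) ∂μ.inv) := by
          have hfe : (fun x => f x * (D x)⁻¹ * D x)
              = fun x => ∫ y, f x * (D x)⁻¹ * g (y⁻¹ * x) ∂μ.inv :=
            funext fun x => show f x * (D x)⁻¹ * D x
                = ∫ y, f x * (D x)⁻¹ * g (y⁻¹ * x) ∂μ.inv by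
              rw [integral_const_mul]
          exact congrArg J hfe
      _ = ∫ y, J (fun x => f x * (D x)⁻¹ * g (y⁻¹ * x)) ∂μ.inv := by
          apply hswap (fun p : G × G => f p.1 * (D p.1)⁻¹ * g (p.2⁻¹ * p.1))
          · apply Continuous.mul
            · exact (f_cont.comp continuous_fst).mul
                ((D_cont.comp continuous_fst).inv₀ fun x => (D_pos _).ne')
            · exact g_cont.comp (continuous_snd.inv.mul continuous_fst)
          · let K := tsupport f
            have K_comp : IsCompact K := f_comp
            let L := tsupport g
            have L_comp : IsCompact L := g_comp
            let M := (fun p : G × G => p.1 * p.2⁻¹) '' (K ×ˢ L)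
            have M_comp : IsCompact M :=
              (K_comp.prod L_comp).image (continuous_fst.mul continuous_snd.inv)
            have hvan : ∀ p : G × G, p ∉ K ×ˢ closure M →
                f p.1 * (D p.1)⁻¹ * g (p.2⁻¹ * p.1) = 0 := by
              rintro ⟨x, y⟩ hxy
              by_cases H : x ∈ K; swap
              · simp [image_eq_zero_of_notMem_tsupport H]
              have : g (y⁻¹ * x) = 0 := by
                apply image_eq_zero_of_notMem_tsupport
                contrapose! hxy
                simp only [Set.mem_prod, H, true_and]
                apply subset_closure
                simp only [M, Set.mem_image, Set.mem_prod, Prod.exists]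
                exact ⟨x, y⁻¹ * x, ⟨H, hxy⟩, by group⟩
              simp [this]
            apply HasCompactSupport.intro' (K_comp.prod M_comp.closure) ?_ hvan
            exact (isClosed_tsupport f).prod isClosed_closure
      _ = ∫ y, J (fun x => f (y * x) * (D (y * x))⁻¹ * g x) ∂μ.inv := by
          congr 1 with y
          calc J (fun x => f x * (D x)⁻¹ * g (y⁻¹ * x))
              = J (fun x => f (y * x) * (D (y * x))⁻¹ * g (y⁻¹ * (y * x))) :=
                (hJleft (fun x => f x * (D x)⁻¹ * g (y⁻¹ * x)) y).symm
            _ = J (fun x => f (y * x) * (D (y * x))⁻¹ * g x) := by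
                have hfe : (fun x => f (y * x) * (D (y * x))⁻¹ * g (y⁻¹ * (y * x)))
                    = fun x => f (y * x) * (D (y * x))⁻¹ * g x :=
                  funext fun x => show f (y * x) * (D (y * x))⁻¹ * g (y⁻¹ * (y * x))
                      = f (y * x) * (D (y * x))⁻¹ * g x by
                    rw [inv_mul_cancel_left]
                exact congrArg J hfe
      _ = J (fun x => ∫ y, f (y * x) * (D (y * x))⁻¹ * g x ∂μ.inv) := by
          refine (hswap (fun p : G × G => f (p.2 * p.1) * (D (p.2 * p.1))⁻¹ * g p.1) ?_ ?_).symm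
          · apply Continuous.mul ?_ (g_cont.comp continuous_fst)
            exact (f_cont.comp (continuous_snd.mul continuous_fst)).mul
              ((D_cont.comp (continuous_snd.mul continuous_fst)).inv₀ fun x => (D_pos _).ne')
          · let K := tsupport f
            have K_comp : IsCompact K := f_comp
            let L := tsupport g
            have L_comp : IsCompact L := g_comp
            let M := (fun p : G × G => p.1 * p.2⁻¹) '' (K ×ˢ L)
            have M_comp : IsCompact M :=
              (K_comp.prod L_comp).image (continuous_fst.mul continuous_snd.inv)
            have hvan : ∀ p : G × G, p ∉ L ×ˢ closure M →
                f (p.2 * p.1) * (D (p.2 * p.1))⁻¹ * g p.1 = 0 := by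
              rintro ⟨x, y⟩ hxy
              by_cases H : x ∈ L; swap
              · simp [image_eq_zero_of_notMem_tsupport H]
              have : f (y * x) = 0 := by
                apply image_eq_zero_of_notMem_tsupport
                contrapose! hxy
                simp only [Set.mem_prod, H, true_and]
                apply subset_closure
                simp only [M, Set.mem_image, Set.mem_prod, Prod.exists]
                exact ⟨y * x, x, ⟨hxy, H⟩, by group⟩
              simp [this]
            apply HasCompactSupport.intro' (L_comp.prod M_comp.closure) ?_ hvan
            exact (isClosed_tsupport g).prod isClosed_closure
      _ = J (fun x => (∫ y, f y * (D y)⁻¹ ∂μ.inv) * g x) := by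
          have hfe : (fun x => ∫ y, f (y * x) * (D (y * x))⁻¹ * g x ∂μ.inv)
              = fun x => (∫ y, f y * (D y)⁻¹ ∂μ.inv) * g x :=
            funext fun x => show (∫ y, f (y * x) * (D (y * x))⁻¹ * g x ∂μ.inv)
                = (∫ y, f y * (D y)⁻¹ ∂μ.inv) * g x by
              rw [integral_mul_const]
              congr 1
              exact integral_mul_right_eq_self (fun y => f y * (D y)⁻¹) x
          exact congrArg J hfe
      _ = (∫ y, f y * (D y)⁻¹ ∂μ.inv) * J g := hJsmul g _
  -- the final computation
  intro t
  have hgt_cont : Continuous fun x : G => g (x * t) :=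
    g_cont.comp (continuous_mul_right t)
  have hgt_comp : HasCompactSupport fun x : G => g (x * t) :=
    g_comp.comp_homeomorph (Homeomorph.mulRight t)
  have h1 := comboJ _ hgt_cont hgt_comp
  have h2 : ∫ x, g (x * t) ∂μ
      = (∫ y, g (y * t) * (∫ z, g (z⁻¹ * y) ∂μ.inv)⁻¹ ∂μ.inv) * ∫ x, g x ∂μ :=
    Measure.integral_isMulLeftInvariant_isMulRightInvariant_combo hgt_cont hgt_comp
      g_cont g_comp g_nonneg g_one
  have h3 := hJright g g_cont t
  have h4 : ∫ x, g (x * t) ∂μ = ((Δ t : ℝ))⁻¹ * ∫ x, g x ∂μ := by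
    have h5 := (Homeomorph.mulRight t).measurableEmbedding.integral_map (μ := μ) (g := g)
    simp only [Homeomorph.coe_mulRight] at h5
    rw [hΔ t] at h5
    calc ∫ x, g (x * t) ∂μ = ∫ x, g x ∂((Δ t)⁻¹ • μ) := by rw [← h5]
      _ = ((Δ t)⁻¹ : ℝ≥0) • ∫ x, g x ∂μ := integral_smul_nnreal_measure _ _
      _ = ((Δ t : ℝ))⁻¹ * ∫ x, g x ∂μ := by rw [NNReal.smul_def, NNReal.coe_inv]; rfl
  have e1 : J (fun x => g (x * t)) * ∫ x, g x ∂μ = (∫ x, g (x * t) ∂μ) * J g := by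
    rw [h1, h2]; ring
  rw [h3, h4] at e1
  have key : (φ t : ℝ)⁻¹ * ((Δq (t : G ⧸ N) : ℝ))⁻¹ * (J g * ∫ x, g x ∂μ)
      = ((Δ t : ℝ))⁻¹ * (J g * ∫ x, g x ∂μ) := by
    calc (φ t : ℝ)⁻¹ * ((Δq (t : G ⧸ N) : ℝ))⁻¹ * (J g * ∫ x, g x ∂μ)
        = (φ t : ℝ)⁻¹ * ((Δq (t : G ⧸ N) : ℝ))⁻¹ * J g * ∫ x, g x ∂μ := by ring
      _ = ((Δ t : ℝ))⁻¹ * (∫ x, g x ∂μ) * J g := e1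
      _ = ((Δ t : ℝ))⁻¹ * (J g * ∫ x, g x ∂μ) := by ring
  have hcan : (φ t : ℝ)⁻¹ * ((Δq (t : G ⧸ N) : ℝ))⁻¹ = ((Δ t : ℝ))⁻¹ :=
    mul_right_cancel₀ (mul_ne_zero hJg_pos.ne' int_g_pos.ne') key
  have hφne : (φ t : ℝ) ≠ 0 := ne_of_gt (by exact_mod_cast hφpos t)
  have hΔqne : ((Δq (t : G ⧸ N)) : ℝ) ≠ 0 := ne_of_gt (by exact_mod_cast hΔqpos _)
  have hΔne : ((Δ t) : ℝ) ≠ 0 := ne_of_gt (by exact_mod_cast hΔpos t)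
  have hfinal : ((Δq (t : G ⧸ N)) : ℝ) * (φ t : ℝ) = (Δ t : ℝ) := by
    field_simp at hcan
    ring_nf at hcan ⊢
    linarith [hcan]
  exact_mod_cast hfinal

/-- Let `N ⊴ G` be a closed normal subgroup and let `φ : G → (0,∞)` be the
continuous homomorphism given by the (constant) Radon–Nikodym derivative of the pushforward
of a Haar measure `ν` of `N` under conjugation by `s`. With `Δ_G` and `Δ_{G/N}` the modular
functions of `G` and `G/N`, any two of the following imply the third:
(i) `ker Δ_G` is open; (ii) `ker Δ_{G/N}` is open; (iii) `ker φ` is open. -/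
theorem two_of_three_open_kernels_quotient
    {G : Type*} [Group G] [TopologicalSpace G] [IsTopologicalGroup G]
    [LocallyCompactSpace G] [T2Space G] [MeasurableSpace G] [BorelSpace G]
    (μ : Measure G) [μ.IsHaarMeasure] [μ.Regular]
    (Δ : G →* ℝ≥0) (hΔc : Continuous Δ) (hΔpos : ∀ s, 0 < Δ s)
    (hΔ : ∀ s : G, Measure.map (· * s) μ = (Δ s)⁻¹ • μ)
    (N : Subgroup G) (hN : N.Normal) (hNclosed : IsClosed (N : Set G))
    (ν : Measure N) [ν.IsHaarMeasure] [ν.Regular]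
    (φ : G →* ℝ≥0) (hφc : Continuous φ) (hφpos : ∀ s, 0 < φ s)
    (hφ : ∀ s : G,
      Measure.map (fun n : N => (⟨s * (n : G) * s⁻¹, hN.conj_mem (n : G) n.2 s⟩ : N)) ν
        = (φ s) • ν)
    [MeasurableSpace (G ⧸ N)] [BorelSpace (G ⧸ N)]
    (μq : Measure (G ⧸ N)) [μq.IsHaarMeasure] [μq.Regular]
    (Δq : G ⧸ N →* ℝ≥0) (hΔqc : Continuous Δq) (hΔqpos : ∀ x, 0 < Δq x)
    (hΔq : ∀ x : G ⧸ N, Measure.map (· * x) μq = (Δq x)⁻¹ • μq) :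
    (IsOpen (Δ.ker : Set G) → IsOpen (Δq.ker : Set (G ⧸ N)) → IsOpen (φ.ker : Set G)) ∧
    (IsOpen (Δ.ker : Set G) → IsOpen (φ.ker : Set G) → IsOpen (Δq.ker : Set (G ⧸ N))) ∧
    (IsOpen (Δq.ker : Set (G ⧸ N)) → IsOpen (φ.ker : Set G) → IsOpen (Δ.ker : Set G)) := by
  have key : ∀ t : G, Δq (t : G ⧸ N) * φ t = Δ t :=
    weil_character_relation μ Δ hΔpos hΔ N hN hNclosed ν φ hφpos hφ μq Δq hΔqpos hΔq
  have hπc : Continuous (QuotientGroup.mk : G → G ⧸ N) := QuotientGroup.continuous_mk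
  -- the pullback of `Δq` along the projection
  set Δq' : G →* ℝ≥0 := Δq.comp (QuotientGroup.mk' N) with hΔq'
  have hkercomap : (Δq'.ker : Set G) = (QuotientGroup.mk : G → G ⧸ N) ⁻¹' (Δq.ker : Set (G ⧸ N)) := by
    rfl
  refine ⟨?_, ?_, ?_⟩
  · intro h1 h2
    have h2' : IsOpen (Δq'.ker : Set G) := by
      rw [hkercomap]; exact h2.preimage hπc
    refine Subgroup.isOpen_mono (H₁ := Δ.ker ⊓ Δq'.ker) ?_ ?_
    · rintro x ⟨hx1, hx2⟩
      have h := key x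
      simp only [MonoidHom.mem_ker] at hx1 hx2 ⊢
      have hx2'' : Δq (x : G ⧸ N) = 1 := hx2
      rw [hx2'', hx1, one_mul] at h
      exact h
    · exact h1.inter h2'
  · intro h1 h3
    have : IsOpen (Δq'.ker : Set G) := by
      refine Subgroup.isOpen_mono (H₁ := Δ.ker ⊓ φ.ker) ?_ ?_
      · rintro x ⟨hx1, hx3⟩
        have h := key x
        simp only [MonoidHom.mem_ker] at hx1 hx3 ⊢
        rw [hx3, hx1, mul_one] at h
        exact h
      · exact h1.inter h3
    rw [hkercomap] at this
    have : IsOpen ((QuotientGroup.mk : G → G ⧸ N) ''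
        ((QuotientGroup.mk : G → G ⧸ N) ⁻¹' (Δq.ker : Set (G ⧸ N)))) :=
      QuotientGroup.isOpenMap_coe _ this
    rwa [Set.image_preimage_eq _ (QuotientGroup.mk_surjective)] at this
  · intro h2 h3
    have h2' : IsOpen (Δq'.ker : Set G) := by
      rw [hkercomap]; exact h2.preimage hπc
    refine Subgroup.isOpen_mono (H₁ := Δq'.ker ⊓ φ.ker) ?_ ?_
    · rintro x ⟨hx2, hx3⟩
      have h := key x
      simp only [MonoidHom.mem_ker] at hx2 hx3 ⊢
      have hx2'' : Δq (x : G ⧸ N) = 1 := hx2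
      rw [hx2'', hx3, one_mul] at h
      exact h.symm
    · exact h2'.inter h3
end

section
/- Let G be a locally compact group with a compact closed normal subgroup N. Then G is almost unimodular if and only if G/N is almost unimodular. -/
open MeasureTheory Filter Set
open scoped NNReal ENNReal Pointwise

/-- For a locally compact group `G` with compact closed normal subgroup `N`,
`G` is almost unimodular iff `G/N` is almost unimodular (kernels of the respective modular
functions are open). -/
theorem almost_unimodular_iff_quotient_by_compact_normal
    {G : Type*} [Group G] [TopologicalSpace G] [IsTopologicalGroup G]
    [LocallyCompactSpace G] [T2Space G] [MeasurableSpace G] [BorelSpace G]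
    (μ : Measure G) [μ.IsHaarMeasure] [μ.Regular]
    (Δ : G →* ℝ≥0) (hΔc : Continuous Δ) (hΔpos : ∀ s, 0 < Δ s)
    (hΔ : ∀ s : G, Measure.map (· * s) μ = (Δ s)⁻¹ • μ)
    (N : Subgroup G) [N.Normal] (hNclosed : IsClosed (N : Set G))
    (hNcompact : IsCompact (N : Set G))
    [MeasurableSpace (G ⧸ N)] [BorelSpace (G ⧸ N)]
    (μq : Measure (G ⧸ N)) [μq.IsHaarMeasure] [μq.Regular]
    (Δq : G ⧸ N →* ℝ≥0) (hΔqc : Continuous Δq) (hΔqpos : ∀ x, 0 < Δq x)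
    (hΔq : ∀ x : G ⧸ N, Measure.map (· * x) μq = (Δq x)⁻¹ • μq) :
    IsOpen (Δ.ker : Set G) ↔ IsOpen (Δq.ker : Set (G ⧸ N)) := by
  -- the pushforward of μ to the quotient is a Haar measure
  have hproper : IsProperMap (QuotientGroup.mk : G → G ⧸ N) := by
    rw [isProperMap_iff_isClosedMap_and_compact_fibers]
    refine ⟨QuotientGroup.continuous_mk, QuotientGroup.isClosedMap_coe hNcompact, fun y => ?_⟩
    obtain ⟨g, rfl⟩ := QuotientGroup.mk_surjective y
    have : (QuotientGroup.mk : G → G ⧸ N) ⁻¹' {(g : G ⧸ N)} = g • (N : Set G) := by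
      ext x
      simp only [Set.mem_preimage, Set.mem_singleton_iff, QuotientGroup.eq,
        Set.mem_smul_set_iff_inv_smul_mem, smul_eq_mul]
      constructor
      · intro h; simpa using N.inv_mem h
      · intro h; simpa using N.inv_mem h
    rw [this]
    exact hNcompact.smul g
  have hprop : Tendsto (QuotientGroup.mk : G → G ⧸ N) (cocompact G) (cocompact (G ⧸ N)) := by
    rw [hasBasis_cocompact.tendsto_right_iff]
    intro K hK
    rw [eventually_iff, Filter.mem_cocompact]
    exact ⟨_, hproper.isCompact_preimage hK, fun x hx => hx⟩
  haveI hνHaar' : (Measure.map (QuotientGroup.mk : G → G ⧸ N) μ).IsHaarMeasure :=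
    Measure.isHaarMeasure_map μ (QuotientGroup.mk' N) QuotientGroup.continuous_mk
      (QuotientGroup.mk'_surjective N) hprop
  set ν : Measure (G ⧸ N) := Measure.map (QuotientGroup.mk : G → G ⧸ N) μ with hν
  -- a nonempty open set of finite positive μq-measure
  obtain ⟨K, hKcomp, hKmem⟩ := exists_compact_mem_nhds (1 : G ⧸ N)
  set U : Set (G ⧸ N) := interior K with hU
  have hUopen : IsOpen U := isOpen_interior
  have h1U : (1 : G ⧸ N) ∈ U := mem_interior_iff_mem_nhds.2 hKmem
  have hUpos : 0 < μq U := hUopen.measure_pos μq ⟨1, h1U⟩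
  have hUfin : μq U < ∞ := lt_of_le_of_lt (measure_mono interior_subset) hKcomp.measure_lt_top
  set c : ℝ≥0 := Measure.haarScalarFactor ν μq with hc
  have hcpos : 0 < c := Measure.haarScalarFactor_pos_of_isHaarMeasure ν μq
  have hopen_eq : ∀ V : Set (G ⧸ N), IsOpen V → ν V = (c : ℝ≥0∞) * μq V := by
    intro V hV
    rw [Measure.measure_isHaarMeasure_eq_smul_of_isOpen ν μq hV]
    simp [ENNReal.smul_def]; rfl
  -- key: Δ factors as Δq ∘ mk
  have hkey : ∀ s : G, Δ s = Δq (s : G ⧸ N) := by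
    intro s
    set x : G ⧸ N := (s : G ⧸ N) with hx
    set V : Set (G ⧸ N) := (· * x) ⁻¹' U with hVdef
    have hVopen : IsOpen V := hUopen.preimage (continuous_mul_right x)
    have hmx : Measurable (· * x : G ⧸ N → G ⧸ N) := (continuous_mul_right x).measurable
    have hmk : Measurable (QuotientGroup.mk : G → G ⧸ N) :=
      QuotientGroup.continuous_mk.measurable
    -- ν transforms under right translation with factor (Δ s)⁻¹
    have h1 : Measure.map (· * x) ν = ((Δ s)⁻¹ : ℝ≥0) • ν := by
      rw [hν, Measure.map_map hmx hmk]
      have : ((· * x) ∘ (QuotientGroup.mk : G → G ⧸ N)) = (QuotientGroup.mk : G → G ⧸ N) ∘ (· * s) := by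
        funext g
        simp [hx]
      rw [this, ← Measure.map_map hmk ((continuous_mul_right s).measurable), hΔ s,
        Measure.map_smul]
    -- evaluate everything on U
    have hq : μq V = (((Δq x)⁻¹ : ℝ≥0) : ℝ≥0∞) * μq U := by
      have := congrArg (fun m : Measure (G ⧸ N) => m U) (hΔq x)
      simpa [Measure.map_apply hmx hUopen.measurableSet, Measure.smul_apply, smul_eq_mul]
        using this
    have hn : ν V = (((Δ s)⁻¹ : ℝ≥0) : ℝ≥0∞) * ν U := by
      have := congrArg (fun m : Measure (G ⧸ N) => m U) h1
      simpa [Measure.map_apply hmx hUopen.measurableSet, Measure.smul_apply, smul_eq_mul]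
        using this
    rw [hopen_eq V hVopen, hopen_eq U hUopen, hq] at hn
    -- hn : c * ((Δq x)⁻¹ * μq U) = (Δ s)⁻¹ * (c * μq U)
    have hcancel : (((Δq x)⁻¹ : ℝ≥0) : ℝ≥0∞) = (((Δ s)⁻¹ : ℝ≥0) : ℝ≥0∞) := by
      have hc0 : (c : ℝ≥0∞) ≠ 0 := by exact_mod_cast hcpos.ne'
      have hctop : (c : ℝ≥0∞) ≠ ∞ := ENNReal.coe_ne_top
      have h2 : (((Δq x)⁻¹ : ℝ≥0) : ℝ≥0∞) * ((c : ℝ≥0∞) * μq U) =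
          (((Δ s)⁻¹ : ℝ≥0) : ℝ≥0∞) * ((c : ℝ≥0∞) * μq U) := by
        rw [← hn]; ring
      have hne0 : (c : ℝ≥0∞) * μq U ≠ 0 := by
        simp [hc0, hUpos.ne']
      have hnetop : (c : ℝ≥0∞) * μq U ≠ ∞ := ENNReal.mul_ne_top hctop hUfin.ne
      have h3 : (((Δq x)⁻¹ : ℝ≥0) : ℝ≥0∞) * ((c : ℝ≥0∞) * μq U) =
          (((Δ s)⁻¹ : ℝ≥0) : ℝ≥0∞) * ((c : ℝ≥0∞) * μq U) := h2
      exact (ENNReal.mul_left_inj hne0 hnetop).mp h3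
    have : ((Δq x)⁻¹ : ℝ≥0) = (Δ s)⁻¹ := by exact_mod_cast hcancel
    have := inv_injective this
    exact this.symm
  -- conclude
  have hker : (Δ.ker : Set G) = (QuotientGroup.mk : G → G ⧸ N) ⁻¹' (Δq.ker : Set (G ⧸ N)) := by
    ext s
    simp [MonoidHom.mem_ker, SetLike.mem_coe, hkey s]
  constructor
  · intro h
    have himg : (Δq.ker : Set (G ⧸ N)) =
        (QuotientGroup.mk : G → G ⧸ N) '' (Δ.ker : Set G) := by
      rw [hker, Set.image_preimage_eq _ (QuotientGroup.mk_surjective)]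
    rw [himg]
    exact QuotientGroup.isOpenMap_coe _ h
  · intro h
    rw [hker]
    exact h.preimage QuotientGroup.continuous_mk
end

section
/- Let G be an almost unimodular group. Then the map H ↦ Δ_G(H) is a bijection between the set of closed subgroups H of G with ker Δ_G ≤ H ≤ G and the set of subgroups Γ of Δ_G(G), with inverse Γ ↦ Δ_G⁻¹(Γ). Moreover, every such intermediate closed subgroup H is normal in G. -/
open MeasureTheory
open scoped NNReal

/-- For an almost unimodular group `G`, the map `H ↦ Δ_G(H)` is a bijection
from the closed intermediate subgroups `ker Δ_G ≤ H ≤ G` onto the subgroups `Γ` of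
`Δ_G(G)`, with inverse `Γ ↦ Δ_G⁻¹(Γ)`; moreover every such intermediate closed subgroup is
normal in `G`.  The bijectivity is expressed by: `Δ⁻¹(Δ(H)) = H` for every closed
intermediate `H`, and for every subgroup `Γ ⊆ Δ(G)` of the positive reals there is a closed
intermediate subgroup `H` with underlying set `Δ⁻¹(Γ)` and image `Δ(H) = Γ`. -/
theorem intermediate_closed_subgroups_biject_with_subgroups_of_image
    {G : Type*} [Group G] [TopologicalSpace G] [IsTopologicalGroup G]
    [LocallyCompactSpace G] [T2Space G] [MeasurableSpace G] [BorelSpace G]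
    (μ : Measure G) [μ.IsHaarMeasure] [μ.Regular]
    (Δ : G →* ℝ≥0) (hΔc : Continuous Δ) (hΔpos : ∀ s, 0 < Δ s)
    (hΔ : ∀ s : G, Measure.map (· * s) μ = (Δ s)⁻¹ • μ)
    (hGau : IsOpen (Δ.ker : Set G)) :
    (∀ H : Subgroup G, IsClosed (H : Set G) → Δ.ker ≤ H →
      H.Normal ∧ Δ ⁻¹' (Δ '' (H : Set G)) = (H : Set G)) ∧
    (∀ Γ : Set ℝ≥0, Γ ⊆ Set.range Δ → (1 : ℝ≥0) ∈ Γ →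
      (∀ a ∈ Γ, ∀ b ∈ Γ, a * b ∈ Γ) → (∀ a ∈ Γ, a⁻¹ ∈ Γ) →
      ∃ H : Subgroup G, IsClosed (H : Set G) ∧ Δ.ker ≤ H ∧
        (H : Set G) = Δ ⁻¹' Γ ∧ Δ '' (H : Set G) = Γ) := by
  have hΔinv : ∀ a : G, Δ a⁻¹ = (Δ a)⁻¹ := fun a =>
    eq_inv_of_mul_eq_one_left (by rw [← map_mul]; simp)
  constructor
  · intro H _ hker
    have hpre : Δ ⁻¹' (Δ '' (H : Set G)) = (H : Set G) := by
      apply Set.Subset.antisymm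
      · rintro x ⟨h, hh, hxh⟩
        have hk : x * h⁻¹ ∈ Δ.ker := by
          simp [MonoidHom.mem_ker, hΔinv, hxh, mul_inv_cancel₀ (hΔpos x).ne']
        have : (x * h⁻¹) * h ∈ H := H.mul_mem (hker hk) hh
        simpa using this
      · exact Set.subset_preimage_image _ _
    refine ⟨⟨fun h hh g => ?_⟩, hpre⟩
    have hmem : g * h * g⁻¹ ∈ Δ ⁻¹' (Δ '' (H : Set G)) := by
      refine ⟨h, hh, ?_⟩
      have : Δ g ≠ 0 := (hΔpos g).ne'
      rw [map_mul, map_mul, hΔinv, mul_comm (Δ g), mul_assoc, mul_inv_cancel₀ this, mul_one]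
    rw [hpre] at hmem
    exact hmem
  · intro Γ hΓsub hone hmul hinv
    refine ⟨{ carrier := Δ ⁻¹' Γ
              mul_mem' := fun ha hb => by
                simpa [Set.mem_preimage, map_mul] using hmul _ ha _ hb
              one_mem' := by simpa using hone
              inv_mem' := fun {a} ha => by
                simpa [Set.mem_preimage, hΔinv] using hinv _ ha },
      ?_, ?_, rfl, ?_⟩
    · apply Subgroup.isClosed_of_isOpen
      rw [isOpen_iff_forall_mem_open]
      intro x hx
      refine ⟨(x * ·) '' (Δ.ker : Set G), ?_, ?_, ⟨1, by simp [MonoidHom.mem_ker], by simp⟩⟩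
      · rintro y ⟨k, hk, rfl⟩
        have hk' : Δ k = 1 := hk
        show Δ (x * k) ∈ Γ
        simpa [map_mul, hk'] using hx
      · exact (Homeomorph.mulLeft x).isOpenMap _ hGau
    · intro x hx
      have hx' : Δ x = 1 := hx
      show Δ x ∈ Γ
      rw [hx']; exact hone
    · apply Set.Subset.antisymm
      · rintro y ⟨x, hx, rfl⟩; exact hx
      · intro γ hγ
        obtain ⟨x, rfl⟩ := hΓsub hγ
        exact ⟨x, hγ, rfl⟩
end

section
/- Let H and N be locally compact groups with a continuous cocycle action (α, c) of H on N, and suppose H is discrete and N is almost unimodular. Then the cocycle semidirect product H ⋉_{(α,c)} N is almost unimodular. -/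
open MeasureTheory
open scoped NNReal

/-- Let `(α, c)` be a continuous cocycle action of a discrete group `H` on an
almost unimodular locally compact group `N` (with `α_s α_t = Ad_{c(s,t)} α_{st}`,
`c(s,t)c(st,r) = α_s(c(t,r)) c(s,tr)`, normalized).  Then the cocycle semidirect product
`H ⋉_{(α,c)} N` — here any locally compact group `P` homeomorphic to `H × N` whose
multiplication is `(s,x)(t,y) = (st, c(t⁻¹,s⁻¹)⁻¹ α_{t⁻¹}(x) y)` under that
homeomorphism — is almost unimodular. -/
theorem cocycle_semidirect_product_by_discrete_is_almost_unimodular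
    {H : Type*} [Group H] [TopologicalSpace H] [IsTopologicalGroup H]
    [LocallyCompactSpace H] [T2Space H] [DiscreteTopology H]
    {N : Type*} [Group N] [TopologicalSpace N] [IsTopologicalGroup N]
    [LocallyCompactSpace N] [T2Space N] [MeasurableSpace N] [BorelSpace N]
    (ν : Measure N) [ν.IsHaarMeasure] [ν.Regular]
    (ΔN : N →* ℝ≥0) (hΔNc : Continuous ΔN) (hΔNpos : ∀ x, 0 < ΔN x)
    (hΔN : ∀ x : N, Measure.map (· * x) ν = (ΔN x)⁻¹ • ν)
    (hNau : IsOpen (ΔN.ker : Set N))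
    (α : H → MulAut N) (c : H → H → N)
    (hαc : Continuous fun p : H × N => α p.1 p.2)
    (hcc : Continuous fun p : H × H => c p.1 p.2)
    (hcocycle₁ : ∀ s t : H, (α s) * (α t) = (MulAut.conj (c s t)) * (α (s * t)))
    (hcocycle₂ : ∀ s t r : H, c s t * c (s * t) r = α s (c t r) * c s (t * r))
    (hnorm₁ : ∀ s : H, c s 1 = 1) (hnorm₂ : ∀ s : H, c 1 s = 1)
    {P : Type*} [Group P] [TopologicalSpace P] [IsTopologicalGroup P]
    [LocallyCompactSpace P] [T2Space P] [MeasurableSpace P] [BorelSpace P]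
    (μ : Measure P) [μ.IsHaarMeasure] [μ.Regular]
    (Δ : P →* ℝ≥0) (hΔc : Continuous Δ) (hΔpos : ∀ g, 0 < Δ g)
    (hΔ : ∀ g : P, Measure.map (· * g) μ = (Δ g)⁻¹ • μ)
    (e : P ≃ₜ H × N)
    (hmul : ∀ g₁ g₂ : P,
      e (g₁ * g₂) = ((e g₁).1 * (e g₂).1,
        (c ((e g₂).1)⁻¹ ((e g₁).1)⁻¹)⁻¹ * α ((e g₂).1)⁻¹ (e g₁).2 * (e g₂).2)) :
    IsOpen (Δ.ker : Set P) := by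
  classical
  -- α 1 = 1
  have hα1 : α 1 = 1 := by
    have := hcocycle₁ 1 1
    rw [hnorm₁ 1, map_one, one_mul, one_mul] at this
    exact mul_right_cancel this
  -- e 1 = (1, 1)
  have he1fst : (e (1 : P)).1 = 1 := by
    have := congrArg Prod.fst (hmul 1 1)
    simp only [mul_one] at this
    exact (left_eq_mul.mp this)
  have he1 : e (1 : P) = (1, 1) := by
    have h2 := congrArg Prod.snd (hmul 1 1)
    simp only [mul_one, he1fst, inv_one, hnorm₁, hα1] at h2
    simp only [MulAut.one_apply, one_mul] at h2
    have : (e (1 : P)).2 = 1 := left_eq_mul.mp h2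
    exact Prod.ext he1fst this
  -- first coordinate is a homomorphism
  have hfst : ∀ g₁ g₂ : P, (e (g₁ * g₂)).1 = (e g₁).1 * (e g₂).1 :=
    fun g₁ g₂ => congrArg Prod.fst (hmul g₁ g₂)
  have hinvfst : ∀ g : P, (e g⁻¹).1 = ((e g).1)⁻¹ := by
    intro g
    have : (e g).1 * (e g⁻¹).1 = 1 := by
      rw [← hfst, mul_inv_cancel, he1fst]
    exact (inv_eq_of_mul_eq_one_right this).symm
  -- the open subgroup K = e⁻¹({1} × N)
  let K : Subgroup P :=
    { carrier := {g : P | (e g).1 = 1}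
      mul_mem' := by
        intro a b ha hb
        simp only [Set.mem_setOf_eq] at *
        rw [hfst, ha, hb, one_mul]
      one_mem' := he1fst
      inv_mem' := by
        intro a ha
        simp only [Set.mem_setOf_eq] at *
        rw [hinvfst, ha, inv_one] }
  have hKopen : IsOpen (K : Set P) := by
    have : (K : Set P) = (fun g : P => (e g).1) ⁻¹' {1} := rfl
    rw [this]
    exact (isOpen_discrete _).preimage (continuous_fst.comp e.continuous)
  have hKm : MeasurableSet (K : Set P) := hKopen.measurableSet
  set f : P → N := fun p => (e p).2 with hf
  have hfc : Continuous f := continuous_snd.comp e.continuous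
  have hfm : Measurable f := hfc.measurable
  -- multiplicativity of f on K
  have hfmul : ∀ g₁ g₂ : P, g₁ ∈ K → g₂ ∈ K → f (g₁ * g₂) = f g₁ * f g₂ := by
    intro g₁ g₂ h₁ h₂
    have h₁' : (e g₁).1 = 1 := h₁
    have h₂' : (e g₂).1 = 1 := h₂
    have := congrArg Prod.snd (hmul g₁ g₂)
    simp only [h₁', h₂', inv_one, hnorm₁, hα1, MulAut.one_apply, one_mul] at this
    simpa using this
  set ρ : Measure N := Measure.map f (μ.restrict (K : Set P)) with hρ
  -- evaluation formula for ρ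
  have hρeval : ∀ S₀ : Set N, MeasurableSet S₀ →
      ρ S₀ = μ (e ⁻¹' ({(1 : H)} ×ˢ S₀)) := by
    intro S₀ hS₀
    rw [hρ, Measure.map_apply hfm hS₀, Measure.restrict_apply (hfm hS₀)]
    congr 1
    ext g
    simp only [Set.mem_inter_iff, Set.mem_preimage, Set.mem_prod, Set.mem_singleton_iff]
    exact ⟨fun ⟨h1, h2⟩ => ⟨h2, h1⟩, fun ⟨h1, h2⟩ => ⟨h2, h1⟩⟩
  -- ρ is left invariant
  haveI hρinv : ρ.IsMulLeftInvariant := by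
    constructor
    intro y
    set k := e.symm ((1 : H), y) with hk
    have hek : e k = ((1 : H), y) := e.apply_symm_apply _
    have hkK : k ∈ K := by
      show (e k).1 = 1
      rw [hek]
    have hpre : (fun p => k * p) ⁻¹' (K : Set P) = (K : Set P) := by
      ext p
      constructor
      · intro hp
        have := mul_mem (inv_mem hkK) (Set.mem_preimage.mp hp)
        simpa using this
      · intro hp
        exact mul_mem hkK hp
    have hmapK : Measure.map (fun p => k * p) (μ.restrict (K : Set P))
        = μ.restrict (K : Set P) := by
      conv_rhs => rw [← map_mul_left_eq_self μ k]
      rw [Measure.restrict_map (measurable_const_mul k) hKm, hpre]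
    rw [hρ, Measure.map_map (measurable_const_mul y) hfm]
    have h1 : ((fun n => y * n) ∘ f) =ᵐ[μ.restrict (K : Set P)] (f ∘ fun p => k * p) := by
      filter_upwards [ae_restrict_mem hKm] with p hp
      have : f (k * p) = f k * f p := hfmul k p hkK hp
      have hfk : f k = y := by rw [hf]; show (e k).2 = y; rw [hek]
      simp [Function.comp, this, hfk]
    rw [Measure.map_congr h1, ← Measure.map_map hfm (measurable_const_mul k), hmapK]
  -- ρ is finite on compacts
  haveI hρfin : IsFiniteMeasureOnCompacts ρ := by
    constructor
    intro S₀ hS₀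
    rw [hρeval S₀ hS₀.isClosed.measurableSet]
    exact (e.isCompact_preimage.mpr (isCompact_singleton.prod hS₀)).measure_lt_top
  -- the key claim
  have key : ∀ g : P, g ∈ K → ΔN (f g) = 1 → Δ g = 1 := by
    intro g hgK hgx
    set x := f g with hx
    obtain ⟨S⟩ := (inferInstance : Nonempty (TopologicalSpace.PositiveCompacts N))
    have hSm : MeasurableSet (S : Set N) := S.isCompact.isClosed.measurableSet
    set T : Set N := (fun n => n * x) ⁻¹' (S : Set N) with hT
    have hTm : MeasurableSet T := (measurable_mul_const x) hSm
    -- equation A : ρ T = (Δ g)⁻¹ * ρ S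
    have eqA : ρ T = ((Δ g)⁻¹ : ℝ≥0) * ρ (S : Set N) := by
      have hpre : (fun p => p * g) ⁻¹' (K : Set P) = (K : Set P) := by
        ext p
        constructor
        · intro hp
          have := mul_mem (Set.mem_preimage.mp hp) (inv_mem hgK)
          simpa using this
        · intro hp
          exact mul_mem hp hgK
      have h1 : Measure.map (fun p => p * g) (μ.restrict (K : Set P))
          = (((Δ g)⁻¹ : ℝ≥0) • μ).restrict (K : Set P) := by
        conv_rhs => rw [← hΔ g]
        rw [Measure.restrict_map (measurable_mul_const g) hKm, hpre]
      have h2 : Measure.map (fun n => n * x) ρ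
          = Measure.map f ((((Δ g)⁻¹ : ℝ≥0) • μ).restrict (K : Set P)) := by
        rw [hρ, Measure.map_map (measurable_mul_const x) hfm]
        have h3 : ((fun n => n * x) ∘ f) =ᵐ[μ.restrict (K : Set P)] (f ∘ fun p => p * g) := by
          filter_upwards [ae_restrict_mem hKm] with p hp
          have : f (p * g) = f p * x := hfmul p g hp hgK
          simp [Function.comp, this]
        rw [Measure.map_congr h3, ← Measure.map_map hfm (measurable_mul_const g), h1]
      have h4 := congrArg (fun m : Measure N => m (S : Set N)) h2
      rw [Measure.map_apply (measurable_mul_const x) hSm] at h4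
      rw [Measure.map_apply hfm hSm] at h4
      rw [Measure.restrict_apply (hfm hSm), Measure.smul_apply] at h4
      have h5 : ρ (S : Set N) = μ (f ⁻¹' (S : Set N) ∩ (K : Set P)) := by
        rw [hρ, Measure.map_apply hfm hSm, Measure.restrict_apply (hfm hSm)]
      rw [h4, h5, ENNReal.smul_def, smul_eq_mul]
    -- equation B : ρ T = ρ S
    have hclS : IsCompact (closure (S : Set N)) := by
      rw [S.isCompact.isClosed.closure_eq]
      exact S.isCompact
    have hTcompact : IsCompact T := by
      have : T = (fun n => n * x⁻¹) '' (S : Set N) := by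
        ext n
        simp only [hT, Set.mem_preimage, Set.mem_image]
        constructor
        · intro h
          exact ⟨n * x, h, by group⟩
        · rintro ⟨m, hm, rfl⟩
          simpa using hm
      rw [this]
      exact S.isCompact.image (continuous_mul_right x⁻¹)
    have hTclosed : IsClosed T := S.isCompact.isClosed.preimage (continuous_mul_right x)
    have hclT : IsCompact (closure T) := by
      rw [hTclosed.closure_eq]
      exact hTcompact
    have hνT : ν T = ν (S : Set N) := by
      have := congrArg (fun m : Measure N => m (S : Set N)) (hΔN x)
      rw [Measure.map_apply (measurable_mul_const x) hSm] at this
      rw [hgx, inv_one, one_smul] at this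
      exact this
    have eqB : ρ T = ρ (S : Set N) := by
      rw [Measure.measure_isMulInvariant_eq_smul_of_isCompact_closure ρ ν hclT,
        Measure.measure_isMulInvariant_eq_smul_of_isCompact_closure ρ ν hclS, hνT]
    -- positivity and finiteness of ρ S
    have hρSpos : 0 < ρ (S : Set N) := by
      rw [hρeval (S : Set N) hSm]
      obtain ⟨n, hn⟩ := S.interior_nonempty
      have hopen : IsOpen (e ⁻¹' ({(1 : H)} ×ˢ interior (S : Set N))) :=
        e.continuous.isOpen_preimage _ ((isOpen_discrete _).prod isOpen_interior)
      have hne : (e ⁻¹' ({(1 : H)} ×ˢ interior (S : Set N))).Nonempty :=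
        ⟨e.symm (1, n), by simp [e.apply_symm_apply, hn]⟩
      refine lt_of_lt_of_le (hopen.measure_pos μ hne) (measure_mono ?_)
      exact Set.preimage_mono (Set.prod_mono le_rfl interior_subset)
    have hρSfin : ρ (S : Set N) < ⊤ := S.isCompact.measure_lt_top
    have h := eqA.symm.trans eqB
    have h' : (((Δ g)⁻¹ : ℝ≥0) : ENNReal) * ρ (S : Set N) = 1 * ρ (S : Set N) := by
      rw [h, one_mul]
    have hcoe : (((Δ g)⁻¹ : ℝ≥0) : ENNReal) = 1 :=
      (ENNReal.mul_left_inj (ne_of_gt hρSpos) hρSfin.ne).mp h'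
    have : ((Δ g)⁻¹ : ℝ≥0) = 1 := by exact_mod_cast hcoe
    exact inv_eq_one.mp this
  -- conclude: an open neighborhood of 1 inside ker Δ
  apply Subgroup.isOpen_of_mem_nhds
  have hUopen : IsOpen (e ⁻¹' ({(1 : H)} ×ˢ (ΔN.ker : Set N))) :=
    e.continuous.isOpen_preimage _ ((isOpen_discrete _).prod hNau)
  have hUsub : e ⁻¹' ({(1 : H)} ×ˢ (ΔN.ker : Set N)) ⊆ (Δ.ker : Set P) := by
    intro g hg
    simp only [Set.mem_preimage, Set.mem_prod, Set.mem_singleton_iff, SetLike.mem_coe,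
      MonoidHom.mem_ker] at hg ⊢
    exact key g hg.1 hg.2
  have h1U : (1 : P) ∈ e ⁻¹' ({(1 : H)} ×ˢ (ΔN.ker : Set N)) := by
    simp only [Set.mem_preimage, he1, Set.mem_prod, Set.mem_singleton_iff, SetLike.mem_coe]
    exact ⟨trivial, one_mem _⟩
  exact Filter.mem_of_superset (hUopen.mem_nhds h1U) hUsub
end

section
/- Let G be an almost unimodular group and H ≤ G a closed subgroup of finite covolume (i.e., G/H admits a finite nonzero G-invariant Radon measure μ_{G/H}). Then: (a) Δ_G restricted to H equals Δ_H; (b) H is almost unimodular; (c) Δ_H(H) is a finite index subgroup of Δ_G(G). -/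
open MeasureTheory Set TopologicalSpace
open scoped NNReal ENNReal Pointwise
set_option linter.unusedSectionVars false
set_option linter.unusedVariables false

section Aux

variable {G : Type*} [Group G] [TopologicalSpace G] [IsTopologicalGroup G]
    [LocallyCompactSpace G] [T2Space G] [MeasurableSpace G] [BorelSpace G]

instance subgroupBorel (H : Subgroup G) : BorelSpace ↥H := Subtype.borelSpace (H : Set G)

/-- An invariant nonzero regular measure on the quotient is positive on nonempty open sets. -/
theorem aux_open_pos (H : Subgroup G) [MeasurableSpace (G ⧸ H)] [BorelSpace (G ⧸ H)]
    (μq : Measure (G ⧸ H)) (hμq_ne : μq ≠ 0) [IsFiniteMeasure μq] [μq.Regular]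
    (hμq_inv : ∀ g : G, Measure.map (fun x : G ⧸ H => g • x) μq = μq)
    {U : Set (G ⧸ H)} (hU : IsOpen U) (hne : U.Nonempty) : 0 < μq U := by
  obtain ⟨x₀, hx₀⟩ := hne
  have huniv : 0 < μq univ := by
    rw [pos_iff_ne_zero]
    simpa [Measure.measure_univ_eq_zero] using hμq_ne
  obtain ⟨K, _, hKc, hK⟩ :=
    (Measure.Regular.innerRegular (μ := μq)) isOpen_univ 0 huniv
  have hmeas : ∀ g : G, μq ((fun x : G ⧸ H => g • x) ⁻¹' U) = μq U := by
    intro g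
    rw [← Measure.map_apply ((continuous_const_smul g).measurable) hU.measurableSet, hμq_inv g]
  have hcover : (K : Set (G ⧸ H)) ⊆ ⋃ g : G, (fun x : G ⧸ H => g • x) ⁻¹' U := by
    intro y _
    obtain ⟨b, rfl⟩ := QuotientGroup.mk_surjective y
    obtain ⟨a, rfl⟩ := QuotientGroup.mk_surjective x₀
    refine mem_iUnion.2 ⟨a * b⁻¹, ?_⟩
    have : (a * b⁻¹) • (QuotientGroup.mk b : G ⧸ H) = QuotientGroup.mk a := by
      rw [MulAction.Quotient.smul_mk, smul_eq_mul]
      congr 1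
      group
    simpa [this] using hx₀
  obtain ⟨s, hs⟩ := hKc.elim_finite_subcover _
    (fun g : G => hU.preimage (continuous_const_smul g)) hcover
  rcases eq_or_lt_of_le (zero_le : (0 : ℝ≥0∞) ≤ μq U) with h0 | h
  · exfalso
    have : μq K ≤ ∑ g ∈ s, μq ((fun x : G ⧸ H => g • x) ⁻¹' U) :=
      le_trans (measure_mono hs) (measure_biUnion_finset_le s _)
    rw [Finset.sum_congr rfl (fun g _ => (hmeas g).trans h0.symm)] at this
    simp at this
    exact absurd this (by simpa using hK.ne')
  · exact h

variable (H : Subgroup G) (ν : Measure H)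

/-- The fiber thickness function: measure in `H` of the fiber of `S` over `g`. -/
noncomputable def fib (S : Set G) (g : G) : ℝ≥0∞ := ν {h : H | g * ↑h ∈ S}

theorem fib_right [ν.IsMulLeftInvariant] (S : Set G) (g : G) (t : H) :
    fib H ν S (g * ↑t) = fib H ν S g := by
  have hset : {h : H | (g * ↑t) * ↑h ∈ S} = (fun h : H => t * h) ⁻¹' {h : H | g * ↑h ∈ S} := by
    ext h
    simp [mul_assoc]
  rw [fib, fib, hset, measure_preimage_mul]

/-- Descent of `fib` to the quotient. -/
noncomputable def Fq [ν.IsMulLeftInvariant] (S : Set G) : G ⧸ H → ℝ≥0∞ :=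
  fun x => Quotient.liftOn' x (fib H ν S) (by
    intro a b hab
    have h' : a⁻¹ * b ∈ H := QuotientGroup.leftRel_apply.mp hab
    have hb : b = a * ((⟨a⁻¹ * b, h'⟩ : H) : G) := by simp
    rw [hb, fib_right])

theorem Fq_mk [ν.IsMulLeftInvariant] (S : Set G) (g : G) :
    Fq H ν S (QuotientGroup.mk g) = fib H ν S g := rfl

theorem fib_mono [ν.IsMulLeftInvariant] {S T : Set G} (hST : S ⊆ T) (g : G) :
    fib H ν S g ≤ fib H ν T g :=
  measure_mono fun h hh => hST hh

theorem fib_le_bound [ν.IsMulLeftInvariant] {K : Set G} (g : G) :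
    fib H ν K g ≤ ν (Subtype.val ⁻¹' (K⁻¹ * K)) := by
  rcases eq_empty_or_nonempty {h : H | g * ↑h ∈ K} with he | ⟨h₀, hh₀⟩
  · rw [fib, he, measure_empty]; exact zero_le
  · have hsub : {h : H | g * ↑h ∈ K} ⊆ (fun h : H => h₀ * h) '' (Subtype.val ⁻¹' (K⁻¹ * K)) := by
      intro h hh
      refine ⟨h₀⁻¹ * h, ?_, by simp⟩
      have : (↑(h₀⁻¹ * h) : G) = (g * ↑h₀)⁻¹ * (g * ↑h) := by
        push_cast
        group
      simp only [mem_preimage, this]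
      exact Set.mul_mem_mul (Set.inv_mem_inv.mpr hh₀) hh
    calc fib H ν K g ≤ ν ((fun h : H => h₀ * h) '' (Subtype.val ⁻¹' (K⁻¹ * K))) :=
          measure_mono hsub
      _ = ν ((fun h : H => h₀⁻¹ * h) ⁻¹' (Subtype.val ⁻¹' (K⁻¹ * K))) := by
          rw [Set.image_mul_left]
      _ = ν (Subtype.val ⁻¹' (K⁻¹ * K)) := measure_preimage_mul ν _ _


theorem fib_set_eq (S : Set G) (g : G) :
    {h : H | g * ↑h ∈ S} = Subtype.val ⁻¹' ((fun x => g * x) ⁻¹' S) := rfl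

theorem fib_compact_fiber (hHclosed : IsClosed (H : Set G)) {K : Set G} (hK : IsCompact K)
    (g : G) : IsCompact {h : H | g * ↑h ∈ K} := by
  rw [fib_set_eq]
  exact hHclosed.isClosedEmbedding_subtypeVal.isCompact_preimage
    ((Homeomorph.mulLeft g).isCompact_preimage.mpr hK)

theorem fib_usc [ν.IsHaarMeasure] [ν.Regular] (hHclosed : IsClosed (H : Set G))
    {K : Set G} (hK : IsCompact K) {a : ℝ≥0∞} {g₀ : G} (hlt : fib H ν K g₀ < a) :
    ∃ N : Set G, IsOpen N ∧ g₀ ∈ N ∧ ∀ g ∈ N, fib H ν K g < a := by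
  obtain ⟨O, hO_sup, hO_open, hO_lt⟩ :=
    Set.exists_isOpen_lt_of_lt {h : H | g₀ * ↑h ∈ K} a hlt
  obtain ⟨V, hV_open, hV_eq⟩ := isOpen_induced_iff.mp hO_open
  set C : Set G := (H : Set G) ∩ Vᶜ with hC_def
  have hC_closed : IsClosed C := hHclosed.inter hV_open.isClosed_compl
  refine ⟨{g : G | ∀ k ∈ K, g⁻¹ * k ∈ Cᶜ}, ?_, ?_, ?_⟩
  · rw [isOpen_iff_mem_nhds]
    intro g₁ hg₁
    have hW : IsOpen ((fun p : G × G => p.1⁻¹ * p.2) ⁻¹' Cᶜ) :=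
      hC_closed.isOpen_compl.preimage (by fun_prop)
    have hsub : ({g₁} : Set G) ×ˢ K ⊆ (fun p : G × G => p.1⁻¹ * p.2) ⁻¹' Cᶜ := by
      rintro ⟨x, y⟩ ⟨hx, hy⟩
      simp only [mem_singleton_iff] at hx
      subst hx
      exact hg₁ y hy
    obtain ⟨u, v, hu, hv, hg₁u, hKv, huv⟩ :=
      generalized_tube_lemma isCompact_singleton hK hW hsub
    refine mem_nhds_iff.mpr ⟨u, ?_, hu, hg₁u rfl⟩
    intro g hg k hk
    exact huv (show (g, k) ∈ u ×ˢ v from ⟨hg, hKv hk⟩)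
  · intro k hk hmem
    have h' : (⟨g₀⁻¹ * k, hmem.1⟩ : H) ∈ {h : H | g₀ * ↑h ∈ K} := by
      simp only [mem_setOf_eq]
      simpa [mul_assoc] using hk
    have : (g₀⁻¹ * k) ∈ V := by
      have := hO_sup h'
      rw [← hV_eq] at this
      exact this
    exact hmem.2 this
  · intro g hg
    refine lt_of_le_of_lt (measure_mono ?_) hO_lt
    intro h hh
    have hnC : (↑h : G) ∈ Cᶜ := by simpa [mul_assoc] using hg (g * ↑h) hh
    have hhH : (↑h : G) ∈ (H : Set G) := h.2
    have hV : (↑h : G) ∈ V := by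
      by_contra hcon
      exact hnC ⟨hhH, hcon⟩
    rw [← hV_eq]
    exact hV

theorem Fq_sublevel_open [ν.IsHaarMeasure] [ν.Regular] (hHclosed : IsClosed (H : Set G))
    {K : Set G} (hK : IsCompact K) (a : ℝ≥0∞) :
    IsOpen {x : G ⧸ H | Fq H ν K x < a} := by
  have h1 : IsOpen {g : G | fib H ν K g < a} := by
    rw [isOpen_iff_mem_nhds]
    intro g₀ hg₀
    obtain ⟨N, hN_open, hg₀N, hN⟩ := fib_usc H ν hHclosed hK hg₀
    exact mem_nhds_iff.mpr ⟨N, fun g hg => hN g hg, hN_open, hg₀N⟩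
  have h2 : {x : G ⧸ H | Fq H ν K x < a} = QuotientGroup.mk '' {g : G | fib H ν K g < a} := by
    ext x
    constructor
    · intro hx
      induction x using QuotientGroup.induction_on with
      | H g => exact ⟨g, hx, rfl⟩
    · rintro ⟨g, hg, rfl⟩
      exact hg
  rw [h2]
  exact QuotientGroup.isOpenMap_coe _ h1

theorem Fq_measurable [ν.IsHaarMeasure] [ν.Regular] (hHclosed : IsClosed (H : Set G))
    [MeasurableSpace (G ⧸ H)] [BorelSpace (G ⧸ H)]
    {K : Set G} (hK : IsCompact K) : Measurable (Fq H ν K) :=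
  measurable_of_Iio fun a => (Fq_sublevel_open H ν hHclosed hK a).measurableSet

theorem Fq_le_bound [ν.IsMulLeftInvariant] {K : Set G} (x : G ⧸ H) :
    Fq H ν K x ≤ ν (Subtype.val ⁻¹' (K⁻¹ * K)) := by
  induction x using QuotientGroup.induction_on with
  | H g => exact fib_le_bound H ν g

theorem Fq_lintegral_lt_top [ν.IsHaarMeasure] (hHclosed : IsClosed (H : Set G))
    [MeasurableSpace (G ⧸ H)] (μq : Measure (G ⧸ H)) [IsFiniteMeasure μq]
    {K : Set G} (hK : IsCompact K) :
    ∫⁻ x, Fq H ν K x ∂μq < ∞ := by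
  have hBc : IsCompact (Subtype.val ⁻¹' (K⁻¹ * K) : Set H) :=
    hHclosed.isClosedEmbedding_subtypeVal.isCompact_preimage (hK.inv.mul hK)
  calc ∫⁻ x, Fq H ν K x ∂μq ≤ ∫⁻ _, ν (Subtype.val ⁻¹' (K⁻¹ * K)) ∂μq :=
        lintegral_mono fun x => Fq_le_bound H ν x
    _ = ν (Subtype.val ⁻¹' (K⁻¹ * K)) * μq univ := lintegral_const _
    _ < ∞ := ENNReal.mul_lt_top hBc.measure_lt_top (measure_lt_top μq univ)


variable [MeasurableSpace (G ⧸ H)] [BorelSpace (G ⧸ H)]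

/-- The content obtained by integrating fiber measures against the quotient measure. -/
noncomputable def covCon (hHclosed : IsClosed (H : Set G)) [ν.IsHaarMeasure] [ν.Regular]
    (μq : Measure (G ⧸ H)) [IsFiniteMeasure μq] : Content G where
  toFun K := (∫⁻ x, Fq H ν (↑K) x ∂μq).toNNReal
  mono' K₁ K₂ h := by
    apply ENNReal.toNNReal_mono (Fq_lintegral_lt_top H ν hHclosed μq K₂.2).ne
    refine lintegral_mono fun x => ?_
    induction x using QuotientGroup.induction_on with
    | H g => exact fib_mono H ν h g
  sup_disjoint' K₁ K₂ hdis h₁ h₂ := by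
    have hadd : ∀ x, Fq H ν (↑(K₁ ⊔ K₂)) x = Fq H ν (↑K₁) x + Fq H ν (↑K₂) x := by
      intro x
      induction x using QuotientGroup.induction_on with
      | H g =>
        rw [Fq_mk, Fq_mk, Fq_mk]
        have hset : {h : H | g * ↑h ∈ (↑(K₁ ⊔ K₂) : Set G)} =
            {h : H | g * ↑h ∈ (↑K₁ : Set G)} ∪ {h : H | g * ↑h ∈ (↑K₂ : Set G)} := by
          ext h
          simp only [Compacts.coe_sup, mem_union, mem_setOf_eq]
        rw [fib, fib, fib, hset]
        refine measure_union ?_ ?_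
        · exact (hdis.preimage fun h : H => g * ↑h)
        · exact ((h₂.preimage (continuous_const.mul continuous_subtype_val)).measurableSet)
    have hint : ∫⁻ x, Fq H ν (↑(K₁ ⊔ K₂)) x ∂μq
        = (∫⁻ x, Fq H ν (↑K₁) x ∂μq) + ∫⁻ x, Fq H ν (↑K₂) x ∂μq := by
      rw [lintegral_congr hadd,
        lintegral_add_left (Fq_measurable H ν hHclosed (K := (K₁ : Set G)) K₁.2)]
    show (∫⁻ x, Fq H ν (↑(K₁ ⊔ K₂)) x ∂μq).toNNReal
        = (∫⁻ x, Fq H ν (↑K₁) x ∂μq).toNNReal + (∫⁻ x, Fq H ν (↑K₂) x ∂μq).toNNReal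
    rw [hint, ENNReal.toNNReal_add
      (Fq_lintegral_lt_top H ν hHclosed μq (K := (K₁ : Set G)) K₁.2).ne
      (Fq_lintegral_lt_top H ν hHclosed μq (K := (K₂ : Set G)) K₂.2).ne]
  sup_le' K₁ K₂ := by
    have hle : ∀ x, Fq H ν (↑(K₁ ⊔ K₂)) x ≤ Fq H ν (↑K₁) x + Fq H ν (↑K₂) x := by
      intro x
      induction x using QuotientGroup.induction_on with
      | H g =>
        rw [Fq_mk, Fq_mk, Fq_mk]
        have hset : {h : H | g * ↑h ∈ (↑(K₁ ⊔ K₂) : Set G)} =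
            {h : H | g * ↑h ∈ (↑K₁ : Set G)} ∪ {h : H | g * ↑h ∈ (↑K₂ : Set G)} := by
          ext h
          simp only [Compacts.coe_sup, mem_union, mem_setOf_eq]
        rw [fib, fib, fib, hset]
        exact measure_union_le _ _
    have hint : ∫⁻ x, Fq H ν (↑(K₁ ⊔ K₂)) x ∂μq
        ≤ (∫⁻ x, Fq H ν (↑K₁) x ∂μq) + ∫⁻ x, Fq H ν (↑K₂) x ∂μq := by
      refine le_trans (lintegral_mono hle) ?_
      rw [lintegral_add_left (Fq_measurable H ν hHclosed (K := (K₁ : Set G)) K₁.2)]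
    show (∫⁻ x, Fq H ν (↑(K₁ ⊔ K₂)) x ∂μq).toNNReal
        ≤ (∫⁻ x, Fq H ν (↑K₁) x ∂μq).toNNReal + (∫⁻ x, Fq H ν (↑K₂) x ∂μq).toNNReal
    refine le_trans (ENNReal.toNNReal_mono ?_ hint) ?_
    · exact (ENNReal.add_ne_top.mpr ⟨(Fq_lintegral_lt_top H ν hHclosed μq K₁.2).ne,
        (Fq_lintegral_lt_top H ν hHclosed μq K₂.2).ne⟩)
    · rw [ENNReal.toNNReal_add
        (Fq_lintegral_lt_top H ν hHclosed μq (K := (K₁ : Set G)) K₁.2).ne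
        (Fq_lintegral_lt_top H ν hHclosed μq (K := (K₂ : Set G)) K₂.2).ne]

theorem covCon_apply (hHclosed : IsClosed (H : Set G)) [ν.IsHaarMeasure] [ν.Regular]
    (μq : Measure (G ⧸ H)) [IsFiniteMeasure μq] (K : Compacts G) :
    (covCon H ν hHclosed μq K : ℝ≥0∞) = ∫⁻ x, Fq H ν (↑K) x ∂μq :=
  ENNReal.coe_toNNReal (Fq_lintegral_lt_top H ν hHclosed μq K.2).ne

theorem covCon_map_left (hHclosed : IsClosed (H : Set G)) [ν.IsHaarMeasure] [ν.Regular]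
    (μq : Measure (G ⧸ H)) [IsFiniteMeasure μq]
    (hμq_inv : ∀ g : G, Measure.map (fun x : G ⧸ H => g • x) μq = μq)
    (g₀ : G) (K : Compacts G) :
    (covCon H ν hHclosed μq (K.map _ (continuous_mul_left g₀)) : ℝ≥0∞)
      = covCon H ν hHclosed μq K := by
  rw [covCon_apply, covCon_apply]
  have hFq : ∀ x, Fq H ν (↑(K.map _ (continuous_mul_left g₀))) x = Fq H ν (↑K) (g₀⁻¹ • x) := by
    intro x
    induction x using QuotientGroup.induction_on with
    | H g =>
      have hsmul : g₀⁻¹ • (QuotientGroup.mk g : G ⧸ H) = QuotientGroup.mk (g₀⁻¹ * g) := by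
        rw [MulAction.Quotient.smul_mk, smul_eq_mul]
      rw [Fq_mk, hsmul, Fq_mk]
      unfold fib
      congr 1
      ext h
      simp only [Compacts.coe_map, mem_setOf_eq, Set.image_mul_left, mem_preimage, mul_assoc]
  rw [lintegral_congr hFq]
  conv_rhs => rw [← hμq_inv g₀⁻¹]
  rw [lintegral_map (Fq_measurable H ν hHclosed (K := (K : Set G)) K.2)
    ((continuous_const_smul _).measurable)]


theorem covCon_map_right (hHclosed : IsClosed (H : Set G)) [ν.IsHaarMeasure] [ν.Regular]
    (μq : Measure (G ⧸ H)) [IsFiniteMeasure μq]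
    (ΔH : H →* ℝ≥0) (hΔHpos : ∀ t, 0 < ΔH t)
    (hΔH : ∀ t : H, Measure.map (· * t) ν = (ΔH t)⁻¹ • ν)
    (t : H) (K : Compacts G) :
    (covCon H ν hHclosed μq (K.map _ (continuous_mul_right (↑t : G))) : ℝ≥0∞)
      = (ΔH t : ℝ≥0∞) * covCon H ν hHclosed μq K := by
  rw [covCon_apply, covCon_apply]
  have hFq : ∀ x, Fq H ν (↑(K.map _ (continuous_mul_right (↑t : G)))) x
      = (ΔH t : ℝ≥0∞) * Fq H ν (↑K) x := by
    intro x
    induction x using QuotientGroup.induction_on with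
    | H g =>
      rw [Fq_mk, Fq_mk]
      have hSmeas : MeasurableSet {h : H | g * ↑h ∈ (↑K : Set G)} :=
        ((K.2.isClosed.preimage (continuous_const.mul continuous_subtype_val)).measurableSet)
      have hset : {h : H | g * ↑h ∈ (↑(K.map _ (continuous_mul_right (↑t : G))) : Set G)}
          = (fun h : H => h * t⁻¹) ⁻¹' {h : H | g * ↑h ∈ (↑K : Set G)} := by
        ext h
        simp only [Compacts.coe_map, mem_setOf_eq, Set.image_mul_right, mem_preimage,
          Submonoid.coe_mul, Subgroup.coe_mul, InvMemClass.coe_inv, mul_assoc]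
      rw [fib, fib, hset]
      have hmap := congrArg (fun m : Measure H => m {h : H | g * ↑h ∈ (↑K : Set G)}) (hΔH t⁻¹)
      rw [Measure.map_apply (measurable_mul_const t⁻¹) hSmeas] at hmap
      rw [hmap, Measure.smul_apply, ENNReal.smul_def, smul_eq_mul]
      have hinv : (ΔH t⁻¹)⁻¹ = ΔH t := by
        rw [inv_eq_iff_eq_inv]
        exact eq_inv_of_mul_eq_one_left (by rw [← map_mul, inv_mul_cancel, map_one])
      rw [hinv]
  rw [lintegral_congr hFq,
    lintegral_const_mul _ (Fq_measurable H ν hHclosed (K := (K : Set G)) K.2)]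

theorem covCon_pos (hHclosed : IsClosed (H : Set G)) [ν.IsHaarMeasure] [ν.Regular]
    (μq : Measure (G ⧸ H)) (hμq_ne : μq ≠ 0) [IsFiniteMeasure μq] [μq.Regular]
    (hμq_inv : ∀ g : G, Measure.map (fun x : G ⧸ H => g • x) μq = μq)
    {K : Set G} (hKc : IsCompact K) (h1 : (1 : G) ∈ interior K) :
    (covCon H ν hHclosed μq ⟨K, hKc⟩ : ℝ≥0∞) ≠ 0 := by
  rw [covCon_apply]
  intro hzero0
  have hzero : ∫⁻ x, Fq H ν K x ∂μq = 0 := hzero0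
  rw [lintegral_eq_zero_iff (Fq_measurable H ν hHclosed (K := K) hKc)] at hzero
  have hnull : μq {x : G ⧸ H | Fq H ν K x ≠ 0} = 0 := by
    have := hzero
    rw [Filter.EventuallyEq, ae_iff] at this
    simpa using this
  have hsub : QuotientGroup.mk '' (interior K) ⊆ {x : G ⧸ H | Fq H ν K x ≠ 0} := by
    rintro x ⟨g, hg, rfl⟩
    have hopen : IsOpen {h : H | g * ↑h ∈ interior K} :=
      isOpen_interior.preimage (continuous_const.mul continuous_subtype_val)
    have hne : {h : H | g * ↑h ∈ interior K}.Nonempty := ⟨1, by simpa using hg⟩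
    have hpos : 0 < ν {h : H | g * ↑h ∈ interior K} := hopen.measure_pos ν hne
    have : 0 < fib H ν K g :=
      lt_of_lt_of_le hpos (measure_mono (by intro h hh; exact interior_subset (s := K) hh))
    simpa [Fq_mk] using this.ne'
  have hKopen : IsOpen (QuotientGroup.mk '' (interior K) : Set (G ⧸ H)) :=
    QuotientGroup.isOpenMap_coe _ isOpen_interior
  have hpos := aux_open_pos H μq hμq_ne hμq_inv hKopen ⟨QuotientGroup.mk 1, 1, h1, rfl⟩
  have hle : μq (QuotientGroup.mk '' (interior K)) ≤ μq {x : G ⧸ H | Fq H ν K x ≠ 0} :=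
    measure_mono hsub
  rw [hnull] at hle
  exact hpos.ne' (le_antisymm hle zero_le)


theorem covCon_innerContent_le (hHclosed : IsClosed (H : Set G)) [ν.IsHaarMeasure] [ν.Regular]
    (μq : Measure (G ⧸ H)) [IsFiniteMeasure μq]
    (ΔH : H →* ℝ≥0) (hΔHpos : ∀ t, 0 < ΔH t)
    (hΔH : ∀ t : H, Measure.map (· * t) ν = (ΔH t)⁻¹ • ν)
    (t : H) {U : Set G} (hU : IsOpen U) :
    (covCon H ν hHclosed μq).innerContent
        ⟨(fun g => g * (↑t : G)) ⁻¹' U, hU.preimage (continuous_mul_right _)⟩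
      ≤ (ΔH t : ℝ≥0∞)⁻¹ * (covCon H ν hHclosed μq).innerContent ⟨U, hU⟩ := by
  have ht0 : (ΔH t : ℝ≥0∞) ≠ 0 := by exact_mod_cast (hΔHpos t).ne'
  have htt : (ΔH t : ℝ≥0∞) ≠ ∞ := ENNReal.coe_ne_top
  refine iSup₂_le fun K hK => ?_
  have himg : (↑(K.map _ (continuous_mul_right (↑t : G))) : Set G) ⊆ U := by
    rw [Compacts.coe_map]
    rintro x ⟨k, hk, rfl⟩
    exact hK hk
  have hval : (covCon H ν hHclosed μq K : ℝ≥0∞)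
      = (ΔH t : ℝ≥0∞)⁻¹ * covCon H ν hHclosed μq (K.map _ (continuous_mul_right (↑t : G))) := by
    rw [covCon_map_right H ν hHclosed μq ΔH hΔHpos hΔH t K, ← mul_assoc,
      ENNReal.inv_mul_cancel ht0 htt, one_mul]
  rw [hval]
  exact mul_le_mul_right ((covCon H ν hHclosed μq).le_innerContent _ _ himg) _

theorem covCon_measure_right (hHclosed : IsClosed (H : Set G)) [ν.IsHaarMeasure] [ν.Regular]
    (μq : Measure (G ⧸ H)) [IsFiniteMeasure μq]
    (ΔH : H →* ℝ≥0) (hΔHpos : ∀ t, 0 < ΔH t)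
    (hΔH : ∀ t : H, Measure.map (· * t) ν = (ΔH t)⁻¹ • ν)
    (t : H) {U : Set G} (hU : IsOpen U) :
    (covCon H ν hHclosed μq).measure ((fun g => g * (↑t : G)) ⁻¹' U)
      = (ΔH t : ℝ≥0∞)⁻¹ * (covCon H ν hHclosed μq).measure U := by
  have ht0 : (ΔH t : ℝ≥0∞) ≠ 0 := by exact_mod_cast (hΔHpos t).ne'
  have htt : (ΔH t : ℝ≥0∞) ≠ ∞ := ENNReal.coe_ne_top
  have hpre : IsOpen ((fun g => g * (↑t : G)) ⁻¹' U) := hU.preimage (continuous_mul_right _)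
  rw [Content.measure_apply _ hpre.measurableSet, Content.measure_apply _ hU.measurableSet,
    (covCon H ν hHclosed μq).outerMeasure_of_isOpen _ hpre,
    (covCon H ν hHclosed μq).outerMeasure_of_isOpen _ hU]
  refine le_antisymm (covCon_innerContent_le H ν hHclosed μq ΔH hΔHpos hΔH t hU) ?_
  have h2 := covCon_innerContent_le H ν hHclosed μq ΔH hΔHpos hΔH t⁻¹ hpre
  have hsets : (fun g => g * (↑(t⁻¹) : G)) ⁻¹' ((fun g => g * (↑t : G)) ⁻¹' U) = U := by
    ext x
    simp [mul_assoc]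
  have hOpens : (⟨(fun g => g * (↑(t⁻¹) : G)) ⁻¹' ((fun g => g * (↑t : G)) ⁻¹' U),
      hpre.preimage (continuous_mul_right _)⟩ : Opens G) = ⟨U, hU⟩ :=
    Opens.ext hsets
  rw [hOpens] at h2
  have hinv : ((ΔH t⁻¹ : ℝ≥0) : ℝ≥0∞)⁻¹ = (ΔH t : ℝ≥0∞) := by
    have : (ΔH t⁻¹)⁻¹ = ΔH t := by
      rw [inv_eq_iff_eq_inv]
      exact eq_inv_of_mul_eq_one_left (by rw [← map_mul, inv_mul_cancel, map_one])
    rw [← this, ENNReal.coe_inv (hΔHpos t⁻¹).ne']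
  rw [hinv] at h2
  calc (ΔH t : ℝ≥0∞)⁻¹ * (covCon H ν hHclosed μq).innerContent ⟨U, hU⟩
      ≤ (ΔH t : ℝ≥0∞)⁻¹ * ((ΔH t : ℝ≥0∞) * (covCon H ν hHclosed μq).innerContent
        ⟨(fun g => g * (↑t : G)) ⁻¹' U, hpre⟩) := mul_le_mul_right h2 _
    _ = _ := by rw [← mul_assoc, ENNReal.inv_mul_cancel ht0 htt, one_mul]

end Aux

open scoped Pointwise

/-- Let `G` be almost unimodular and `H ≤ G` a closed subgroup of finite
covolume: the coset space `G/H` carries a finite nonzero `G`-invariant Radon measure.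
Then (a) `Δ_G` restricted to `H` equals `Δ_H`; (b) `H` is almost unimodular; and
(c) `Δ_H(H)` has finite index in `Δ_G(G)`: finitely many cosets `d · Δ_H(H)` with
`d ∈ Δ_G(G)` cover `Δ_G(G)`. -/
theorem finite_covolume_subgroup_properties
    {G : Type*} [Group G] [TopologicalSpace G] [IsTopologicalGroup G]
    [LocallyCompactSpace G] [T2Space G] [MeasurableSpace G] [BorelSpace G]
    (μ : Measure G) [μ.IsHaarMeasure] [μ.Regular]
    (Δ : G →* ℝ≥0) (hΔc : Continuous Δ) (hΔpos : ∀ s, 0 < Δ s)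
    (hΔ : ∀ s : G, Measure.map (· * s) μ = (Δ s)⁻¹ • μ)
    (hGau : IsOpen (Δ.ker : Set G))
    (H : Subgroup G) (hHclosed : IsClosed (H : Set G))
    (ν : Measure H) [ν.IsHaarMeasure] [ν.Regular]
    (ΔH : H →* ℝ≥0) (hΔHc : Continuous ΔH) (hΔHpos : ∀ t, 0 < ΔH t)
    (hΔH : ∀ t : H, Measure.map (· * t) ν = (ΔH t)⁻¹ • ν)
    [MeasurableSpace (G ⧸ H)] [BorelSpace (G ⧸ H)]
    (μq : Measure (G ⧸ H)) (hμq_ne : μq ≠ 0) [IsFiniteMeasure μq] [μq.Regular]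
    (hμq_inv : ∀ g : G, Measure.map (fun x : G ⧸ H => g • x) μq = μq) :
    (∀ t : H, Δ (t : G) = ΔH t) ∧
    IsOpen (ΔH.ker : Set H) ∧
    (∃ D : Finset ℝ≥0, (D : Set ℝ≥0) ⊆ Set.range Δ ∧
      ∀ x ∈ Set.range Δ, ∃ d ∈ D, ∃ t : H, x = d * ΔH t) := by
  classical
  -- the auxiliary Haar measure built from `ν` and `μq`
  set μ' : Measure G := (covCon H ν hHclosed μq).measure with hμ'def
  obtain ⟨K₀, hK₀c, hK₀n⟩ := exists_compact_mem_nhds (1 : G)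
  have h1K₀ : (1 : G) ∈ interior K₀ := mem_interior_iff_mem_nhds.mpr hK₀n
  have hccpos : (covCon H ν hHclosed μq ⟨K₀, hK₀c⟩ : ℝ≥0∞) ≠ 0 :=
    covCon_pos H ν hHclosed μq hμq_ne hμq_inv hK₀c h1K₀
  have hinv_content : ∀ (g : G) {K : Compacts G},
      (covCon H ν hHclosed μq (K.map _ (continuous_mul_left g)) : ℝ≥0∞)
        = covCon H ν hHclosed μq K :=
    fun g {K} => covCon_map_left H ν hHclosed μq hμq_inv g K
  haveI hμ'reg : μ'.Regular := Content.regular _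
  haveI hμ'li : μ'.IsMulLeftInvariant := by
    constructor
    intro g
    ext s hs
    rw [Measure.map_apply (measurable_const_mul g) hs,
      Content.measure_apply _ (hs.preimage (measurable_const_mul g)),
      Content.measure_apply _ hs,
      (covCon H ν hHclosed μq).is_mul_left_invariant_outerMeasure
        (fun g' {K} => hinv_content g') g s]
  haveI hμ'pos : μ'.IsOpenPosMeasure := by
    constructor
    intro U hU hne
    have := (covCon H ν hHclosed μq).outerMeasure_pos_of_is_mul_left_invariant
      (fun g' {K} => hinv_content g') ⟨K₀, hK₀c⟩ hccpos hU hne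
    rw [Content.measure_apply _ hU.measurableSet]
    exact this.ne'
  haveI hμ'haar : μ'.IsHaarMeasure := {}
  -- part (a)
  set U₀ : Set G := interior K₀ with hU₀def
  have hU₀open : IsOpen U₀ := isOpen_interior
  have hU₀ne : U₀.Nonempty := ⟨1, h1K₀⟩
  have hμU₀pos : 0 < μ U₀ := hU₀open.measure_pos μ hU₀ne
  have hμU₀fin : μ U₀ < ∞ :=
    lt_of_le_of_lt (measure_mono interior_subset) hK₀c.measure_lt_top
  set c : ℝ≥0 := Measure.haarScalarFactor μ' μ with hcdef
  have hc0 : (c : ℝ≥0∞) ≠ 0 := by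
    exact_mod_cast (Measure.haarScalarFactor_pos_of_isHaarMeasure μ' μ).ne'
  have hct : (c : ℝ≥0∞) ≠ ∞ := ENNReal.coe_ne_top
  have part_a : ∀ t : H, Δ (t : G) = ΔH t := by
    intro t
    set V : Set G := (fun g => g * (↑t : G)) ⁻¹' U₀ with hVdef
    have hVopen : IsOpen V := hU₀open.preimage (continuous_mul_right _)
    have e1 : μ' V = (ΔH t : ℝ≥0∞)⁻¹ * μ' U₀ :=
      covCon_measure_right H ν hHclosed μq ΔH hΔHpos hΔH t hU₀open
    have e2 : μ V = (Δ (↑t : G) : ℝ≥0∞)⁻¹ * μ U₀ := by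
      have h0 := congrArg (fun m : Measure G => m U₀) (hΔ (↑t : G))
      rw [Measure.map_apply (measurable_mul_const _) hU₀open.measurableSet] at h0
      rw [Measure.smul_apply, ENNReal.smul_def, smul_eq_mul,
        ENNReal.coe_inv (hΔpos _).ne'] at h0
      exact h0
    have e3 : μ' U₀ = (c : ℝ≥0∞) * μ U₀ := by
      have := Measure.measure_isHaarMeasure_eq_smul_of_isOpen μ' μ hU₀open
      rwa [ENNReal.smul_def, smul_eq_mul] at this
    have e4 : μ' V = (c : ℝ≥0∞) * μ V := by
      have := Measure.measure_isHaarMeasure_eq_smul_of_isOpen μ' μ hVopen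
      rwa [ENNReal.smul_def, smul_eq_mul] at this
    have key : (Δ (↑t : G) : ℝ≥0∞)⁻¹ * ((c : ℝ≥0∞) * μ U₀)
        = (ΔH t : ℝ≥0∞)⁻¹ * ((c : ℝ≥0∞) * μ U₀) := by
      calc (Δ (↑t : G) : ℝ≥0∞)⁻¹ * ((c : ℝ≥0∞) * μ U₀)
          = (c : ℝ≥0∞) * ((Δ (↑t : G) : ℝ≥0∞)⁻¹ * μ U₀) := by ring
        _ = (c : ℝ≥0∞) * μ V := by rw [e2]
        _ = μ' V := e4.symm
        _ = (ΔH t : ℝ≥0∞)⁻¹ * μ' U₀ := e1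
        _ = (ΔH t : ℝ≥0∞)⁻¹ * ((c : ℝ≥0∞) * μ U₀) := by rw [e3]
    have hY0 : (c : ℝ≥0∞) * μ U₀ ≠ 0 := by
      exact mul_ne_zero hc0 hμU₀pos.ne'
    have hYt : (c : ℝ≥0∞) * μ U₀ ≠ ∞ := ENNReal.mul_ne_top hct hμU₀fin.ne
    have hinv_eq : (Δ (↑t : G) : ℝ≥0∞)⁻¹ = (ΔH t : ℝ≥0∞)⁻¹ :=
      (ENNReal.mul_left_inj hY0 hYt).mp key
    have : (Δ (↑t : G) : ℝ≥0∞) = (ΔH t : ℝ≥0∞) := by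
      rw [← inv_inv (Δ (↑t : G) : ℝ≥0∞), hinv_eq, inv_inv]
    exact_mod_cast this
  refine ⟨part_a, ?_, ?_⟩
  · -- part (b)
    have hker : (ΔH.ker : Set H) = Subtype.val ⁻¹' (Δ.ker : Set G) := by
      ext tt
      simp only [SetLike.mem_coe, MonoidHom.mem_ker, mem_preimage, part_a tt]
    rw [hker]
    exact hGau.preimage continuous_subtype_val
  · -- part (c)
    have hΔinv : ∀ g : G, Δ g⁻¹ = (Δ g)⁻¹ := fun g =>
      eq_inv_of_mul_eq_one_left (by rw [← map_mul, inv_mul_cancel, map_one])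
    set W : Set G := ⋃ t : H, (fun g => g * (↑t : G)) '' (Δ.ker : Set G) with hWdef
    have hW_open : IsOpen W :=
      isOpen_iUnion fun t => (Homeomorph.mulRight (↑t : G)).isOpenMap _ hGau
    have hW_mem : ∀ g : G, g ∈ W ↔ ∃ t : H, Δ g = Δ (↑t : G) := by
      intro g
      constructor
      · intro hg
        rcases mem_iUnion.mp hg with ⟨t, x, hx, rfl⟩
        refine ⟨t, ?_⟩
        have hx1 : Δ x = 1 := hx
        rw [map_mul, hx1, one_mul]
      · rintro ⟨t, ht⟩
        refine mem_iUnion.mpr ⟨t, g * (↑t : G)⁻¹, ?_, by group⟩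
        show Δ (g * (↑t : G)⁻¹) = 1
        rw [map_mul, ht, hΔinv, mul_inv_cancel₀ (hΔpos _).ne']
    set T : G → Set (G ⧸ H) := fun g => QuotientGroup.mk '' ((fun x => g * x) '' W) with hTdef
    have hT_open : ∀ g, IsOpen (T g) :=
      fun g => QuotientGroup.isOpenMap_coe _ ((Homeomorph.mulLeft g).isOpenMap _ hW_open)
    have h1W : (1 : G) ∈ W := (hW_mem 1).mpr ⟨1, by simp⟩
    have hT_ne : (T 1).Nonempty := ⟨QuotientGroup.mk (1 * 1), 1 * 1, ⟨1, h1W, rfl⟩, rfl⟩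
    have hT_meas_eq : ∀ g, μq (T g) = μq (T 1) := by
      intro g
      have hTg : T g = (fun x : G ⧸ H => g • x) '' (T 1) := by
        ext x
        constructor
        · rintro ⟨y, ⟨w, hw, rfl⟩, rfl⟩
          refine ⟨QuotientGroup.mk (1 * w), ⟨1 * w, ⟨w, hw, rfl⟩, rfl⟩, ?_⟩
          show g • (QuotientGroup.mk (1 * w) : G ⧸ H) = QuotientGroup.mk (g * w)
          rw [MulAction.Quotient.smul_mk, smul_eq_mul]
          congr 1
          group
        · rintro ⟨y, ⟨z, ⟨w, hw, rfl⟩, rfl⟩, rfl⟩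
          refine ⟨g * w, ⟨w, hw, rfl⟩, ?_⟩
          show (QuotientGroup.mk (g * w) : G ⧸ H) = g • QuotientGroup.mk (1 * w)
          rw [MulAction.Quotient.smul_mk, smul_eq_mul]
          congr 1
          group
      rw [hTg]
      have himg : (fun x : G ⧸ H => g • x) '' (T 1) = (fun x : G ⧸ H => g⁻¹ • x) ⁻¹' (T 1) := by
        ext x
        constructor
        · rintro ⟨y, hy, rfl⟩
          simpa using hy
        · intro hx
          exact ⟨g⁻¹ • x, hx, by simp⟩
      rw [himg, ← Measure.map_apply ((continuous_const_smul _).measurable)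
        ((hT_open 1).measurableSet), hμq_inv g⁻¹]
    set m : ℝ≥0∞ := μq (T 1) with hmdef
    have hm_pos : 0 < m := aux_open_pos H μq hμq_ne hμq_inv (hT_open 1) hT_ne
    have hm_fin : m ≠ ∞ := measure_ne_top μq _
    set R : ℝ≥0 → ℝ≥0 → Prop :=
      fun x y => ∃ t₁ t₂ : H, x * Δ (↑t₁ : G) = y * Δ (↑t₂ : G) with hRdef
    have hR_refl : ∀ x, R x x := fun x => ⟨1, 1, rfl⟩
    have hR_symm : ∀ x y, R x y → R y x := by
      rintro x y ⟨t₁, t₂, hteq⟩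
      exact ⟨t₂, t₁, hteq.symm⟩
    have hdisj : ∀ g₁ g₂ : G, ¬ R (Δ g₁) (Δ g₂) → Disjoint (T g₁) (T g₂) := by
      intro g₁ g₂ hnR
      rw [Set.disjoint_left]
      rintro x ⟨y₁, ⟨w₁, hw₁, rfl⟩, hx₁⟩ ⟨y₂, ⟨w₂, hw₂, rfl⟩, hx₂⟩
      apply hnR
      have heq : QuotientGroup.mk (g₁ * w₁) = (QuotientGroup.mk (g₂ * w₂) : G ⧸ H) := by
        rw [hx₁, hx₂]
      have hmem : (g₁ * w₁)⁻¹ * (g₂ * w₂) ∈ H := QuotientGroup.eq.mp heq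
      obtain ⟨t₁, ht₁⟩ := (hW_mem w₁).mp hw₁
      obtain ⟨t₂, ht₂⟩ := (hW_mem w₂).mp hw₂
      refine ⟨t₁ * ⟨(g₁ * w₁)⁻¹ * (g₂ * w₂), hmem⟩, t₂, ?_⟩
      have hgw : g₂ * w₂ = (g₁ * w₁) * ((g₁ * w₁)⁻¹ * (g₂ * w₂)) := by group
      have hE := congrArg Δ hgw
      rw [map_mul, map_mul, map_mul] at hE
      have hcoe : Δ ((↑(t₁ * (⟨(g₁ * w₁)⁻¹ * (g₂ * w₂), hmem⟩ : H)) : G))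
          = Δ (↑t₁ : G) * Δ ((g₁ * w₁)⁻¹ * (g₂ * w₂)) := by
        push_cast
        rw [map_mul]
      rw [hcoe, ← ht₁, ← ht₂]
      calc Δ g₁ * (Δ w₁ * Δ ((g₁ * w₁)⁻¹ * (g₂ * w₂)))
          = Δ g₁ * Δ w₁ * Δ ((g₁ * w₁)⁻¹ * (g₂ * w₂)) := by ring
        _ = Δ g₂ * Δ w₂ := hE.symm
    set gsel : ℝ≥0 → G := fun x => if h : ∃ g : G, Δ g = x then h.choose else 1 with hgseldef
    have hgsel_spec : ∀ x ∈ Set.range Δ, Δ (gsel x) = x := by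
      intro x hx
      have h : ∃ g : G, Δ g = x := hx
      simp only [hgseldef, dif_pos h]
      exact h.choose_spec
    set P : Finset ℝ≥0 → Prop := fun s => ((↑s : Set ℝ≥0) ⊆ Set.range Δ ∧
      ∀ x ∈ s, ∀ y ∈ s, x ≠ y → ¬ R x y) with hPdef
    have hcard_bound : ∀ s : Finset ℝ≥0, P s → (s.card : ℝ≥0∞) * m ≤ μq univ := by
      intro s hPs
      have hdisj' : (↑s : Set ℝ≥0).PairwiseDisjoint (fun x => T (gsel x)) := by
        intro x hx y hy hxy
        apply hdisj
        rw [hgsel_spec x (hPs.1 hx), hgsel_spec y (hPs.1 hy)]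
        exact hPs.2 x (by exact_mod_cast hx) y (by exact_mod_cast hy) hxy
      have hsum := measure_biUnion_finset (μ := μq) hdisj' (fun x _ => (hT_open (gsel x)).measurableSet)
      calc (s.card : ℝ≥0∞) * m = ∑ x ∈ s, μq (T (gsel x)) := by
            rw [Finset.sum_congr rfl fun x _ => hT_meas_eq (gsel x), Finset.sum_const,
              nsmul_eq_mul]
        _ = μq (⋃ x ∈ s, T (gsel x)) := hsum.symm
        _ ≤ μq univ := measure_mono (subset_univ _)
    set N : ℕ := Nat.floor ((μq univ / m).toReal) with hNdef
    have hcardN : ∀ s : Finset ℝ≥0, P s → s.card ≤ N := by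
      intro s hPs
      have h1 : (s.card : ℝ≥0∞) ≤ μq univ / m :=
        (ENNReal.le_div_iff_mul_le (Or.inl hm_pos.ne') (Or.inl hm_fin)).mpr
          (hcard_bound s hPs)
      have h2 : μq univ / m ≠ ∞ := (ENNReal.div_lt_top (measure_ne_top μq _) hm_pos.ne').ne
      have h3 : (s.card : ℝ) ≤ (μq univ / m).toReal := by
        have := ENNReal.toReal_mono h2 h1
        simpa using this
      exact Nat.le_floor h3
    set pred : ℕ → Prop := fun n => ∃ s : Finset ℝ≥0, P s ∧ s.card = n with hpreddef
    have hpred0 : pred 0 := ⟨∅, ⟨by simp, by simp⟩, rfl⟩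
    have hmax := Nat.findGreatest_spec (m := 0) (Nat.zero_le N) hpred0
    obtain ⟨s, hPs, hcard⟩ := hmax
    refine ⟨s, hPs.1, ?_⟩
    intro x hx
    by_cases hcov : ∃ d ∈ s, R x d
    · obtain ⟨d, hd, t₁, t₂, hReq⟩ := hcov
      refine ⟨d, hd, t₂ * t₁⁻¹, ?_⟩
      rw [← part_a]
      apply mul_right_cancel₀ (hΔpos ((↑t₁ : G))).ne'
      have hsimp : Δ ((↑(t₂ * t₁⁻¹) : G)) * Δ (↑t₁ : G) = Δ (↑t₂ : G) := by
        rw [← map_mul]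
        congr 1
        push_cast
        group
      calc x * Δ (↑t₁ : G) = d * Δ (↑t₂ : G) := hReq
        _ = d * (Δ ((↑(t₂ * t₁⁻¹) : G)) * Δ (↑t₁ : G)) := by rw [hsimp]
        _ = d * Δ ((↑(t₂ * t₁⁻¹) : G)) * Δ (↑t₁ : G) := by ring
    · exfalso
      have hxs : x ∉ s := fun hxs => hcov ⟨x, hxs, hR_refl x⟩
      have hP' : P (insert x s) := by
        constructor
        · rw [Finset.coe_insert]
          exact insert_subset_iff.mpr ⟨hx, hPs.1⟩
        · intro a ha b hb hab
          rcases Finset.mem_insert.mp ha with rfl | ha'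
          · rcases Finset.mem_insert.mp hb with rfl | hb'
            · exact absurd rfl hab
            · exact fun hRab => hcov ⟨b, hb', hRab⟩
          · rcases Finset.mem_insert.mp hb with rfl | hb'
            · exact fun hRab => hcov ⟨a, ha', hR_symm _ _ hRab⟩
            · exact hPs.2 a ha' b hb' hab
      have hgt : Nat.findGreatest pred N < (insert x s).card := by
        rw [Finset.card_insert_of_notMem hxs, hcard]
        exact Nat.lt_succ_self _
      exact Nat.findGreatest_is_greatest hgt (hcardN _ hP') ⟨insert x s, hP', rfl⟩
end

section
/- Let G be a locally compact group whose modular function Δ_G has image Δ_G(G) a proper subgroup of ℝ₊ (i.e., Δ_G(G) ≠ ℝ₊). Then G is almost unimodular, i.e., ker Δ_G is open in G. -/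
open MeasureTheory
open scoped NNReal

-- Auxiliary lemma 1: Δ of an inverse
theorem aux_map_inv {G : Type*} [Group G] (Δ : G →* ℝ≥0) (g : G) :
    Δ g⁻¹ = (Δ g)⁻¹ := by
  refine eq_inv_of_mul_eq_one_right ?_
  rw [← map_mul, mul_inv_cancel, map_one]

-- Auxiliary lemma 2: Δ of a zpow
theorem aux_map_zpow {G : Type*} [Group G] (Δ : G →* ℝ≥0) (g : G) (n : ℤ) :
    Δ (g ^ n) = (Δ g) ^ n :=
  map_zpow' Δ (aux_map_inv Δ) g n

-- Auxiliary: existence of non-range points just above 1, assuming range has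
-- elements ≠ 1 arbitrarily close to 1 and range is proper.
theorem aux_exists_nonrange {G : Type*} [Group G] (Δ : G →* ℝ≥0)
    (hΔpos : ∀ s, 0 < Δ s)
    (x₀ : ℝ≥0) (hx₀pos : 0 < x₀) (hx₀ : x₀ ∉ Set.range Δ)
    (hdense : ∀ b : ℝ≥0, 1 < b → ∃ g : G, b⁻¹ < Δ g ∧ Δ g < b ∧ Δ g ≠ 1)
    (ε : ℝ≥0) (hε : 0 < ε) :
    ∃ p : ℝ≥0, p ∉ Set.range Δ ∧ 1 < p ∧ p < 1 + ε := by
  obtain ⟨g, hg1, hg2, hg3⟩ := hdense (1 + ε) (lt_add_of_pos_right 1 hε)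
  -- get g' with 1 < Δ g' < 1 + ε
  obtain ⟨g', hg'1, hg'2⟩ : ∃ g' : G, 1 < Δ g' ∧ Δ g' < 1 + ε := by
    rcases lt_or_gt_of_ne hg3 with h | h
    · refine ⟨g⁻¹, ?_, ?_⟩
      · rw [aux_map_inv]
        exact (one_lt_inv₀ (hΔpos g)).2 h
      · rw [aux_map_inv]
        exact (inv_lt_comm₀ (hΔpos g) (by positivity)).2 hg1
    · exact ⟨g, h, hg2⟩
  set t : ℝ≥0 := Δ g' with ht
  have htR : (1:ℝ) < (t:ℝ) := hg'1
  have hx₀R : (0:ℝ) < (x₀:ℝ) := hx₀pos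
  obtain ⟨n, hn1, hn2⟩ := exists_mem_Ico_zpow hx₀R htR
  refine ⟨x₀ * Δ (g' ^ (-n)), ?_, ?_, ?_⟩
  · rintro ⟨h, hh⟩
    apply hx₀
    refine ⟨h * g' ^ n, ?_⟩
    have : Δ (g' ^ (-n)) * Δ (g' ^ n) = 1 := by
      rw [← map_mul]; simp
    calc Δ (h * g' ^ n) = Δ h * Δ (g' ^ n) := map_mul _ _ _
      _ = x₀ * Δ (g' ^ (-n)) * Δ (g' ^ n) := by rw [hh]
      _ = x₀ * (Δ (g' ^ (-n)) * Δ (g' ^ n)) := by ring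
      _ = x₀ := by rw [this, mul_one]
  · -- 1 < p
    have ht0 : (t:ℝ) ≠ 0 := by positivity
    have hzpos : (0:ℝ) < (t:ℝ) ^ (-n) := zpow_pos (by positivity) _
    have hx₀eq : x₀ = (x₀ * Δ (g' ^ (-n))) * Δ (g' ^ n) := by
      have : Δ (g' ^ (-n)) * Δ (g' ^ n) = 1 := by rw [← map_mul]; simp
      rw [mul_assoc, this, mul_one]
    refine lt_of_le_of_ne ?_ ?_
    · rw [← NNReal.coe_le_coe]
      push_cast [aux_map_zpow]
      calc (1:ℝ) = (t:ℝ) ^ n * (t:ℝ) ^ (-n) := by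
            rw [← zpow_add₀ ht0]; simp
        _ ≤ (x₀:ℝ) * (t:ℝ) ^ (-n) := by
            exact mul_le_mul_of_nonneg_right hn1 hzpos.le
    · intro h
      apply hx₀
      refine ⟨g' ^ n, ?_⟩
      rw [hx₀eq, ← h, one_mul]
  · -- p < 1 + ε
    rw [← NNReal.coe_lt_coe]
    push_cast [aux_map_zpow]
    have ht0 : (t:ℝ) ≠ 0 := by positivity
    have hzpos : (0:ℝ) < (t:ℝ) ^ (-n) := zpow_pos (by positivity) _
    calc (x₀:ℝ) * (t:ℝ) ^ (-n) < (t:ℝ) ^ (n+1) * (t:ℝ) ^ (-n) :=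
          mul_lt_mul_of_pos_right hn2 hzpos
      _ = (t:ℝ) := by rw [← zpow_add₀ ht0]; simp
      _ < 1 + (ε:ℝ) := by exact_mod_cast hg'2

/-- If the image of the modular function `Δ_G` of a locally compact group `G`
is a proper subgroup of the positive reals `ℝ₊` (i.e. `Δ_G(G) ≠ ℝ₊`), then `G` is almost
unimodular: `ker Δ_G` is open. -/
theorem almost_unimodular_of_range_modularFunction_proper
    {G : Type*} [Group G] [TopologicalSpace G] [IsTopologicalGroup G]
    [LocallyCompactSpace G] [T2Space G] [MeasurableSpace G] [BorelSpace G]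
    (μ : Measure G) [μ.IsHaarMeasure] [μ.Regular]
    (Δ : G →* ℝ≥0) (hΔc : Continuous Δ) (hΔpos : ∀ s, 0 < Δ s)
    (hΔ : ∀ s : G, Measure.map (· * s) μ = (Δ s)⁻¹ • μ)
    (hproper : Set.range Δ ≠ {x : ℝ≥0 | 0 < x}) :
    IsOpen (Δ.ker : Set G) := by
  classical
  by_cases hc : ∃ b : ℝ≥0, 1 < b ∧ ∀ g : G, b⁻¹ < Δ g → Δ g < b → Δ g = 1
  · -- 1 is isolated in the range : the kernel is the preimage of an interval
    obtain ⟨b, hb, hker⟩ := hc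
    have hkereq : (Δ.ker : Set G) = Δ ⁻¹' (Set.Ioo b⁻¹ b) := by
      ext g
      constructor
      · intro hg
        have hg1 : Δ g = 1 := hg
        simp only [Set.mem_preimage, Set.mem_Ioo, hg1]
        exact ⟨inv_lt_one_of_one_lt₀ hb, hb⟩
      · intro hg
        exact hker g hg.1 hg.2
    rw [hkereq]
    exact isOpen_Ioo.preimage hΔc
  · push_neg at hc
    -- the range is a proper subgroup with elements ≠ 1 arbitrarily close to 1
    have hsub : Set.range Δ ⊆ {x : ℝ≥0 | 0 < x} := by
      rintro _ ⟨g, rfl⟩; exact hΔpos g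
    obtain ⟨x₀, hx₀mem, hx₀⟩ :=
      Set.exists_of_ssubset (ssubset_of_subset_of_ne hsub hproper)
    have hex : ∀ m : ℕ, ∃ p : ℝ≥0,
        p ∉ Set.range Δ ∧ 1 < p ∧ p < 1 + (1 / (m + 1) : ℝ≥0) := by
      intro m
      exact aux_exists_nonrange Δ hΔpos x₀ hx₀mem hx₀ hc _ (by positivity)
    choose ρ hρ1 hρ2 hρ3 using hex
    have hρpos : ∀ m, (0:ℝ≥0) < ρ m := fun m => lt_trans one_pos (hρ2 m)
    have hρinv1 : ∀ m, (ρ m)⁻¹ < 1 := fun m => inv_lt_one_of_one_lt₀ (hρ2 m)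
    have hρinv_not : ∀ m, (ρ m)⁻¹ ∉ Set.range Δ := by
      rintro m ⟨g, hg⟩
      exact hρ1 m ⟨g⁻¹, by rw [aux_map_inv, hg, inv_inv]⟩
    -- pass to the quotient by the kernel
    set Δ' : G ⧸ Δ.ker →* ℝ≥0 := QuotientGroup.lift Δ.ker Δ (fun x hx => hx) with hΔ'def
    have hΔ'mk : ∀ g : G, Δ' (g : G ⧸ Δ.ker) = Δ g := fun g => rfl
    have hΔ'c : Continuous Δ' := by
      rw [(QuotientGroup.isQuotientMap_mk Δ.ker).continuous_iff]
      exact hΔc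
    have hΔ'pos : ∀ q, 0 < Δ' q := by
      intro q
      induction q using QuotientGroup.induction_on with
      | H g => rw [hΔ'mk]; exact hΔpos g
    have hΔ'range : ∀ q, Δ' q ∈ Set.range Δ := by
      intro q
      induction q using QuotientGroup.induction_on with
      | H g => exact ⟨g, (hΔ'mk g).symm⟩
    have hΔ'one : ∀ q, Δ' q = 1 → q = 1 := by
      intro q
      induction q using QuotientGroup.induction_on with
      | H g =>
        intro hg
        rw [QuotientGroup.eq_one_iff]
        exact hg
    -- the clopen neighborhoods of the kernel in the quotient
    set A : ℕ → Set (G ⧸ Δ.ker) := fun m => Δ' ⁻¹' Set.Ioo (ρ m)⁻¹ (ρ m) with hAdef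
    have hAopen : ∀ m, IsOpen (A m) := fun m => isOpen_Ioo.preimage hΔ'c
    have hAclosed : ∀ m, IsClosed (A m) := by
      intro m
      have : A m = Δ' ⁻¹' Set.Icc (ρ m)⁻¹ (ρ m) := by
        ext q
        simp only [hAdef, Set.mem_preimage, Set.mem_Ioo, Set.mem_Icc]
        constructor
        · exact fun h => ⟨h.1.le, h.2.le⟩
        · intro h
          refine ⟨lt_of_le_of_ne h.1 ?_, lt_of_le_of_ne h.2 ?_⟩
          · intro heq; exact hρinv_not m (heq ▸ hΔ'range q)
          · intro heq; exact hρ1 m (heq ▸ hΔ'range q)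
      rw [this]
      exact isClosed_Icc.preimage hΔ'c
    have hA1 : ∀ m, (1 : G ⧸ Δ.ker) ∈ A m := by
      intro m
      simp only [hAdef, Set.mem_preimage, map_one, Set.mem_Ioo]
      exact ⟨hρinv1 m, hρ2 m⟩
    have hAinter : ∀ q : G ⧸ Δ.ker, (∀ m, q ∈ A m) → q = 1 := by
      intro q hq
      refine hΔ'one q ?_
      by_contra hne
      -- get an element of the range ≠ 1 but within every (ρ m)⁻¹, ρ m
      have key : ∀ t : ℝ≥0, 1 < t → (∀ m, t < ρ m) → False := by
        intro t ht h
        have htR : (0:ℝ) < (t:ℝ) - 1 := by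
          have : (1:ℝ) < (t:ℝ) := ht
          linarith
        obtain ⟨m, hm⟩ := exists_nat_one_div_lt htR
        have h1 : (ρ m : ℝ) < 1 + 1 / (m + 1) := by
          have := hρ3 m
          rw [← NNReal.coe_lt_coe] at this
          push_cast at this
          convert this using 2
        have h2 : (t:ℝ) < (ρ m : ℝ) := h m
        linarith
      rcases lt_or_gt_of_ne hne with hlt | hgt
      · refine key (Δ' q)⁻¹ ((one_lt_inv₀ (hΔ'pos q)).2 hlt) ?_
        intro m
        exact (inv_lt_comm₀ (hΔ'pos q) (hρpos m)).2 (hq m).1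
      · exact key (Δ' q) hgt (fun m => (hq m).2)
    -- a compact neighborhood of 1 in the quotient
    obtain ⟨K, hKc, hKn⟩ := exists_compact_mem_nhds (1 : G)
    have hmkc : Continuous ((↑) : G → G ⧸ Δ.ker) :=
      (QuotientGroup.isQuotientMap_mk Δ.ker).continuous
    set K' : Set (G ⧸ Δ.ker) := ((↑) : G → G ⧸ Δ.ker) '' K with hK'def
    have hK'c : IsCompact K' := hKc.image hmkc
    set W : Set (G ⧸ Δ.ker) := ((↑) : G → G ⧸ Δ.ker) '' interior K with hWdef
    have hWopen : IsOpen W := QuotientGroup.isOpenMap_coe _ isOpen_interior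
    have hW1 : (1 : G ⧸ Δ.ker) ∈ W :=
      ⟨1, mem_interior_iff_mem_nhds.2 hKn, rfl⟩
    have hWK' : W ⊆ K' := Set.image_mono interior_subset
    -- nested clopen family
    set B : ℕ → Set (G ⧸ Δ.ker) := fun m => ⋂ j ∈ Set.Iic m, A j with hBdef
    have hBopen : ∀ m, IsOpen (B m) :=
      fun m => (Set.finite_Iic m).isOpen_biInter (fun j _ => hAopen j)
    have hBclosed : ∀ m, IsClosed (B m) :=
      fun m => isClosed_biInter (fun j _ => hAclosed j)
    have hB1 : ∀ m, (1 : G ⧸ Δ.ker) ∈ B m :=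
      fun m => Set.mem_biInter (fun j _ => hA1 j)
    have hBsub : ∀ m, B m ⊆ A m :=
      fun m => Set.biInter_subset_of_mem (Set.self_mem_Iic)
    have hBanti : ∀ {m m' : ℕ}, m ≤ m' → B m' ⊆ B m := by
      intro m m' h q hq
      exact Set.mem_biInter (fun j hj => Set.mem_iInter₂.mp hq j (le_trans hj h))
    -- find m★ with B m★ ∩ K' ⊆ W by compactness
    have hempty : K' ∩ ⋂ m, (B m ∩ Wᶜ) = ∅ := by
      ext q
      simp only [Set.mem_inter_iff, Set.mem_iInter, Set.mem_empty_iff_false, iff_false]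
      rintro ⟨hqK', hq⟩
      have hq1 : q = 1 := hAinter q (fun m => hBsub m (hq m).1)
      exact (hq 0).2 (hq1 ▸ hW1)
    obtain ⟨u, hu⟩ := hK'c.elim_finite_subfamily_closed _
      (fun m => (hBclosed m).inter hWopen.isClosed_compl) hempty
    set m₀ : ℕ := u.sup id with hm₀def
    have hTW : B m₀ ∩ K' ⊆ W := by
      intro q hq
      by_contra hqW
      have : q ∈ K' ∩ ⋂ m ∈ u, (B m ∩ Wᶜ) := by
        refine ⟨hq.2, Set.mem_biInter ?_⟩
        intro m hm
        exact ⟨hBanti (Finset.le_sup (f := id) hm) hq.1, hqW⟩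
      rw [hu] at this
      exact this
    -- T is a compact open neighborhood of 1 in the quotient
    set T : Set (G ⧸ Δ.ker) := B m₀ ∩ W with hTdef
    have hT1 : (1 : G ⧸ Δ.ker) ∈ T := ⟨hB1 m₀, hW1⟩
    have hTopen : IsOpen T := (hBopen m₀).inter hWopen
    have hTeq : T = B m₀ ∩ K' := by
      apply Set.Subset.antisymm
      · exact Set.inter_subset_inter_right _ hWK'
      · intro q hq
        exact ⟨hq.1, hTW hq⟩
    have hTcomp : IsCompact T := by
      rw [hTeq]
      exact hK'c.inter_left (hBclosed m₀)
    -- an open submonoid trapped inside T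
    obtain ⟨V, hV, hTV⟩ := compact_open_separated_mul_right hTcomp hTopen subset_rfl
    have hST : ∀ q ∈ Submonoid.closure V, q ∈ T := by
      have hlist : ∀ l : List (G ⧸ Δ.ker), (∀ y ∈ l, y ∈ V) →
          ∀ s ∈ T, s * l.prod ∈ T := by
        intro l
        induction l with
        | nil => intro _ s hs; simpa using hs
        | cons a l ih =>
          intro hl s hs
          rw [List.prod_cons, ← mul_assoc]
          exact ih (fun y hy => hl y (List.mem_cons_of_mem a hy))
            (s * a) (hTV (Set.mul_mem_mul hs (hl a (List.mem_cons_self (a := a) (l := l)))))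
      intro q hq
      obtain ⟨l, hl, rfl⟩ := Submonoid.exists_list_of_mem_closure hq
      simpa using hlist l hl 1 hT1
    have hSone : ∀ q ∈ Submonoid.closure V, q = 1 := by
      intro q hq
      have hpow : ∀ k : ℕ, (Δ' q) ^ k ∈ Set.Ioo (ρ m₀)⁻¹ (ρ m₀) := by
        intro k
        have : q ^ k ∈ Submonoid.closure V := pow_mem hq k
        have := hBsub m₀ (hST _ this).1
        simpa only [hAdef, Set.mem_preimage, map_pow] using this
      refine hΔ'one q ?_
      by_contra hne
      rcases lt_or_gt_of_ne hne with hlt | hgt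
      · -- Δ' q < 1 : powers of the inverse are unbounded
        obtain ⟨k, hk⟩ := pow_unbounded_of_one_lt (ρ m₀)
          ((one_lt_inv₀ (hΔ'pos q)).2 hlt)
        have h1 : (ρ m₀)⁻¹ < (Δ' q) ^ k := (hpow k).1
        have h2 : (Δ' q) ^ k < (ρ m₀)⁻¹ := by
          have hk' : ρ m₀ < ((Δ' q) ^ k)⁻¹ := by rwa [← inv_pow]
          have := inv_strictAnti₀ (hρpos m₀) hk'
          rwa [inv_inv] at this
        exact absurd h1 (not_lt.2 h2.le)
      · obtain ⟨k, hk⟩ := pow_unbounded_of_one_lt (ρ m₀) hgt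
        exact absurd (hpow k).2 (not_lt.2 hk.le)
    have hSset : (Submonoid.closure V : Set (G ⧸ Δ.ker)) = {1} := by
      ext q
      simp only [SetLike.mem_coe, Set.mem_singleton_iff]
      exact ⟨hSone q, fun h => h ▸ (Submonoid.closure V).one_mem⟩
    have h1open : IsOpen ({1} : Set (G ⧸ Δ.ker)) := by
      rw [isOpen_iff_mem_nhds]
      rintro q rfl
      rw [← hSset]
      exact Filter.mem_of_superset hV Submonoid.subset_closure
    have hkerpre : (Δ.ker : Set G) = ((↑) : G → G ⧸ Δ.ker) ⁻¹' {1} := by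
      ext g
      simp only [Set.mem_preimage, Set.mem_singleton_iff, SetLike.mem_coe,
        QuotientGroup.eq_one_iff]
    rw [hkerpre]
    exact h1open.preimage hmkc
end
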